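/- arXiv:1705.04632 — 9 statements merged into one kernel-verified Lean document; each statement's English description precedes it below -/
import Mathlib

section
/- (Cutting Lemma) Let A be a finite m-coloured linear order and a < b elements of A such that (i) a and b have the same n-character, and (ii) for every x ∈ A with a < x ≤ b there is y ≤ a with the same n-character as x. Then A is (n+1)-equivalent to A \ (a, b]. -/
/-- A coloured linear order: a linear order together with a colouring map into `C`. -/
structure CLO (C : Type) where
  carrier : Type
  [ord : LinearOrder carrier]
  colour : carrier → C

attribute [instance] CLO.ord

namespace CLO

variable {C : Type}

/-- Induced coloured suborder on a subset. -/
def sub (A : CLO C) (s : Set A.carrier) : CLO C where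
  carrier := ↥s
  colour := fun x => A.colour x.val

/-- The coloured suborder `A^{<a}`. -/
def left (A : CLO C) (a : A.carrier) : CLO C := A.sub {x | x < a}

/-- The coloured suborder `A^{>a}`. -/
def right (A : CLO C) (a : A.carrier) : CLO C := A.sub {x | a < x}

/-- `n`-move Ehrenfeucht–Fraïssé equivalence of coloured linear orders, via the standard
back-and-forth characterization for linear orders. -/
def EFEquiv : ℕ → CLO C → CLO C → Prop
  | 0, _, _ => True
  | n + 1, A, B =>
      (∀ a : A.carrier, ∃ b : B.carrier, A.colour a = B.colour b ∧
        EFEquiv n (A.left a) (B.left b) ∧ EFEquiv n (A.right a) (B.right b)) ∧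
      (∀ b : B.carrier, ∃ a : A.carrier, A.colour a = B.colour b ∧
        EFEquiv n (A.left a) (B.left b) ∧ EFEquiv n (A.right a) (B.right b))

/-- `a` and `b` realize the same `n`-character (including the colour) in `A`. -/
def SameChar (n : ℕ) (A : CLO C) (a b : A.carrier) : Prop :=
  A.colour a = A.colour b ∧ EFEquiv n (A.left a) (A.left b) ∧
    EFEquiv n (A.right a) (A.right b)

/-- The finite coloured linear order (string) given by a list. -/
def ofList (l : List C) : CLO C where
  carrier := Fin l.length
  colour := l.get

/-- `A` is `≡ₙ`-optimal: no strictly shorter coloured linear order is `n`-equivalent to it. -/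
def Optimal (n : ℕ) (A : CLO C) : Prop :=
  ∀ B : CLO C, Finite B.carrier → EFEquiv n A B → Nat.card A.carrier ≤ Nat.card B.carrier

end CLO

namespace CLO
variable {C : Type}

theorem efeq_of_equiv : ∀ (n : ℕ) {A B : CLO C} (e : A.carrier ≃ B.carrier),
    (∀ x y : A.carrier, x < y ↔ e x < e y) → (∀ x, A.colour x = B.colour (e x)) →
    EFEquiv n A B := by
  intro n
  induction n with
  | zero => intro A B e hlt hc; trivial
  | succ n ih =>
    intro A B e hlt hc
    have key : ∀ p : A.carrier, A.colour p = B.colour (e p) ∧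
        EFEquiv n (A.left p) (B.left (e p)) ∧ EFEquiv n (A.right p) (B.right (e p)) := by
      intro p
      refine ⟨hc p, ?_, ?_⟩
      · refine ih (A := A.left p) (B := B.left (e p))
          ⟨fun x => ⟨e x.val, (hlt _ _).1 x.2⟩,
           fun y => ⟨e.symm y.val, ?_⟩, ?_, ?_⟩ ?_ ?_
        · show e.symm y.val < p
          rw [hlt _ _, e.apply_symm_apply]
          exact y.2
        · intro x; exact Subtype.ext (e.symm_apply_apply x.val)
        · intro y; exact Subtype.ext (e.apply_symm_apply y.val)
        · intro x y
          exact ⟨fun h => Subtype.mk_lt_mk.mpr ((hlt _ _).1 (Subtype.coe_lt_coe.mpr h)),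
            fun h => Subtype.coe_lt_coe.mp ((hlt _ _).2 (Subtype.mk_lt_mk.mp h))⟩
        · intro x; exact hc x.val
      · refine ih (A := A.right p) (B := B.right (e p))
          ⟨fun x => ⟨e x.val, (hlt _ _).1 x.2⟩,
           fun y => ⟨e.symm y.val, ?_⟩, ?_, ?_⟩ ?_ ?_
        · show p < e.symm y.val
          rw [hlt _ _, e.apply_symm_apply]
          exact y.2
        · intro x; exact Subtype.ext (e.symm_apply_apply x.val)
        · intro y; exact Subtype.ext (e.apply_symm_apply y.val)
        · intro x y
          exact ⟨fun h => Subtype.mk_lt_mk.mpr ((hlt _ _).1 (Subtype.coe_lt_coe.mpr h)),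
            fun h => Subtype.coe_lt_coe.mp ((hlt _ _).2 (Subtype.mk_lt_mk.mp h))⟩
        · intro x; exact hc x.val
    exact ⟨fun p => ⟨e p, (key p).1, (key p).2⟩,
      fun q => ⟨e.symm q, by simpa using key (e.symm q)⟩⟩

theorem efeq_refl : ∀ (n : ℕ) (A : CLO C), EFEquiv n A A := by
  intro n A
  exact efeq_of_equiv n (Equiv.refl _) (fun _ _ => Iff.rfl) (fun _ => rfl)

theorem efeq_symm : ∀ (n : ℕ) (A B : CLO C), EFEquiv n A B → EFEquiv n B A := by
  intro n
  induction n with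
  | zero => intros; trivial
  | succ n ih =>
    intro A B h
    exact ⟨fun q => (h.2 q).imp (fun p hp => ⟨hp.1.symm, ih _ _ hp.2.1, ih _ _ hp.2.2⟩),
      fun p => (h.1 p).imp (fun q hq => ⟨hq.1.symm, ih _ _ hq.2.1, ih _ _ hq.2.2⟩)⟩

theorem efeq_trans : ∀ (n : ℕ) (A B D : CLO C),
    EFEquiv n A B → EFEquiv n B D → EFEquiv n A D := by
  intro n
  induction n with
  | zero => intros; trivial
  | succ n ih =>
    intro A B D h1 h2
    constructor
    · intro p
      obtain ⟨q, hc1, hl1, hr1⟩ := h1.1 p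
      obtain ⟨r, hc2, hl2, hr2⟩ := h2.1 q
      exact ⟨r, hc1.trans hc2, ih _ _ _ hl1 hl2, ih _ _ _ hr1 hr2⟩
    · intro r
      obtain ⟨q, hc2, hl2, hr2⟩ := h2.2 r
      obtain ⟨p, hc1, hl1, hr1⟩ := h1.2 q
      exact ⟨p, hc1.trans hc2, ih _ _ _ hl1 hl2, ih _ _ _ hr1 hr2⟩

theorem efeq_mono : ∀ (n : ℕ) (A B : CLO C), EFEquiv (n + 1) A B → EFEquiv n A B := by
  intro n
  induction n with
  | zero => intros; trivial
  | succ n ih =>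
    intro A B h
    exact ⟨fun p => (h.1 p).imp (fun q hq => ⟨hq.1, ih _ _ hq.2.1, ih _ _ hq.2.2⟩),
      fun q => (h.2 q).imp (fun p hp => ⟨hp.1, ih _ _ hp.2.1, ih _ _ hp.2.2⟩)⟩

theorem sub_congr (A : CLO C) {s t : Set A.carrier} (h : s = t) (n : ℕ) :
    EFEquiv n (A.sub s) (A.sub t) := by subst h; exact efeq_refl n _

theorem sub_sub (A : CLO C) (s : Set A.carrier) (T : Set (A.sub s).carrier) (n : ℕ) :
    EFEquiv n ((A.sub s).sub T) (A.sub {x | ∃ h : x ∈ s, (⟨x, h⟩ : ↥s) ∈ T}) := by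
  refine efeq_of_equiv n ⟨fun z => ⟨z.val.val, z.val.2, z.2⟩,
    fun w => ⟨⟨w.val, w.2.1⟩, w.2.2⟩, ?_, ?_⟩ ?_ ?_
  · intro z; rfl
  · intro w; rfl
  · intro x y
    exact ⟨fun h => Subtype.mk_lt_mk.mpr (Subtype.coe_lt_coe.mpr (Subtype.coe_lt_coe.mpr h)),
      fun h => Subtype.coe_lt_coe.mp (Subtype.coe_lt_coe.mp (Subtype.mk_lt_mk.mp h))⟩
  · intro x; rfl

theorem leftE (A : CLO C) (s : Set A.carrier) (p : (A.sub s).carrier) (n : ℕ) :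
    EFEquiv n ((A.sub s).left p) (A.sub (s ∩ Set.Iio p.val)) := by
  refine efeq_trans n _ _ _ (sub_sub A s {x | x < p} n) (sub_congr A ?_ n)
  ext x
  constructor
  · rintro ⟨h, hl⟩; exact ⟨h, Subtype.coe_lt_coe.mpr hl⟩
  · rintro ⟨h, hl⟩; exact ⟨h, Subtype.coe_lt_coe.mp hl⟩

theorem rightE (A : CLO C) (s : Set A.carrier) (p : (A.sub s).carrier) (n : ℕ) :
    EFEquiv n ((A.sub s).right p) (A.sub (s ∩ Set.Ioi p.val)) := by
  refine efeq_trans n _ _ _ (sub_sub A s {x | p < x} n) (sub_congr A ?_ n)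
  ext x
  constructor
  · rintro ⟨h, hl⟩; exact ⟨h, Subtype.coe_lt_coe.mpr hl⟩
  · rintro ⟨h, hl⟩; exact ⟨h, Subtype.coe_lt_coe.mp hl⟩

theorem single (A : CLO C) (x y : A.carrier) (h : A.colour x = A.colour y) (n : ℕ) :
    EFEquiv n (A.sub {x}) (A.sub {y}) := by
  refine efeq_of_equiv n ⟨fun _ => ⟨y, rfl⟩, fun _ => ⟨x, rfl⟩, ?_, ?_⟩ ?_ ?_
  · intro z; exact Subtype.ext z.2.symm
  · intro z; exact Subtype.ext z.2.symm
  · intro p q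
    constructor
    · intro hpq
      exact absurd (Subtype.coe_lt_coe.mpr hpq) (by rw [p.2, q.2]; exact lt_irrefl x)
    · intro hpq
      exact absurd (Subtype.coe_lt_coe.mpr hpq) (by exact lt_irrefl y)
  · intro z; show A.colour z.val = A.colour y; rw [z.2]; exact h


/-- Converting `left` of suborders when the relevant initial segments agree. -/
theorem left_conv (A : CLO C) {s u : Set A.carrier} (p : ↥s) (p' : ↥u)
    (hv : p.val = p'.val) (hsu : s ∩ Set.Iio p.val = u ∩ Set.Iio p.val) (n : ℕ) :
    EFEquiv n ((A.sub s).left p) ((A.sub u).left p') := by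
  refine efeq_trans n _ _ _ (leftE A s p n) (efeq_trans n _ _ _ (sub_congr A ?_ n)
    (efeq_symm n _ _ (leftE A u p' n)))
  rw [← hv]; exact hsu

theorem right_conv (A : CLO C) {s u : Set A.carrier} (p : ↥s) (p' : ↥u)
    (hv : p.val = p'.val) (hsu : s ∩ Set.Ioi p.val = u ∩ Set.Ioi p.val) (n : ℕ) :
    EFEquiv n ((A.sub s).right p) ((A.sub u).right p') := by
  refine efeq_trans n _ _ _ (rightE A s p n) (efeq_trans n _ _ _ (sub_congr A ?_ n)
    (efeq_symm n _ _ (rightE A u p' n)))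
  rw [← hv]; exact hsu

/-- Composition (concatenation) lemma for EF-equivalence, within a common ambient order. -/
theorem efeq_comp (A : CLO C) : ∀ (n : ℕ) (s t s' t' : Set A.carrier),
    (∀ x ∈ s, ∀ y ∈ t, x < y) → (∀ x ∈ s', ∀ y ∈ t', x < y) →
    EFEquiv n (A.sub s) (A.sub s') → EFEquiv n (A.sub t) (A.sub t') →
    EFEquiv n (A.sub (s ∪ t)) (A.sub (s' ∪ t')) := by
  intro n
  induction n with
  | zero => intros; trivial
  | succ n ih =>
    have half : ∀ (s t s' t' : Set A.carrier),
        (∀ x ∈ s, ∀ y ∈ t, x < y) → (∀ x ∈ s', ∀ y ∈ t', x < y) →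
        EFEquiv (n + 1) (A.sub s) (A.sub s') → EFEquiv (n + 1) (A.sub t) (A.sub t') →
        ∀ p : ↥(s ∪ t), ∃ q : ↥(s' ∪ t'),
          A.colour p.val = A.colour q.val ∧
          EFEquiv n ((A.sub (s ∪ t)).left p) ((A.sub (s' ∪ t')).left q) ∧
          EFEquiv n ((A.sub (s ∪ t)).right p) ((A.sub (s' ∪ t')).right q) := by
      intro s t s' t' hst hst' hs ht p
      rcases p.2 with hp | hp
      · -- p in the lower part s
        obtain ⟨q, hcq, hlq, hrq⟩ := hs.1 ⟨p.val, hp⟩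
        refine ⟨⟨q.val, Or.inl q.2⟩, hcq, ?_, ?_⟩
        · -- left parts
          have h1 : (s ∪ t) ∩ Set.Iio p.val = s ∩ Set.Iio p.val := by
            ext x
            constructor
            · rintro ⟨hx | hx, hl⟩
              · exact ⟨hx, hl⟩
              · exact absurd (hl.trans (hst _ hp _ hx)) (lt_irrefl x)
            · rintro ⟨hx, hl⟩; exact ⟨Or.inl hx, hl⟩
          have h1' : s' ∩ Set.Iio q.val = (s' ∪ t') ∩ Set.Iio q.val := by
            ext x
            constructor
            · rintro ⟨hx, hl⟩; exact ⟨Or.inl hx, hl⟩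
            · rintro ⟨hx | hx, hl⟩
              · exact ⟨hx, hl⟩
              · exact absurd (hl.trans (hst' _ q.2 _ hx)) (lt_irrefl x)
          exact efeq_trans n _ _ _ (left_conv A p ⟨p.val, hp⟩ rfl h1 n)
            (efeq_trans n _ _ _ hlq (left_conv A (u := s' ∪ t') q ⟨q.val, Or.inl q.2⟩ rfl h1' n))
        · -- right parts
          have h2 : (s ∪ t) ∩ Set.Ioi p.val = (s ∩ Set.Ioi p.val) ∪ t := by
            ext x
            constructor
            · rintro ⟨hx | hx, hl⟩
              · exact Or.inl ⟨hx, hl⟩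
              · exact Or.inr hx
            · rintro (⟨hx, hl⟩ | hx)
              · exact ⟨Or.inl hx, hl⟩
              · exact ⟨Or.inr hx, hst _ hp _ hx⟩
          have h2' : (s' ∪ t') ∩ Set.Ioi q.val = (s' ∩ Set.Ioi q.val) ∪ t' := by
            ext x
            constructor
            · rintro ⟨hx | hx, hl⟩
              · exact Or.inl ⟨hx, hl⟩
              · exact Or.inr hx
            · rintro (⟨hx, hl⟩ | hx)
              · exact ⟨Or.inl hx, hl⟩
              · exact ⟨Or.inr hx, hst' _ q.2 _ hx⟩
          have hmid : EFEquiv n (A.sub (s ∩ Set.Ioi p.val)) (A.sub (s' ∩ Set.Ioi q.val)) :=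
            efeq_trans n _ _ _ (efeq_symm n _ _ (rightE A s ⟨p.val, hp⟩ n))
              (efeq_trans n _ _ _ hrq (rightE A s' q n))
          have hres : EFEquiv n (A.sub ((s ∩ Set.Ioi p.val) ∪ t))
              (A.sub ((s' ∩ Set.Ioi q.val) ∪ t')) :=
            ih _ _ _ _ (fun x hx y hy => hst _ hx.1 _ hy) (fun x hx y hy => hst' _ hx.1 _ hy)
              hmid (efeq_mono n _ _ ht)
          exact efeq_trans n _ _ _ (rightE A (s ∪ t) p n)
            (efeq_trans n _ _ _ (sub_congr A h2 n)
              (efeq_trans n _ _ _ hres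
                (efeq_trans n _ _ _ (sub_congr A h2'.symm n)
                  (efeq_symm n _ _ (rightE A (s' ∪ t') ⟨q.val, Or.inl q.2⟩ n)))))
      · -- p in the upper part t
        obtain ⟨q, hcq, hlq, hrq⟩ := ht.1 ⟨p.val, hp⟩
        refine ⟨⟨q.val, Or.inr q.2⟩, hcq, ?_, ?_⟩
        · -- left parts
          have h2 : (s ∪ t) ∩ Set.Iio p.val = s ∪ (t ∩ Set.Iio p.val) := by
            ext x
            constructor
            · rintro ⟨hx | hx, hl⟩
              · exact Or.inl hx
              · exact Or.inr ⟨hx, hl⟩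
            · rintro (hx | ⟨hx, hl⟩)
              · exact ⟨Or.inl hx, hst _ hx _ hp⟩
              · exact ⟨Or.inr hx, hl⟩
          have h2' : (s' ∪ t') ∩ Set.Iio q.val = s' ∪ (t' ∩ Set.Iio q.val) := by
            ext x
            constructor
            · rintro ⟨hx | hx, hl⟩
              · exact Or.inl hx
              · exact Or.inr ⟨hx, hl⟩
            · rintro (hx | ⟨hx, hl⟩)
              · exact ⟨Or.inl hx, hst' _ hx _ q.2⟩
              · exact ⟨Or.inr hx, hl⟩
          have hmid : EFEquiv n (A.sub (t ∩ Set.Iio p.val)) (A.sub (t' ∩ Set.Iio q.val)) :=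
            efeq_trans n _ _ _ (efeq_symm n _ _ (leftE A t ⟨p.val, hp⟩ n))
              (efeq_trans n _ _ _ hlq (leftE A t' q n))
          have hres : EFEquiv n (A.sub (s ∪ (t ∩ Set.Iio p.val)))
              (A.sub (s' ∪ (t' ∩ Set.Iio q.val))) :=
            ih _ _ _ _ (fun x hx y hy => hst _ hx _ hy.1) (fun x hx y hy => hst' _ hx _ hy.1)
              (efeq_mono n _ _ hs) hmid
          exact efeq_trans n _ _ _ (leftE A (s ∪ t) p n)
            (efeq_trans n _ _ _ (sub_congr A h2 n)
              (efeq_trans n _ _ _ hres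
                (efeq_trans n _ _ _ (sub_congr A h2'.symm n)
                  (efeq_symm n _ _ (leftE A (s' ∪ t') ⟨q.val, Or.inr q.2⟩ n)))))
        · -- right parts
          have h1 : (s ∪ t) ∩ Set.Ioi p.val = t ∩ Set.Ioi p.val := by
            ext x
            constructor
            · rintro ⟨hx | hx, hl⟩
              · exact absurd ((hst _ hx _ hp).trans hl) (lt_irrefl x)
              · exact ⟨hx, hl⟩
            · rintro ⟨hx, hl⟩; exact ⟨Or.inr hx, hl⟩
          have h1' : t' ∩ Set.Ioi q.val = (s' ∪ t') ∩ Set.Ioi q.val := by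
            ext x
            constructor
            · rintro ⟨hx, hl⟩; exact ⟨Or.inr hx, hl⟩
            · rintro ⟨hx | hx, hl⟩
              · exact absurd ((hst' _ hx _ q.2).trans hl) (lt_irrefl x)
              · exact ⟨hx, hl⟩
          exact efeq_trans n _ _ _ (right_conv A p ⟨p.val, hp⟩ rfl h1 n)
            (efeq_trans n _ _ _ hrq (right_conv A (u := s' ∪ t') q ⟨q.val, Or.inr q.2⟩ rfl h1' n))
    intro s t s' t' hst hst' hs ht
    constructor
    · exact fun p => half s t s' t' hst hst' hs ht p
    · intro q
      obtain ⟨p, hc, hl, hr⟩ := half s' t' s t hst' hst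
        (efeq_symm _ _ _ hs) (efeq_symm _ _ _ ht) q
      exact ⟨p, hc.symm, efeq_symm _ _ _ hl, efeq_symm _ _ _ hr⟩

end CLO

/-- Cutting Lemma: if `a < b` in a finite coloured linear order `A` realize the
same `n`-character, and every point in `(a, b]` has the same `n`-character as some point `≤ a`,
then `A ≡_{n+1} A \ (a, b]`. -/
theorem stmt1 {C : Type} (A : CLO C) [Finite A.carrier] (n : ℕ) (a b : A.carrier)
    (hab : a < b) (hchar : CLO.SameChar n A a b)
    (hbetween : ∀ x : A.carrier, a < x → x ≤ b →
      ∃ y : A.carrier, y ≤ a ∧ CLO.SameChar n A x y) :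
    CLO.EFEquiv (n + 1) A (A.sub {x | ¬(a < x ∧ x ≤ b)}) := by
  classical
  set compl : Set A.carrier := {x | ¬(a < x ∧ x ≤ b)} with hcompldef
  have hmem : ∀ x : A.carrier, x ∈ compl ↔ x ≤ a ∨ b < x := by
    intro x
    simp only [hcompldef, Set.mem_setOf_eq, not_and, not_le]
    constructor
    · intro h
      rcases le_or_gt x a with h' | h'
      · exact Or.inl h'
      · exact Or.inr (h h')
    · rintro (h | h) h'
      · exact absurd h' h.not_gt
      · exact h
  have K : ∀ y : A.carrier, y ≤ a →
      CLO.EFEquiv n (A.sub (Set.Ioi y)) (A.sub (Set.Ioi y ∩ compl)) := by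
    intro y hy
    have h1 : CLO.EFEquiv n (A.sub (Set.Ioc y a ∪ Set.Ioi a))
        (A.sub (Set.Ioc y a ∪ Set.Ioi b)) := by
      refine CLO.efeq_comp A n _ _ _ _ ?_ ?_ (CLO.efeq_refl n _) ?_
      · intro x hx z hz; exact lt_of_le_of_lt hx.2 hz
      · intro x hx z hz; exact lt_of_le_of_lt hx.2 (hab.trans hz)
      · exact hchar.2.2
    have e1 : Set.Ioc y a ∪ Set.Ioi a = Set.Ioi y := Set.Ioc_union_Ioi_eq_Ioi hy
    have e2 : Set.Ioc y a ∪ Set.Ioi b = Set.Ioi y ∩ compl := by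
      ext x
      simp only [Set.mem_union, Set.mem_Ioc, Set.mem_Ioi, Set.mem_inter_iff, hmem]
      constructor
      · rintro (⟨h1, h2⟩ | h)
        · exact ⟨h1, Or.inl h2⟩
        · exact ⟨lt_of_le_of_lt hy (hab.trans h), Or.inr h⟩
      · rintro ⟨h1, h2 | h2⟩
        · exact Or.inl ⟨h1, h2⟩
        · exact Or.inr h2
    exact CLO.efeq_trans n _ _ _ (CLO.sub_congr A e1.symm n)
      (CLO.efeq_trans n _ _ _ h1 (CLO.sub_congr A e2 n))
  have hIic : CLO.EFEquiv n (A.sub (Set.Iic b)) (A.sub (Set.Iic a)) := by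
    have h1 : CLO.EFEquiv n (A.sub (Set.Iio b ∪ {b})) (A.sub (Set.Iio a ∪ {a})) := by
      refine CLO.efeq_comp A n _ _ _ _ ?_ ?_ ?_ ?_
      · intro x hx z hz
        rw [Set.mem_singleton_iff] at hz
        exact (Set.mem_Iio.mp hx).trans_le hz.ge
      · intro x hx z hz
        rw [Set.mem_singleton_iff] at hz
        exact (Set.mem_Iio.mp hx).trans_le hz.ge
      · exact CLO.efeq_symm n _ _ hchar.2.1
      · exact CLO.single A b a hchar.1.symm n
    exact CLO.efeq_trans n _ _ _ (CLO.sub_congr A Set.Iio_union_right.symm n)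
      (CLO.efeq_trans n _ _ _ h1 (CLO.sub_congr A Set.Iio_union_right n))
  have K' : ∀ q : A.carrier, b < q →
      CLO.EFEquiv n (A.sub (Set.Iio q)) (A.sub (Set.Iio q ∩ compl)) := by
    intro q hq
    have h1 : CLO.EFEquiv n (A.sub (Set.Iic b ∪ Set.Ioo b q))
        (A.sub (Set.Iic a ∪ Set.Ioo b q)) := by
      refine CLO.efeq_comp A n _ _ _ _ ?_ ?_ hIic (CLO.efeq_refl n _)
      · intro x hx z hz; exact lt_of_le_of_lt hx hz.1
      · intro x hx z hz; exact lt_of_le_of_lt (le_trans hx hab.le) hz.1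
    have e1 : Set.Iic b ∪ Set.Ioo b q = Set.Iio q := by
      ext x
      simp only [Set.mem_union, Set.mem_Iic, Set.mem_Ioo, Set.mem_Iio]
      constructor
      · rintro (h | ⟨_, h⟩)
        · exact lt_of_le_of_lt h hq
        · exact h
      · intro h
        rcases le_or_gt x b with h' | h'
        · exact Or.inl h'
        · exact Or.inr ⟨h', h⟩
    have e2 : Set.Iic a ∪ Set.Ioo b q = Set.Iio q ∩ compl := by
      ext x
      simp only [Set.mem_union, Set.mem_Iic, Set.mem_Ioo, Set.mem_Iio, Set.mem_inter_iff, hmem]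
      constructor
      · rintro (h | ⟨h1, h2⟩)
        · exact ⟨lt_of_le_of_lt h (hab.trans hq), Or.inl h⟩
        · exact ⟨h2, Or.inr h1⟩
      · rintro ⟨h1, h2 | h2⟩
        · exact Or.inl h2
        · exact Or.inr ⟨h2, h1⟩
    exact CLO.efeq_trans n _ _ _ (CLO.sub_congr A e1.symm n)
      (CLO.efeq_trans n _ _ _ h1 (CLO.sub_congr A e2 n))
  have good : ∀ (p : A.carrier) (hp : p ∈ compl),
      CLO.EFEquiv n (A.left p) ((A.sub compl).left ⟨p, hp⟩) ∧
      CLO.EFEquiv n (A.right p) ((A.sub compl).right ⟨p, hp⟩) := by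
    intro p hp
    rcases (hmem p).1 hp with hpa | hbp
    · constructor
      · have e : Set.Iio p = compl ∩ Set.Iio p := by
          ext x
          simp only [Set.mem_Iio, Set.mem_inter_iff, hmem]
          constructor
          · intro h; exact ⟨Or.inl ((h.trans_le hpa).le), h⟩
          · exact fun h => h.2
        exact CLO.efeq_trans n _ _ _ (CLO.sub_congr A e n)
          (CLO.efeq_symm n _ _ (CLO.leftE A compl ⟨p, hp⟩ n))
      · exact CLO.efeq_trans n _ _ _ (K p hpa)
          (CLO.efeq_trans n _ _ _ (CLO.sub_congr A (Set.inter_comm _ _) n)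
            (CLO.efeq_symm n _ _ (CLO.rightE A compl ⟨p, hp⟩ n)))
    · constructor
      · exact CLO.efeq_trans n _ _ _ (K' p hbp)
          (CLO.efeq_trans n _ _ _ (CLO.sub_congr A (Set.inter_comm _ _) n)
            (CLO.efeq_symm n _ _ (CLO.leftE A compl ⟨p, hp⟩ n)))
      · have e : Set.Ioi p = compl ∩ Set.Ioi p := by
          ext x
          simp only [Set.mem_Ioi, Set.mem_inter_iff, hmem]
          constructor
          · intro h; exact ⟨Or.inr (hbp.trans h), h⟩
          · exact fun h => h.2
        exact CLO.efeq_trans n _ _ _ (CLO.sub_congr A e n)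
          (CLO.efeq_symm n _ _ (CLO.rightE A compl ⟨p, hp⟩ n))
  constructor
  · intro p
    by_cases hp : p ∈ compl
    · exact ⟨⟨p, hp⟩, rfl, (good p hp).1, (good p hp).2⟩
    · have hp' : a < p ∧ p ≤ b := by
        by_contra h
        exact hp h
      obtain ⟨y, hy, hcy, hly, hry⟩ := hbetween p hp'.1 hp'.2
      have hyc : y ∈ compl := (hmem y).2 (Or.inl hy)
      refine ⟨⟨y, hyc⟩, hcy, ?_, ?_⟩
      · exact CLO.efeq_trans n _ _ _ hly (good y hyc).1
      · exact CLO.efeq_trans n _ _ _ hry (good y hyc).2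
  · intro q
    exact ⟨q.val, rfl, (good q.val q.2).1, (good q.val q.2).2⟩
end

section
/- In a finite coloured linear order that is (n+1)-optimal (i.e., not (n+1)-equivalent to any strictly shorter coloured linear order), no two consecutive points have the same n-character. -/
namespace CLO

variable {C : Type}

theorem efEquiv_mono : ∀ {n : ℕ} {A B : CLO C}, EFEquiv (n+1) A B → EFEquiv n A B
  | 0, _, _, _ => trivial
  | n+1, A, B, h => by
    obtain ⟨h1, h2⟩ := h
    exact ⟨fun a => let ⟨b, hc, hl, hr⟩ := h1 a; ⟨b, hc, efEquiv_mono hl, efEquiv_mono hr⟩,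
           fun b => let ⟨a, hc, hl, hr⟩ := h2 b; ⟨a, hc, efEquiv_mono hl, efEquiv_mono hr⟩⟩

theorem efEquiv_symm : ∀ {n : ℕ} {A B : CLO C}, EFEquiv n A B → EFEquiv n B A
  | 0, _, _, _ => trivial
  | n+1, A, B, h => by
    obtain ⟨h1, h2⟩ := h
    exact ⟨fun b => let ⟨a, hc, hl, hr⟩ := h2 b; ⟨a, hc.symm, efEquiv_symm hl, efEquiv_symm hr⟩,
           fun a => let ⟨b, hc, hl, hr⟩ := h1 a; ⟨b, hc.symm, efEquiv_symm hl, efEquiv_symm hr⟩⟩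

theorem efEquiv_trans : ∀ {n : ℕ} {A B D : CLO C}, EFEquiv n A B → EFEquiv n B D → EFEquiv n A D
  | 0, _, _, _, _, _ => trivial
  | n+1, A, B, D, h, h' => by
    obtain ⟨h1, h2⟩ := h
    obtain ⟨h1', h2'⟩ := h'
    constructor
    · intro a
      obtain ⟨b, hc, hl, hr⟩ := h1 a
      obtain ⟨d, hc', hl', hr'⟩ := h1' b
      exact ⟨d, hc.trans hc', efEquiv_trans hl hl', efEquiv_trans hr hr'⟩
    · intro d
      obtain ⟨b, hc', hl', hr'⟩ := h2' d
      obtain ⟨a, hc, hl, hr⟩ := h2 b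
      exact ⟨a, hc.trans hc', efEquiv_trans hl hl', efEquiv_trans hr hr'⟩

theorem efEquiv_of_map : ∀ (n : ℕ) {A B : CLO C} (f : A.carrier → B.carrier),
    StrictMono f → Function.Surjective f → (∀ x, A.colour x = B.colour (f x)) →
    EFEquiv n A B
  | 0, _, _, _, _, _, _ => trivial
  | n+1, A, B, f, hm, hs, hc => by
    have main : ∀ x : A.carrier, A.colour x = B.colour (f x) ∧
        EFEquiv n (A.left x) (B.left (f x)) ∧ EFEquiv n (A.right x) (B.right (f x)) := by
      intro x
      refine ⟨hc x, ?_, ?_⟩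
      · refine efEquiv_of_map n (fun z => ⟨f z.1, hm z.2⟩) ?_ ?_ (fun z => hc z.1)
        · intro u v h
          exact show f u.1 < f v.1 from hm h
        · rintro ⟨w, hw⟩
          obtain ⟨v, rfl⟩ := hs w
          exact ⟨⟨v, hm.lt_iff_lt.mp hw⟩, rfl⟩
      · refine efEquiv_of_map n (fun z => ⟨f z.1, hm z.2⟩) ?_ ?_ (fun z => hc z.1)
        · intro u v h
          exact show f u.1 < f v.1 from hm h
        · rintro ⟨w, hw⟩
          obtain ⟨v, rfl⟩ := hs w
          exact ⟨⟨v, hm.lt_iff_lt.mp hw⟩, rfl⟩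
    constructor
    · intro x
      exact ⟨f x, main x⟩
    · intro y
      obtain ⟨x, rfl⟩ := hs y
      exact ⟨x, main x⟩

theorem efEquiv_refl (n : ℕ) (A : CLO C) : EFEquiv n A A :=
  efEquiv_of_map n id strictMono_id Function.surjective_id (fun _ => rfl)

theorem sub_sub_equiv (A : CLO C) (s : Set A.carrier) (t : Set (A.sub s).carrier)
    (u : Set A.carrier)
    (h : ∀ y : A.carrier, y ∈ u ↔ ∃ hy : y ∈ s, (⟨y, hy⟩ : ↥s) ∈ t) (n : ℕ) :
    EFEquiv n ((A.sub s).sub t) (A.sub u) := by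
  refine efEquiv_of_map n (fun z => ⟨z.1.1, (h _).mpr ⟨z.1.2, z.2⟩⟩) ?_ ?_ (fun _ => rfl)
  · intro u v h
    exact show u.1.1 < v.1.1 from h
  · rintro ⟨w, hw⟩
    obtain ⟨hs, ht⟩ := (h w).mp hw
    exact ⟨⟨⟨w, hs⟩, ht⟩, rfl⟩


theorem split (n : ℕ) : ∀ (A B : CLO C) (LA : Set A.carrier) (LB : Set B.carrier),
    (∀ ⦃x y⦄, x ∈ LA → y ≤ x → y ∈ LA) →
    (∀ ⦃x y⦄, x ∈ LB → y ≤ x → y ∈ LB) →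
    EFEquiv n (A.sub LA) (B.sub LB) → EFEquiv n (A.sub LAᶜ) (B.sub LBᶜ) →
    EFEquiv n A B := by
  induction n with
  | zero => intros; trivial
  | succ n ih =>
    have key : ∀ (A B : CLO C) (LA : Set A.carrier) (LB : Set B.carrier),
        (∀ ⦃x y⦄, x ∈ LA → y ≤ x → y ∈ LA) →
        (∀ ⦃x y⦄, x ∈ LB → y ≤ x → y ∈ LB) →
        EFEquiv (n+1) (A.sub LA) (B.sub LB) → EFEquiv (n+1) (A.sub LAᶜ) (B.sub LBᶜ) →
        ∀ x : A.carrier, ∃ y : B.carrier, A.colour x = B.colour y ∧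
          EFEquiv n (A.left x) (B.left y) ∧ EFEquiv n (A.right x) (B.right y) := by
      intro A B LA LB hA hB h1 h2 x
      by_cases hx : x ∈ LA
      · obtain ⟨b, hcol, hl, hr⟩ := h1.1 (⟨x, hx⟩ : (A.sub LA).carrier)
        refine ⟨b.1, hcol, ?_, ?_⟩
        · -- A.left x ≡ (A.sub LA).left ⟨x,hx⟩ ≡ (B.sub LB).left b ≡ B.left b.1
          have e1 : EFEquiv n ((A.sub LA).left ⟨x, hx⟩) (A.sub {y | y < x}) := by
            refine sub_sub_equiv A LA _ _ (fun y => ?_) n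
            constructor
            · intro hy
              exact ⟨hA hx hy.le, hy⟩
            · rintro ⟨hy, hlt⟩
              exact hlt
          have e2 : EFEquiv n ((B.sub LB).left b) (B.sub {y | y < b.1}) := by
            refine sub_sub_equiv B LB _ _ (fun y => ?_) n
            constructor
            · intro hy
              exact ⟨hB b.2 hy.le, hy⟩
            · rintro ⟨hy, hlt⟩
              exact hlt
          exact efEquiv_trans (efEquiv_symm e1) (efEquiv_trans hl e2)
        · -- right part via ih
          refine ih (A.right x) (B.right b.1) {z | z.1 ∈ LA} {z | z.1 ∈ LB}
            (fun u v hu hv => hA hu hv) (fun u v hu hv => hB hu hv) ?_ ?_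
          · -- lower parts
            have e1 : EFEquiv n ((A.right x).sub {z | z.1 ∈ LA}) (A.sub {y | x < y ∧ y ∈ LA}) :=
              sub_sub_equiv A _ _ _ (fun y => ⟨fun hy => ⟨hy.1, hy.2⟩, fun ⟨h1, h2⟩ => ⟨h1, h2⟩⟩) n
            have e2 : EFEquiv n ((A.sub LA).right ⟨x, hx⟩) (A.sub {y | x < y ∧ y ∈ LA}) :=
              sub_sub_equiv A _ _ _ (fun y => ⟨fun hy => ⟨hy.2, hy.1⟩, fun ⟨h1, h2⟩ => ⟨h2, h1⟩⟩) n
            have e3 : EFEquiv n ((B.right b.1).sub {z | z.1 ∈ LB}) (B.sub {y | b.1 < y ∧ y ∈ LB}) :=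
              sub_sub_equiv B _ _ _ (fun y => ⟨fun hy => ⟨hy.1, hy.2⟩, fun ⟨h1, h2⟩ => ⟨h1, h2⟩⟩) n
            have e4 : EFEquiv n ((B.sub LB).right b) (B.sub {y | b.1 < y ∧ y ∈ LB}) :=
              sub_sub_equiv B _ _ _ (fun y => ⟨fun hy => ⟨hy.2, hy.1⟩, fun ⟨h1, h2⟩ => ⟨h2, h1⟩⟩) n
            exact efEquiv_trans e1 (efEquiv_trans (efEquiv_symm e2)
              (efEquiv_trans hr (efEquiv_trans e4 (efEquiv_symm e3))))
          · -- upper parts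
            have e1 : EFEquiv n ((A.right x).sub {z | z.1 ∈ LA}ᶜ) (A.sub LAᶜ) := by
              refine sub_sub_equiv A _ _ _ (fun y => ?_) n
              constructor
              · intro hy
                have : x < y := lt_of_not_ge (fun hle => hy (hA hx hle))
                exact ⟨this, hy⟩
              · rintro ⟨h1, h2⟩
                exact h2
            have e3 : EFEquiv n ((B.right b.1).sub {z | z.1 ∈ LB}ᶜ) (B.sub LBᶜ) := by
              refine sub_sub_equiv B _ _ _ (fun y => ?_) n
              constructor
              · intro hy
                have : b.1 < y := lt_of_not_ge (fun hle => hy (hB b.2 hle))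
                exact ⟨this, hy⟩
              · rintro ⟨h1, h2⟩
                exact h2
            exact efEquiv_trans e1 (efEquiv_trans (efEquiv_mono h2) (efEquiv_symm e3))
      · obtain ⟨b, hcol, hl, hr⟩ := h2.1 (⟨x, hx⟩ : (A.sub LAᶜ).carrier)
        refine ⟨b.1, hcol, ?_, ?_⟩
        · -- left part via ih
          refine ih (A.left x) (B.left b.1) {z | z.1 ∈ LA} {z | z.1 ∈ LB}
            (fun u v hu hv => hA hu hv) (fun u v hu hv => hB hu hv) ?_ ?_
          · have e1 : EFEquiv n ((A.left x).sub {z | z.1 ∈ LA}) (A.sub LA) := by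
              refine sub_sub_equiv A _ _ _ (fun y => ?_) n
              constructor
              · intro hy
                have : y < x := lt_of_not_ge (fun hle => hx (hA hy hle))
                exact ⟨this, hy⟩
              · rintro ⟨h1, h2⟩
                exact h2
            have e3 : EFEquiv n ((B.left b.1).sub {z | z.1 ∈ LB}) (B.sub LB) := by
              refine sub_sub_equiv B _ _ _ (fun y => ?_) n
              constructor
              · intro hy
                have : y < b.1 := lt_of_not_ge (fun hle => b.2 (hB hy hle))
                exact ⟨this, hy⟩
              · rintro ⟨h1, h2⟩
                exact h2
            exact efEquiv_trans e1 (efEquiv_trans (efEquiv_mono h1) (efEquiv_symm e3))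
          · have e1 : EFEquiv n ((A.left x).sub {z | z.1 ∈ LA}ᶜ) (A.sub {y | y < x ∧ y ∉ LA}) :=
              sub_sub_equiv A _ _ _ (fun y => ⟨fun hy => ⟨hy.1, hy.2⟩, fun ⟨h1, h2⟩ => ⟨h1, h2⟩⟩) n
            have e2 : EFEquiv n ((A.sub LAᶜ).left ⟨x, hx⟩) (A.sub {y | y < x ∧ y ∉ LA}) :=
              sub_sub_equiv A _ _ _ (fun y => ⟨fun hy => ⟨hy.2, hy.1⟩, fun ⟨h1, h2⟩ => ⟨h2, h1⟩⟩) n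
            have e3 : EFEquiv n ((B.left b.1).sub {z | z.1 ∈ LB}ᶜ) (B.sub {y | y < b.1 ∧ y ∉ LB}) :=
              sub_sub_equiv B _ _ _ (fun y => ⟨fun hy => ⟨hy.1, hy.2⟩, fun ⟨h1, h2⟩ => ⟨h1, h2⟩⟩) n
            have e4 : EFEquiv n ((B.sub LBᶜ).left b) (B.sub {y | y < b.1 ∧ y ∉ LB}) :=
              sub_sub_equiv B _ _ _ (fun y => ⟨fun hy => ⟨hy.2, hy.1⟩, fun ⟨h1, h2⟩ => ⟨h2, h1⟩⟩) n
            exact efEquiv_trans e1 (efEquiv_trans (efEquiv_symm e2)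
              (efEquiv_trans hl (efEquiv_trans e4 (efEquiv_symm e3))))
        · -- right part, whole tail is in complements
          have e1 : EFEquiv n ((A.sub LAᶜ).right ⟨x, hx⟩) (A.sub {y | x < y}) := by
            refine sub_sub_equiv A _ _ _ (fun y => ?_) n
            constructor
            · intro hy
              exact ⟨fun hyLA => hx (hA hyLA hy.le), hy⟩
            · rintro ⟨h1, h2⟩
              exact h2
          have e2 : EFEquiv n ((B.sub LBᶜ).right b) (B.sub {y | b.1 < y}) := by
            refine sub_sub_equiv B _ _ _ (fun y => ?_) n
            constructor
            · intro hy
              exact ⟨fun hyLB => b.2 (hB hyLB hy.le), hy⟩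
            · rintro ⟨h1, h2⟩
              exact h2
          exact efEquiv_trans (efEquiv_symm e1) (efEquiv_trans hr e2)
    intro A B LA LB hA hB h1 h2
    constructor
    · exact key A B LA LB hA hB h1 h2
    · intro y
      obtain ⟨x, hc, hl, hr⟩ := key B A LB LA hB hA (efEquiv_symm h1) (efEquiv_symm h2) y
      exact ⟨x, hc.symm, efEquiv_symm hl, efEquiv_symm hr⟩

end CLO

open CLO

/-- in an `(n+1)`-optimal finite coloured linear order, no two consecutive points
realize the same `n`-character. -/
theorem stmt2 {C : Type} (A : CLO C) [Finite A.carrier] (n : ℕ)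
    (hopt : CLO.Optimal (n + 1) A) (a b : A.carrier) (hab : a < b)
    (hcons : ¬∃ x : A.carrier, a < x ∧ x < b) :
    ¬ CLO.SameChar n A a b := by
  rintro ⟨hcol, hleft, hright⟩
  set S : Set A.carrier := {y | y ≠ b} with hSdef
  have hyb : ∀ y : A.carrier, y < b ↔ y ≤ a :=
    fun y => ⟨fun h => not_lt.mp fun h' => hcons ⟨y, h', h⟩, fun h => lt_of_le_of_lt h hab⟩
  have hgt : ∀ y : A.carrier, a < y → y ≠ b → b < y := fun y h1 h2 =>
    lt_of_le_of_ne (not_lt.mp (fun h' => absurd ((hyb y).mp h') (not_le.mpr h1))) (Ne.symm h2)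
  have claim : ∀ (x : A.carrier) (hx : x ∈ S),
      EFEquiv n (A.left x) ((A.sub S).left ⟨x, hx⟩) ∧
      EFEquiv n (A.right x) ((A.sub S).right ⟨x, hx⟩) := by
    intro x hx
    rcases lt_or_gt_of_ne (hx : x ≠ b) with hb | hb
    · have hxa : x ≤ a := (hyb x).mp hb
      constructor
      · -- left: sets coincide
        refine efEquiv_symm (sub_sub_equiv A S _ {y | y < x} (fun y => ?_) n)
        exact ⟨fun hy => ⟨ne_of_lt (lt_of_lt_of_le hy (le_of_lt hb)), hy⟩, fun ⟨_, h⟩ => h⟩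
      · -- right: split at a
        refine split n (A.right x) ((A.sub S).right ⟨x, hx⟩)
          {z | z.1 ≤ a} {z | z.1.1 ≤ a}
          (fun u v hu hv => le_trans (show v.1 ≤ u.1 from hv) hu)
          (fun u v hu hv => le_trans (show v.1.1 ≤ u.1.1 from hv) hu) ?_ ?_
        · -- lower parts
          have e1 : EFEquiv n ((A.right x).sub {z | z.1 ≤ a}) (A.sub {y | x < y ∧ y ≤ a}) :=
            sub_sub_equiv A _ _ _ (fun y => ⟨fun hy => ⟨hy.1, hy.2⟩, fun ⟨h1, h2⟩ => ⟨h1, h2⟩⟩) n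
          have e2 : EFEquiv n (((A.sub S).right ⟨x, hx⟩).sub {z | z.1.1 ≤ a})
              ((A.sub S).sub {z | x < z.1 ∧ z.1 ≤ a}) :=
            sub_sub_equiv (A.sub S) _ _ _
              (fun z => ⟨fun hz => ⟨hz.1, hz.2⟩, fun ⟨h1, h2⟩ => ⟨h1, h2⟩⟩) n
          have e2' : EFEquiv n ((A.sub S).sub {z | x < z.1 ∧ z.1 ≤ a})
              (A.sub {y | x < y ∧ y ≤ a}) := by
            refine sub_sub_equiv A S _ _ (fun y => ?_) n
            exact ⟨fun hy => ⟨ne_of_lt (lt_of_le_of_lt hy.2 hab), hy⟩, fun ⟨_, h⟩ => h⟩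
          exact efEquiv_trans e1 (efEquiv_symm (efEquiv_trans e2 e2'))
        · -- upper parts
          have f1 : EFEquiv n ((A.right x).sub {z | z.1 ≤ a}ᶜ) (A.sub {y | a < y}) := by
            refine sub_sub_equiv A _ _ _ (fun y => ?_) n
            exact ⟨fun hy => ⟨lt_of_le_of_lt hxa hy, not_le.mpr hy⟩,
              fun ⟨_, h2⟩ => not_le.mp h2⟩
          have f2 : EFEquiv n (((A.sub S).right ⟨x, hx⟩).sub {z | z.1.1 ≤ a}ᶜ)
              ((A.sub S).sub {z | x < z.1 ∧ ¬ z.1 ≤ a}) :=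
            sub_sub_equiv (A.sub S) _ _ _
              (fun z => ⟨fun hz => ⟨hz.1, hz.2⟩, fun ⟨h1, h2⟩ => ⟨h1, h2⟩⟩) n
          have f2' : EFEquiv n ((A.sub S).sub {z | x < z.1 ∧ ¬ z.1 ≤ a})
              (A.sub {y | b < y}) := by
            refine sub_sub_equiv A S _ _ (fun y => ?_) n
            constructor
            · intro hy
              exact ⟨(ne_of_lt hy).symm, lt_trans (lt_of_le_of_lt hxa hab) hy,
                not_le.mpr (lt_trans hab hy)⟩
            · rintro ⟨h1, _, h3⟩
              exact hgt y (not_le.mp h3) h1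
          exact efEquiv_trans f1 (efEquiv_trans hright
            (efEquiv_symm (efEquiv_trans f2 f2')))
    · -- b < x
      constructor
      · -- left: split
        refine split n (A.left x) ((A.sub S).left ⟨x, hx⟩)
          {z | z.1 ≤ a} {z | z.1.1 < a}
          (fun u v hu hv => le_trans (show v.1 ≤ u.1 from hv) hu)
          (fun u v hu hv => lt_of_le_of_lt (show v.1.1 ≤ u.1.1 from hv) hu) ?_ ?_
        · -- lower parts
          have g1 : EFEquiv n ((A.left x).sub {z | z.1 ≤ a}) (A.left b) := by
            refine sub_sub_equiv A _ _ _ (fun y => ?_) n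
            exact ⟨fun hy => ⟨lt_trans hy hb, (hyb y).mp hy⟩, fun ⟨_, h2⟩ => (hyb y).mpr h2⟩
          have g2 : EFEquiv n (((A.sub S).left ⟨x, hx⟩).sub {z | z.1.1 < a})
              ((A.sub S).sub {z | z.1 < a}) := by
            refine sub_sub_equiv (A.sub S) _ _ _ (fun z => ?_) n
            exact ⟨fun hz => ⟨show z.1 < x from lt_trans hz (lt_trans hab hb), hz⟩,
              fun ⟨_, h2⟩ => h2⟩
          have g2' : EFEquiv n ((A.sub S).sub {z | z.1 < a}) (A.left a) := by
            refine sub_sub_equiv A S _ _ (fun y => ?_) n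
            exact ⟨fun hy => ⟨ne_of_lt (lt_trans hy hab), hy⟩, fun ⟨_, h⟩ => h⟩
          exact efEquiv_trans g1 (efEquiv_trans (efEquiv_symm hleft)
            (efEquiv_symm (efEquiv_trans g2 g2')))
        · -- upper parts: the swap
          have k1 : EFEquiv n ((A.left x).sub {z | z.1 ≤ a}ᶜ) (A.sub {y | b ≤ y ∧ y < x}) := by
            refine sub_sub_equiv A _ _ _ (fun y => ?_) n
            constructor
            · intro hy
              exact ⟨hy.2, fun hle => absurd (le_trans hy.1 hle) (not_le.mpr hab)⟩
            · rintro ⟨h1, h2⟩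
              exact ⟨not_lt.mp (fun h' => h2 ((hyb y).mp h')), h1⟩
          have k2 : EFEquiv n (((A.sub S).left ⟨x, hx⟩).sub {z | z.1.1 < a}ᶜ)
              ((A.sub S).sub {z | a ≤ z.1 ∧ z.1 < x}) := by
            refine sub_sub_equiv (A.sub S) _ _ _ (fun z => ?_) n
            exact ⟨fun hz => ⟨hz.2, not_lt.mpr hz.1⟩, fun ⟨h1, h2⟩ => ⟨not_lt.mp h2, h1⟩⟩
          have k2' : EFEquiv n ((A.sub S).sub {z | a ≤ z.1 ∧ z.1 < x})
              (A.sub {y | (a ≤ y ∧ y < x) ∧ y ≠ b}) := by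
            refine sub_sub_equiv A S _ _ (fun y => ?_) n
            exact ⟨fun hy => ⟨hy.2, hy.1⟩, fun ⟨h1, h2⟩ => ⟨h2, h1⟩⟩
          -- the swap map between A.sub {y | b ≤ y ∧ y < x} and A.sub {y | (a ≤ y ∧ y < x) ∧ y ≠ b}
          have hbx : b < x := hb
          have kswap : EFEquiv n (A.sub {y | b ≤ y ∧ y < x})
              (A.sub {y | (a ≤ y ∧ y < x) ∧ y ≠ b}) := by
            set P : Set A.carrier := {y | b ≤ y ∧ y < x} with hP
            set Q : Set A.carrier := {y | (a ≤ y ∧ y < x) ∧ y ≠ b} with hQ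
            have hax : a < x := lt_trans hab hbx
            let f : (A.sub P).carrier → (A.sub Q).carrier := fun w =>
              if h : w.1 = b then ⟨a, ⟨le_refl a, hax⟩, ne_of_lt hab⟩
              else ⟨w.1, ⟨le_trans (le_of_lt hab) w.2.1, w.2.2⟩, h⟩
            have hval : ∀ w, (f w).1 = if w.1 = b then a else w.1 := by
              intro w
              by_cases h : w.1 = b
              · simp only [f]; split <;> simp_all
              · simp only [f]; split <;> simp_all
            refine efEquiv_of_map n f ?_ ?_ ?_
            · intro u v huv
              have huv' : u.1 < v.1 := huv
              show (f u).1 < (f v).1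
              rw [hval, hval]
              by_cases h1 : u.1 = b
              · rw [if_pos h1]
                have h2 : v.1 ≠ b := by
                  intro h2
                  rw [h1, h2] at huv'
                  exact lt_irrefl b huv'
                rw [if_neg h2]
                rw [h1] at huv'
                exact lt_trans hab huv'
              · rw [if_neg h1]
                have h2 : v.1 ≠ b := by
                  intro h2
                  rw [h2] at huv'
                  exact lt_irrefl b (lt_of_le_of_lt u.2.1 huv')
                rw [if_neg h2]
                exact huv'
            · rintro ⟨z, ⟨hz1, hz2⟩, hz3⟩
              by_cases hz : z = a
              · refine ⟨⟨b, le_refl b, hbx⟩, Subtype.ext ?_⟩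
                refine (hval _).trans ?_
                show (if b = b then a else b) = z
                rw [if_pos rfl]
                exact hz.symm
              · have hz' : a < z := lt_of_le_of_ne hz1 (Ne.symm hz)
                refine ⟨⟨z, le_of_lt (hgt z hz' hz3), hz2⟩, Subtype.ext ?_⟩
                refine (hval _).trans ?_
                show (if z = b then a else z) = z
                rw [if_neg hz3]
            · intro w
              show A.colour w.1 = A.colour (f w).1
              rw [hval]
              by_cases h : w.1 = b
              · rw [if_pos h, h]
                exact hcol.symm
              · rw [if_neg h]
          exact efEquiv_trans k1 (efEquiv_trans kswap
            (efEquiv_symm (efEquiv_trans k2 k2')))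
      · -- right: sets coincide
        refine efEquiv_symm (sub_sub_equiv A S _ {y | x < y} (fun y => ?_) n)
        exact ⟨fun hy => ⟨(ne_of_lt (lt_trans hb hy)).symm, hy⟩, fun ⟨_, h⟩ => h⟩
  have hane : a ∈ S := ne_of_lt hab
  have hEF : EFEquiv (n + 1) A (A.sub S) := by
    constructor
    · intro x
      by_cases hx : x = b
      · rw [hx]
        refine ⟨⟨a, hane⟩, hcol.symm, ?_, ?_⟩
        · refine efEquiv_trans (efEquiv_symm hleft)
            (efEquiv_symm (sub_sub_equiv A S _ {y | y < a} (fun y => ?_) n))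
          exact ⟨fun hy => ⟨ne_of_lt (lt_trans hy hab), hy⟩, fun ⟨_, h⟩ => h⟩
        · refine efEquiv_symm (sub_sub_equiv A S _ {y | b < y} (fun y => ?_) n)
          exact ⟨fun hy => ⟨(ne_of_lt hy).symm, lt_trans hab hy⟩,
            fun ⟨h1, h2⟩ => hgt y h2 h1⟩
      · exact ⟨⟨x, hx⟩, rfl, (claim x hx).1, (claim x hx).2⟩
    · rintro ⟨y, hy⟩
      exact ⟨y, rfl, (claim y hy).1, (claim y hy).2⟩
  have hfin : Finite (A.sub S).carrier := Subtype.finite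
  have hle := hopt (A.sub S) hfin hEF
  have hcard : Nat.card (A.sub S).carrier < Nat.card A.carrier := by
    have h1 : Nat.card (A.sub S).carrier = S.ncard := Nat.card_coe_set_eq S
    have h2 : Nat.card A.carrier = (Set.univ : Set A.carrier).ncard := by
      rw [Set.ncard_univ]
    rw [h1, h2]
    refine Set.ncard_lt_ncard ?_ Set.finite_univ
    refine ⟨Set.subset_univ S, fun hsub => ?_⟩
    exact (hsub (Set.mem_univ b)) rfl
  omega
end

section
/- If in a finite m-coloured linear order no two distinct points have the same n-character, then the order is (n+1)-optimal, i.e., it is not (n+1)-equivalent to any coloured linear order of strictly smaller cardinality. -/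
lemma CLO.EFEquiv.symm {C : Type} : ∀ {n : ℕ} {A B : CLO C},
    CLO.EFEquiv n A B → CLO.EFEquiv n B A
  | 0, _, _, _ => trivial
  | n + 1, A, B, ⟨h1, h2⟩ => by
    constructor
    · intro b
      obtain ⟨a, hc, hl, hr⟩ := h2 b
      exact ⟨a, hc.symm, hl.symm, hr.symm⟩
    · intro a
      obtain ⟨b, hc, hl, hr⟩ := h1 a
      exact ⟨b, hc.symm, hl.symm, hr.symm⟩

lemma CLO.EFEquiv.trans {C : Type} : ∀ {n : ℕ} {A B D : CLO C},
    CLO.EFEquiv n A B → CLO.EFEquiv n B D → CLO.EFEquiv n A D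
  | 0, _, _, _, _, _ => trivial
  | n + 1, A, B, D, ⟨h1, h2⟩, ⟨g1, g2⟩ => by
    constructor
    · intro a
      obtain ⟨b, hc, hl, hr⟩ := h1 a
      obtain ⟨d, hc', hl', hr'⟩ := g1 b
      exact ⟨d, hc.trans hc', hl.trans hl', hr.trans hr'⟩
    · intro d
      obtain ⟨b, hc', hl', hr'⟩ := g2 d
      obtain ⟨a, hc, hl, hr⟩ := h2 b
      exact ⟨a, hc.trans hc', hl.trans hl', hr.trans hr'⟩

/-- if no two distinct points of a finite coloured linear order realize the same
`n`-character, then the order is `(n+1)`-optimal. -/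
theorem stmt3 {C : Type} (A : CLO C) [Finite A.carrier] (n : ℕ)
    (h : ∀ a b : A.carrier, CLO.SameChar n A a b → a = b) :
    CLO.Optimal (n + 1) A := by
  intro B hB hAB
  obtain ⟨h1, _⟩ := hAB
  choose f hc hl hr using h1
  have hf : Function.Injective f := by
    intro a₁ a₂ he
    apply h
    refine ⟨(hc a₁).trans ((he ▸ hc a₂).symm), ?_, ?_⟩
    · exact (hl a₁).trans (he ▸ (hl a₂).symm)
    · exact (hr a₁).trans (he ▸ (hr a₂).symm)
  exact Nat.card_le_card_of_injective f hf
end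

section
/- A T-configuration T = {x_i : 1 ≤ i ≤ m} ∪ {y_i : 1 ≤ i ≤ m} is associated with some m-coloured linear order if and only if for all i, j, i + j ≤ m + 1 implies x_i ≤ y_j. -/
/-- `a` is the least point of `A` such that exactly `i` colours occur weakly to its left. -/
def CLO.IsXPoint {C : Type} (A : CLO C) (i : ℕ) (a : A.carrier) : Prop :=
  IsLeast {z : A.carrier | (A.colour '' Set.Iic z).ncard = i} a

/-- `a` is the greatest point of `A` such that exactly `j` colours occur weakly to its right. -/
def CLO.IsYPoint {C : Type} (A : CLO C) (j : ℕ) (a : A.carrier) : Prop :=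
  IsGreatest {z : A.carrier | (A.colour '' Set.Ici z).ncard = j} a

/-- A `T`-configuration: a linear order `T = {x_1,...,x_m} ∪ {y_1,...,y_m}` with
`x` strictly increasing, `y` strictly decreasing, `x_1` least and `y_1` greatest
(indices are 0-based: `x i` is the paper's `x_{i+1}`). -/
structure TConfig (m : ℕ) where
  carrier : Type
  [ord : LinearOrder carrier]
  x : Fin m → carrier
  y : Fin m → carrier
  x_mono : StrictMono x
  y_anti : StrictAnti y
  x_least : ∀ (h : 0 < m) (t : carrier), x ⟨0, h⟩ ≤ t
  y_greatest : ∀ (h : 0 < m) (t : carrier), t ≤ y ⟨0, h⟩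
  cover : ∀ t : carrier, (∃ i, t = x i) ∨ (∃ j, t = y j)

attribute [instance] TConfig.ord

/-- `T` is the associated `T`-configuration of the coloured linear order `A`:
the order pattern of the `x`/`y` points of `A` matches that of `T`. -/
def TConfig.Associated {m : ℕ} (T : TConfig m) {C : Type} (A : CLO C) : Prop :=
  ∃ xA yA : Fin m → A.carrier,
    (∀ i : Fin m, A.IsXPoint ((i : ℕ) + 1) (xA i) ∧ A.IsYPoint ((i : ℕ) + 1) (yA i)) ∧
    (∀ i j : Fin m, (T.x i ≤ T.y j ↔ xA i ≤ yA j) ∧ (T.y j ≤ T.x i ↔ yA j ≤ xA i))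


namespace Stmt4Aux

variable {m : ℕ} (T : TConfig m)

/-- `i` is a "double" x-index: `x i` is also a y-point. -/
def Dx (i : Fin m) : Prop := ∃ j, T.x i = T.y j

/-- `j` is a "double" y-index. -/
def Dy (j : Fin m) : Prop := ∃ i, T.y j = T.x i

open Classical in
/-- Prospective partners for index `i`: its double partner if it is a double,
otherwise all pure y-indices strictly above `x i`. -/
noncomputable def N (i : Fin m) : Finset (Fin m) :=
  if h : Dx T i then {h.choose}
  else Finset.univ.filter (fun j => ¬ Dy T j ∧ T.x i < T.y j)

open Classical Finset in
lemma key (H' : ∀ i j : Fin m, (i : ℕ) + (j : ℕ) < m → T.x i ≤ T.y j)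
    {i : Fin m} (hi : ¬ Dx T i) :
    (univ.filter (fun k => ¬ Dx T k ∧ i ≤ k)).card
      ≤ (univ.filter (fun j : Fin m => ¬ Dy T j ∧ T.x i < T.y j)).card := by
  set a : Finset (Fin m) := univ.filter (fun j : Fin m => (i : ℕ) + (j : ℕ) < m) with ha_def
  have ha : a = Finset.Iic i.rev := by
    ext j
    simp only [ha_def, mem_filter, mem_univ, true_and, Finset.mem_Iic, Fin.le_def, Fin.val_rev]
    omega
  have hacard : a.card = m - (i : ℕ) := by
    rw [ha, Fin.card_Iic, Fin.val_rev]
    omega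
  have hbcard : (Finset.Ici i).card = m - (i : ℕ) := Fin.card_Ici i
  -- injection from doubles with small y-index into doubles with large x-index
  have step1 : (a.filter (fun j => Dy T j)).card
      ≤ ((Finset.Ici i).filter (fun k => Dx T k)).card := by
    apply Finset.card_le_card_of_injOn (fun j => if h : Dy T j then h.choose else j)
    · intro j hj
      simp only [mem_coe, mem_filter] at hj
      obtain ⟨hja, hdy⟩ := hj
      simp only [dif_pos hdy, mem_coe, mem_filter, Finset.mem_Ici]
      have hspec : T.y j = T.x hdy.choose := hdy.choose_spec
      constructor
      · -- i ≤ partner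
        have hle : T.x i ≤ T.y j := by
          apply H'
          simp only [ha_def, mem_filter] at hja
          exact hja.2
        rw [hspec] at hle
        exact T.x_mono.le_iff_le.mp hle
      · exact ⟨j, hspec.symm⟩
    · intro j hj j' hj' heq
      simp only [mem_coe, mem_filter] at hj hj'
      simp only [dif_pos hj.2, dif_pos hj'.2] at heq
      have h1 : T.y j = T.x hj.2.choose := hj.2.choose_spec
      have h2 : T.y j' = T.x hj'.2.choose := hj'.2.choose_spec
      apply T.y_anti.injective
      rw [h1, h2, heq]
  have step2 : (a.filter (fun j => ¬ Dy T j)).card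
      ≤ (univ.filter (fun j : Fin m => ¬ Dy T j ∧ T.x i < T.y j)).card := by
    apply Finset.card_le_card
    intro j hj
    simp only [mem_filter, ha_def, mem_univ, true_and] at hj ⊢
    obtain ⟨hlt, hdy⟩ := hj
    refine ⟨hdy, lt_of_le_of_ne (H' i j hlt) ?_⟩
    intro he
    exact hi ⟨j, he⟩
  have e1 := Finset.card_filter_add_card_filter_not (s := a) (p := fun j => Dy T j)
  have e2 := Finset.card_filter_add_card_filter_not (s := Finset.Ici i)
    (p := fun k => Dx T k)
  have e3 : univ.filter (fun k => ¬ Dx T k ∧ i ≤ k)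
      = (Finset.Ici i).filter (fun k => ¬ Dx T k) := by
    ext k
    simp only [mem_filter, mem_univ, true_and, Finset.mem_Ici]
    tauto
  rw [e3]
  omega

open Classical Finset in
lemma hall_cond (H' : ∀ i j : Fin m, (i : ℕ) + (j : ℕ) < m → T.x i ≤ T.y j)
    (S : Finset (Fin m)) : S.card ≤ (S.biUnion (N T)).card := by
  classical
  set Sp := S.filter (fun i => ¬ Dx T i) with hSp
  set Sd := S.filter (fun i => Dx T i) with hSd
  set p : Fin m → Fin m := fun i => if h : Dx T i then h.choose else i with hp
  have himg : Sd.image p ⊆ S.biUnion (N T) := by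
    intro j hj
    simp only [Finset.mem_image] at hj
    obtain ⟨i, hi, rfl⟩ := hj
    simp only [hSd, mem_filter] at hi
    apply Finset.mem_biUnion.mpr
    refine ⟨i, hi.1, ?_⟩
    simp only [N, dif_pos hi.2, hp, Finset.mem_singleton]
  have hinj : ∀ i ∈ Sd, ∀ i' ∈ Sd, p i = p i' → i = i' := by
    intro i hi i' hi' heq
    simp only [hSd, mem_filter] at hi hi'
    simp only [hp, dif_pos hi.2, dif_pos hi'.2] at heq
    apply T.x_mono.injective
    rw [hi.2.choose_spec, hi'.2.choose_spec, heq]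
  have hcardimg : (Sd.image p).card = Sd.card := Finset.card_image_of_injOn hinj
  have hDyimg : ∀ j ∈ Sd.image p, Dy T j := by
    intro j hj
    simp only [Finset.mem_image] at hj
    obtain ⟨i, hi, rfl⟩ := hj
    simp only [hSd, mem_filter] at hi
    simp only [hp, dif_pos hi.2]
    exact ⟨i, hi.2.choose_spec.symm⟩
  have hsplit : Sp.card + Sd.card = S.card := by
    rw [hSp, hSd]
    rw [add_comm]
    exact Finset.card_filter_add_card_filter_not (p := fun i => Dx T i)
  rcases Finset.eq_empty_or_nonempty Sp with he | hne
  · have : S.card = Sd.card := by rw [← hsplit, he]; simp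
    rw [this, ← hcardimg]
    exact Finset.card_le_card himg
  · set i₀ := Sp.min' hne with hi₀
    have hi₀S : i₀ ∈ Sp := Sp.min'_mem hne
    have hi₀pure : ¬ Dx T i₀ := by
      simp only [hSp, mem_filter] at hi₀S; exact hi₀S.2
    have hNsub : N T i₀ ⊆ S.biUnion (N T) := by
      intro j hj
      apply Finset.mem_biUnion.mpr
      refine ⟨i₀, ?_, hj⟩
      simp only [hSp, mem_filter] at hi₀S; exact hi₀S.1
    have hNi₀ : N T i₀ = univ.filter (fun j : Fin m => ¬ Dy T j ∧ T.x i₀ < T.y j) :=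
      dif_neg hi₀pure
    have hdisj : Disjoint (N T i₀) (Sd.image p) := by
      rw [Finset.disjoint_left]
      intro j hj hj'
      rw [hNi₀, mem_filter] at hj
      exact hj.2.1 (hDyimg j hj')
    have hsub2 : N T i₀ ∪ Sd.image p ⊆ S.biUnion (N T) :=
      Finset.union_subset hNsub himg
    have hc1 : (N T i₀).card + Sd.card ≤ (S.biUnion (N T)).card := by
      rw [← hcardimg, ← Finset.card_union_of_disjoint hdisj]
      exact Finset.card_le_card hsub2
    have hc2 : Sp.card ≤ (N T i₀).card := by
      have hsub3 : Sp ⊆ univ.filter (fun k => ¬ Dx T k ∧ i₀ ≤ k) := by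
        intro k hk
        simp only [mem_filter, mem_univ, true_and]
        simp only [hSp, mem_filter] at hk
        exact ⟨hk.2, Sp.min'_le k (by simp [hSp, mem_filter, hk.1, hk.2])⟩
      calc Sp.card ≤ (univ.filter (fun k => ¬ Dx T k ∧ i₀ ≤ k)).card :=
            Finset.card_le_card hsub3
        _ ≤ (univ.filter (fun j : Fin m => ¬ Dy T j ∧ T.x i₀ < T.y j)).card :=
            key T H' hi₀pure
        _ = (N T i₀).card := by rw [hNi₀]
    omega

lemma dc_mem_iff {m n : ℕ} (S : Set (Fin m)) (hdc : ∀ a b : Fin m, a ≤ b → b ∈ S → a ∈ S)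
    (hcard : S.ncard = n) (k : Fin m) : k ∈ S ↔ (k : ℕ) < n := by
  constructor
  · intro hk
    have h1 : (Set.Iic k) ⊆ S := fun a ha => hdc a k ha hk
    have h2 : (Set.Iic k).ncard ≤ S.ncard := Set.ncard_le_ncard h1 (Set.toFinite S)
    have h3 : (Set.Iic k).ncard = (k : ℕ) + 1 := by
      rw [← Finset.coe_Iic, Set.ncard_coe_finset, Fin.card_Iic]
    omega
  · intro hk
    by_contra hmem
    have h1 : S ⊆ Set.Iio k := by
      intro a ha
      by_contra hlt
      exact hmem (hdc k a (le_of_not_gt (fun h => hlt h)) ha)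
    have h2 : S.ncard ≤ (Set.Iio k).ncard := Set.ncard_le_ncard h1 (Set.toFinite _)
    have h3 : (Set.Iio k).ncard = (k : ℕ) := by
      rw [← Finset.coe_Iio, Set.ncard_coe_finset, Fin.card_Iio]
    omega

lemma ncard_Iic_fin {m : ℕ} (k : Fin m) : (Set.Iic k).ncard = (k : ℕ) + 1 := by
  rw [← Finset.coe_Iic, Set.ncard_coe_finset, Fin.card_Iic]

open Classical Finset in
lemma exists_assoc (hm : 0 < m)
    (H : ∀ i j : Fin m, ((i : ℕ) + 1) + ((j : ℕ) + 1) ≤ m + 1 → T.x i ≤ T.y j) :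
    ∃ A : CLO (Fin m), Finite A.carrier ∧ Function.Surjective A.colour ∧ T.Associated A := by
  classical
  have H' : ∀ i j : Fin m, (i : ℕ) + (j : ℕ) < m → T.x i ≤ T.y j := fun i j h =>
    H i j (by omega)
  obtain ⟨f, finj, hf⟩ := (Finset.all_card_le_biUnion_card_iff_exists_injective (N T)).mp
    (hall_cond T H')
  have fbij : Function.Bijective f := Finite.injective_iff_bijective.mp finj
  set e := Equiv.ofBijective f fbij with he
  have heapp : ∀ i, e i = f i := fun i => rfl
  have P1 : ∀ i j : Fin m, T.x i = T.y j → f i = j := by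
    intro i j hij
    have hdx : Dx T i := ⟨j, hij⟩
    have hthis := hf i
    rw [N, dif_pos hdx, Finset.mem_singleton] at hthis
    have h1 : T.y hdx.choose = T.y j := by rw [← hdx.choose_spec, hij]
    rw [hthis, T.y_anti.injective h1]
  have P2 : ∀ i : Fin m, ¬ Dx T i → ¬ Dy T (f i) ∧ T.x i < T.y (f i) := by
    intro i hi
    have hthis := hf i
    rw [N, dif_neg hi, Finset.mem_filter] at hthis
    exact hthis.2
  set col : T.carrier → Fin m := fun t =>
    if h : ∃ i, T.x i = t then h.choose
    else e.symm (((T.cover t).resolve_left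
      (fun hh => h ⟨hh.choose, hh.choose_spec.symm⟩)).choose)
    with hcol
  have colx : ∀ i, col (T.x i) = i := by
    intro i
    have hex : ∃ i', T.x i' = T.x i := ⟨i, rfl⟩
    simp only [hcol, dif_pos hex]
    exact T.x_mono.injective hex.choose_spec
  have coly : ∀ j, col (T.y j) = e.symm j := by
    intro j
    by_cases h : ∃ i, T.x i = T.y j
    · simp only [hcol, dif_pos h]
      have hfi : f h.choose = j := P1 _ _ h.choose_spec
      rw [Equiv.eq_symm_apply, heapp]
      exact hfi
    · simp only [hcol, dif_neg h]
      congr 1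
      have hspec := (((T.cover (T.y j))).resolve_left
        (fun hh => h ⟨hh.choose, hh.choose_spec.symm⟩)).choose_spec
      exact (T.y_anti.injective hspec).symm
  have claimA : ∀ t : T.carrier, T.x (col t) ≤ t ∧ t ≤ T.y (e (col t)) := by
    intro t
    rcases T.cover t with ⟨i, rfl⟩ | ⟨j, rfl⟩
    · rw [colx i]
      refine ⟨le_refl _, ?_⟩
      by_cases h : Dx T i
      · obtain ⟨j, hij⟩ := h
        have hfij : f i = j := P1 i j hij
        rw [heapp, hfij, ← hij]
      · rw [heapp]
        exact (P2 i h).2.le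
    · rw [coly j]
      have hei : e (e.symm j) = j := e.apply_symm_apply j
      constructor
      · by_cases h : Dx T (e.symm j)
        · obtain ⟨j', hij'⟩ := h
          have h1 : f (e.symm j) = j' := P1 _ _ hij'
          have h2 : j' = j := by rw [← h1, ← heapp, hei]
          rw [hij', h2]
        · have h3 := (P2 _ h).2
          rw [← heapp, hei] at h3
          exact h3.le
      · rw [hei]
  have imIic : ∀ t : T.carrier, col '' Set.Iic t = {i : Fin m | T.x i ≤ t} := by
    intro t
    ext c
    constructor
    · rintro ⟨u, hu, rfl⟩
      exact le_trans (claimA u).1 hu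
    · intro hc
      exact ⟨T.x c, hc, colx c⟩
  have imIci : ∀ t : T.carrier, col '' Set.Ici t = {i : Fin m | t ≤ T.y (e i)} := by
    intro t
    ext c
    constructor
    · rintro ⟨u, hu, rfl⟩
      exact le_trans hu (claimA u).2
    · intro hc
      refine ⟨T.y (e c), hc, ?_⟩
      rw [coly, Equiv.symm_apply_apply]
  have him : ∀ t : T.carrier, {i : Fin m | t ≤ T.y (e i)} = e.symm '' {k : Fin m | t ≤ T.y k} := by
    intro t
    ext i
    constructor
    · intro hi
      exact ⟨e i, hi, e.symm_apply_apply i⟩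
    · rintro ⟨j, hj, rfl⟩
      simpa [e.apply_symm_apply] using hj
  set A : CLO (Fin m) := { carrier := T.carrier, colour := col } with hA
  have hX : ∀ i : Fin m, A.IsXPoint ((i : ℕ) + 1) (T.x i) := by
    intro i
    constructor
    · show (col '' Set.Iic (T.x i)).ncard = (i : ℕ) + 1
      rw [imIic]
      have : {k : Fin m | T.x k ≤ T.x i} = Set.Iic i := by
        ext k; exact T.x_mono.le_iff_le
      rw [this, ncard_Iic_fin]
    · intro z hz
      have hz' : ({k : Fin m | T.x k ≤ z}).ncard = (i : ℕ) + 1 := by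
        rw [← imIic]; exact hz
      have hdc : ∀ a b : Fin m, a ≤ b → b ∈ {k : Fin m | T.x k ≤ z} →
          a ∈ {k : Fin m | T.x k ≤ z} := fun a b hab hb =>
        le_trans (T.x_mono.monotone hab) hb
      exact (dc_mem_iff _ hdc hz' i).mpr (by omega)
  have hY : ∀ j : Fin m, A.IsYPoint ((j : ℕ) + 1) (T.y j) := by
    intro j
    have hrw : ∀ t : T.carrier, (col '' Set.Ici t).ncard = ({k : Fin m | t ≤ T.y k}).ncard := by
      intro t
      rw [imIci]
      rw [him t, Set.ncard_image_of_injective _ e.symm.injective]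
    constructor
    · show (col '' Set.Ici (T.y j)).ncard = (j : ℕ) + 1
      rw [hrw]
      have : {k : Fin m | T.y j ≤ T.y k} = Set.Iic j := by
        ext k; exact T.y_anti.le_iff_ge
      rw [this, ncard_Iic_fin]
    · intro z hz
      have hz' : ({k : Fin m | z ≤ T.y k}).ncard = (j : ℕ) + 1 := by
        rw [← hrw]; exact hz
      have hdc : ∀ a b : Fin m, a ≤ b → b ∈ {k : Fin m | z ≤ T.y k} →
          a ∈ {k : Fin m | z ≤ T.y k} := fun a b hab hb =>
        le_trans hb (T.y_anti.antitone hab)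
      exact (dc_mem_iff _ hdc hz' j).mpr (by omega)
  have hfin : Finite T.carrier := by
    have hsurj2 : Function.Surjective (Sum.elim T.x T.y) := by
      intro t
      rcases T.cover t with ⟨i, hi⟩ | ⟨j, hj⟩
      exacts [⟨Sum.inl i, hi.symm⟩, ⟨Sum.inr j, hj.symm⟩]
    exact Finite.of_surjective _ hsurj2
  refine ⟨A, hfin, fun i => ⟨T.x i, colx i⟩, T.x, T.y, fun i => ⟨hX i, hY i⟩,
    fun i j => ⟨Iff.rfl, Iff.rfl⟩⟩

end Stmt4Aux

lemma stmt4_forward (m : ℕ) (T : TConfig m)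
    (h : ∃ (C : Type) (_ : Fintype C), Fintype.card C = m ∧
      ∃ A : CLO C, Finite A.carrier ∧ Function.Surjective A.colour ∧ T.Associated A) :
    ∀ i j : Fin m, ((i : ℕ) + 1) + ((j : ℕ) + 1) ≤ m + 1 → T.x i ≤ T.y j := by
  obtain ⟨C, instC, hcard, A, hfinA, hsurj, xA, yA, hpts, hpat⟩ := h
  haveI : Finite A.carrier := hfinA
  intro i j hij
  refine (hpat i j).1.mpr ?_
  by_contra hlt
  replace hlt : yA j < xA i := lt_of_not_ge hlt
  have hXp := (hpts i).1
  have hYp := (hpts j).2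
  -- every point strictly below xA i sees at most i colours
  have F1 : ∀ z, z < xA i → (A.colour '' Set.Iic z).ncard ≤ (i : ℕ) := by
    intro z hz
    have h1 : (A.colour '' Set.Iic z).ncard ≤ (i : ℕ) + 1 := by
      have := Set.ncard_le_ncard (Set.image_mono (f := A.colour) (Set.Iic_subset_Iic.mpr hz.le))
        (Set.toFinite _)
      rw [hXp.1] at this
      exact this
    have h2 : (A.colour '' Set.Iic z).ncard ≠ (i : ℕ) + 1 := by
      intro he
      exact absurd (hXp.2 he) (not_le.mpr hz)
    omega
  have F2 : ∀ z, yA j < z → (A.colour '' Set.Ici z).ncard ≤ (j : ℕ) := by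
    intro z hz
    have h1 : (A.colour '' Set.Ici z).ncard ≤ (j : ℕ) + 1 := by
      have := Set.ncard_le_ncard (Set.image_mono (f := A.colour) (Set.Ici_subset_Ici.mpr hz.le))
        (Set.toFinite _)
      rw [hYp.1] at this
      exact this
    have h2 : (A.colour '' Set.Ici z).ncard ≠ (j : ℕ) + 1 := by
      intro he
      exact absurd (hYp.2 he) (not_le.mpr hz)
    omega
  have bound1 : (A.colour '' Set.Iio (xA i)).ncard ≤ (i : ℕ) := by
    rcases Set.eq_empty_or_nonempty (Set.Iio (xA i)) with he | hne
    · simp [he]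
    · obtain ⟨z, hz, hmax⟩ := Set.exists_max_image (Set.Iio (xA i)) id (Set.toFinite _) hne
      have hsub : Set.Iio (xA i) ⊆ Set.Iic z := fun a ha => hmax a ha
      calc (A.colour '' Set.Iio (xA i)).ncard
          ≤ (A.colour '' Set.Iic z).ncard :=
            Set.ncard_le_ncard (Set.image_mono (f := A.colour) hsub) (Set.toFinite _)
        _ ≤ (i : ℕ) := F1 z hz
  have bound2 : (A.colour '' Set.Ici (xA i)).ncard ≤ (j : ℕ) := F2 (xA i) hlt
  have hcover : Set.Iio (xA i) ∪ Set.Ici (xA i) = Set.univ := by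
    ext a; simp [lt_or_ge a (xA i)]
  have hall : (A.colour '' Set.univ).ncard = m := by
    rw [Set.image_univ, Set.range_eq_univ.mpr hsurj, Set.ncard_univ,
      Nat.card_eq_fintype_card, hcard]
  have : m ≤ (i : ℕ) + (j : ℕ) := by
    calc m = (A.colour '' Set.univ).ncard := hall.symm
      _ = (A.colour '' (Set.Iio (xA i) ∪ Set.Ici (xA i))).ncard := by rw [hcover]
      _ = (A.colour '' Set.Iio (xA i) ∪ A.colour '' Set.Ici (xA i)).ncard := by
          rw [Set.image_union]
      _ ≤ (A.colour '' Set.Iio (xA i)).ncard + (A.colour '' Set.Ici (xA i)).ncard :=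
          Set.ncard_union_le _ _
      _ ≤ (i : ℕ) + (j : ℕ) := Nat.add_le_add bound1 bound2
  omega

/-- a `T`-configuration is associated with some `m`-coloured finite linear order
iff `i + j ≤ m + 1 → x_i ≤ y_j` (1-based; here indices are 0-based). -/
theorem stmt4 (m : ℕ) (hm : 0 < m) (T : TConfig m) :
    (∃ (C : Type) (_ : Fintype C), Fintype.card C = m ∧
      ∃ A : CLO C, Finite A.carrier ∧ Function.Surjective A.colour ∧ T.Associated A) ↔
    (∀ i j : Fin m, ((i : ℕ) + 1) + ((j : ℕ) + 1) ≤ m + 1 → T.x i ≤ T.y j) := by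
  constructor
  · exact stmt4_forward m T
  · intro H
    obtain ⟨A, hfin, hsurj, hassoc⟩ := Stmt4Aux.exists_assoc T hm H
    exact ⟨Fin m, inferInstance, Fintype.card_fin m, A, hfin, hsurj, hassoc⟩
end

section
/- In the associated T-configuration of a finite m-coloured linear order A, for each i the points y_{k+1},...,y_m where k is greatest with x_i ≤ y_k are distinctly coloured points lying strictly below x_i; consequently m + 1 ≤ i + k, i.e., at most i values of j satisfy y_j < x_{i+1} when i < m. -/
/-- in the associated `T`-configuration of a finite `m`-coloured linear order,
for each `i`, if `k` is greatest with `x_i ≤ y_k`, then the points `y_l` for `l > k` are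
distinctly coloured points strictly below `x_i`, whence `m + 1 ≤ i + k`; consequently at most
`i` values of `j` satisfy `y_j < x_{i+1}` (all 1-based; indices below are 0-based). -/
theorem stmt5 {C : Type} (m : ℕ) (A : CLO C) [Finite A.carrier]
    (hsurj : Function.Surjective A.colour) (hcard : Nat.card C = m)
    (x y : Fin m → A.carrier)
    (hx : ∀ i : Fin m, A.IsXPoint ((i : ℕ) + 1) (x i))
    (hy : ∀ j : Fin m, A.IsYPoint ((j : ℕ) + 1) (y j)) :
    (∀ i k : Fin m, IsGreatest {l : Fin m | x i ≤ y l} k →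
      ((∀ l : Fin m, k < l → y l < x i) ∧
        Set.InjOn (fun l => A.colour (y l)) {l : Fin m | k < l} ∧
        m + 1 ≤ ((i : ℕ) + 1) + ((k : ℕ) + 1))) ∧
    (∀ i : Fin m, {j : Fin m | y j < x i}.ncard ≤ (i : ℕ)) := by
  classical
  have hfin : ∀ s : Set A.carrier, s.Finite := fun s => Set.toFinite s
  have himg : ∀ s : Set A.carrier, (A.colour '' s).Finite := fun s => (hfin s).image _
  have yanti : ∀ j j' : Fin m, j < j' → y j' < y j := by
    intro j j' hjj'
    by_contra h
    push_neg at h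
    have hsub : Set.Ici (y j') ⊆ Set.Ici (y j) := Set.Ici_subset_Ici.2 h
    have hle := Set.ncard_le_ncard (Set.image_mono (f := A.colour) hsub) (himg _)
    rw [(hy j).1, (hy j').1] at hle
    have : (j : ℕ) < j' := hjj'
    omega
  have yinj : ∀ j j' : Fin m, j < j' → A.colour (y j) ≠ A.colour (y j') := by
    intro j j' hjj' hcol
    have hlt := yanti j j' hjj'
    obtain ⟨z, hz, hzmin⟩ := Set.exists_min_image (Set.Ioi (y j')) id (hfin _) ⟨y j, hlt⟩
    simp only [Set.mem_Ioi] at hz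
    have hIoi : Set.Ioi (y j') = Set.Ici z := by
      ext w
      constructor
      · exact fun hw => hzmin w hw
      · exact fun hw => lt_of_lt_of_le hz hw
    have hz_not : (A.colour '' Set.Ici z).ncard ≠ (j' : ℕ) + 1 := by
      intro hzeq
      exact absurd ((hy j').2 hzeq) (not_le.2 hz)
    have hmem : A.colour (y j') ∈ A.colour '' Set.Ici z := by
      rw [← hIoi]
      exact ⟨y j, hlt, hcol⟩
    have hIci : Set.Ici (y j') = insert (y j') (Set.Ici z) := by
      rw [← hIoi]
      ext w
      simp only [Set.mem_Ici, Set.mem_insert_iff, Set.mem_Ioi]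
      constructor
      · intro hw
        rcases eq_or_lt_of_le hw with h | h
        · exact Or.inl h.symm
        · exact Or.inr h
      · rintro (rfl | h)
        · exact le_refl _
        · exact h.le
    have heq : A.colour '' Set.Ici (y j') = A.colour '' Set.Ici z := by
      rw [hIci, Set.image_insert_eq, Set.insert_eq_self.2 hmem]
    have h2 := (hy j').1
    rw [Set.mem_setOf_eq] at h2
    rw [heq] at h2
    exact hz_not h2
  have yinjOn : ∀ s : Set (Fin m), Set.InjOn (fun l => A.colour (y l)) s := by
    intro s a _ b _ hab
    by_contra hne
    rcases lt_or_gt_of_ne hne with h | h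
    · exact yinj a b h hab
    · exact yinj b a h hab.symm
  have hbelow : ∀ (i : Fin m) (z : A.carrier), z < x i →
      (A.colour '' Set.Iic z).ncard ≤ (i : ℕ) := by
    intro i z hz
    have hne : (A.colour '' Set.Iic z).ncard ≠ (i : ℕ) + 1 := fun h =>
      absurd ((hx i).2 h) (not_le.2 hz)
    have hle : (A.colour '' Set.Iic z).ncard ≤ (i : ℕ) + 1 := by
      have := Set.ncard_le_ncard
        (Set.image_mono (f := A.colour) (Set.Iic_subset_Iic.2 hz.le)) (himg _)
      rwa [(hx i).1] at this
    omega
  constructor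
  · intro i k hk
    have h1 : ∀ l : Fin m, k < l → y l < x i := by
      intro l hl
      by_contra h
      push_neg at h
      exact absurd (hk.2 h) (not_le.2 hl)
    refine ⟨h1, yinjOn _, ?_⟩
    by_cases hk1 : (k : ℕ) + 1 < m
    · set k' : Fin m := ⟨(k : ℕ) + 1, hk1⟩ with hk'def
      have hk'lt : y k' < x i := h1 k' (by simp [hk'def, Fin.lt_def])
      have hsub : (fun l => A.colour (y l)) '' {l : Fin m | k < l} ⊆
          A.colour '' Set.Iic (y k') := by
        rintro c ⟨l, hl, rfl⟩
        refine ⟨y l, ?_, rfl⟩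
        have hle : k' ≤ l := by
          rw [Fin.le_def]
          exact hl
        rcases eq_or_lt_of_le hle with h | h
        · rw [← h]; exact Set.self_mem_Iic
        · exact (yanti _ _ h).le
      have h2 := Set.ncard_le_ncard hsub (himg _)
      have h3 := Set.ncard_image_of_injOn (yinjOn {l : Fin m | k < l})
      have h4 := hbelow i (y k') hk'lt
      have h5 : {l : Fin m | k < l}.ncard = m - 1 - (k : ℕ) := by
        have heq2 : {l : Fin m | k < l} = ↑(Finset.Ioi k) := by
          ext l; simp
        rw [heq2, Set.ncard_coe_finset, Fin.card_Ioi]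
      omega
    · have := k.isLt
      omega
  · intro i
    by_cases hS : {j : Fin m | y j < x i}.Nonempty
    · obtain ⟨j0, hj0, hj0min⟩ := Set.exists_min_image _ id (Set.toFinite _) hS
      rw [Set.mem_setOf_eq] at hj0
      have hsub : (fun j => A.colour (y j)) '' {j : Fin m | y j < x i} ⊆
          A.colour '' Set.Iic (y j0) := by
        rintro c ⟨j, hj, rfl⟩
        refine ⟨y j, ?_, rfl⟩
        have hle : j0 ≤ j := hj0min j hj
        rcases eq_or_lt_of_le hle with h | h
        · rw [← h]; exact Set.self_mem_Iic
        · exact (yanti _ _ h).le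
      have h2 := Set.ncard_le_ncard hsub (himg _)
      have h3 := Set.ncard_image_of_injOn (yinjOn {j : Fin m | y j < x i})
      have h4 := hbelow i (y j0) hj0
      omega
    · rw [Set.not_nonempty_iff_eq_empty.1 hS]
      simp
end

section
/- Given a T-configuration T = {x_1 < ... < x_m} ∪ {y_1 > ... > y_m} satisfying i + j ≤ m+1 ⇒ x_i ≤ y_j, there exists a colouring F of T with m colours such that for each i, x_i is the least point x with |{F(z) : z ≤ x}| = i and y_i is the greatest point y with |{F(z) : z ≥ y}| = i. -/
open Finset in
lemma exists_perm_aux {α : Type} [LinearOrder α] {m : ℕ} (x y : Fin m → α)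
    (hx : StrictMono x) (hy : StrictAnti y)
    (h : ∀ i j : Fin m, (i : ℕ) + 1 + ((j : ℕ) + 1) ≤ m + 1 → x i ≤ y j) :
    ∃ f : Fin m → Fin m, Function.Bijective f ∧ (∀ i, x i ≤ y (f i)) ∧
      ∀ i j, x i = y j → f i = j := by
  classical
  set t : Fin m → Finset (Fin m) :=
    fun i => univ.filter (fun j => x i ≤ y j ∧ ∀ i', x i' = y j → i' = i) with ht
  have hall : ∀ s : Finset (Fin m), s.card ≤ (s.biUnion t).card := by
    intro s
    rcases s.eq_empty_or_nonempty with rfl | hs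
    · simp
    set i0 := s.min' hs with hi0
    have hi0s : i0 ∈ s := s.min'_mem hs
    set U : Finset (Fin m) :=
      univ.filter (fun j => x i0 ≤ y j ∧ ∀ i', x i' = y j → i' ∈ s) with hU
    have hUsub : U ⊆ s.biUnion t := by
      intro j hj
      simp only [hU, mem_filter, mem_univ, true_and] at hj
      by_cases hex : ∃ i', x i' = y j
      · obtain ⟨i', hi'⟩ := hex
        refine mem_biUnion.2 ⟨i', hj.2 i' hi', ?_⟩
        simp only [ht, mem_filter, mem_univ, true_and]
        exact ⟨hi'.le, fun i'' h'' => hx.injective (h''.trans hi'.symm)⟩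
      · refine mem_biUnion.2 ⟨i0, hi0s, ?_⟩
        simp only [ht, mem_filter, mem_univ, true_and]
        exact ⟨hj.1, fun i'' h'' => absurd ⟨i'', h''⟩ hex⟩
    have hcard : s.card ≤ U.card := by
      set g : Fin m → Fin m := fun j =>
        if h2 : ∃ i', x i' = y j ∧ i' ∉ s ∧ x i0 ≤ y j then h2.choose
        else ⟨(j : ℕ) - (m - (i0 : ℕ)), lt_of_le_of_lt (Nat.sub_le _ _) j.isLt⟩ with hg
      -- key fact for the "else" branch on Uᶜ
      have key : ∀ j : Fin m, j ∈ Uᶜ → ¬(∃ i', x i' = y j ∧ i' ∉ s ∧ x i0 ≤ y j) →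
          ¬(x i0 ≤ y j) ∧ m - (i0 : ℕ) ≤ (j : ℕ) ∧ (i0 : ℕ) ≠ 0 := by
        intro j hj h2
        have hjU : j ∉ U := mem_compl.1 hj
        simp only [hU, mem_filter, mem_univ, true_and, not_and, not_forall] at hjU
        have hlt : ¬(x i0 ≤ y j) := by
          intro hle0
          obtain ⟨i', hi', hi's⟩ := hjU hle0
          exact h2 ⟨i', hi', hi's, hle0⟩
        have hge : m - (i0 : ℕ) ≤ (j : ℕ) := by
          by_contra hc
          push_neg at hc
          exact hlt (h i0 j (by omega))
        refine ⟨hlt, hge, ?_⟩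
        intro h0
        exact hlt (h i0 j (by omega))
      have hmaps : ∀ j ∈ Uᶜ, g j ∈ sᶜ := by
        intro j hj
        by_cases h2 : ∃ i', x i' = y j ∧ i' ∉ s ∧ x i0 ≤ y j
        · simp only [hg, dif_pos h2]
          exact mem_compl.2 h2.choose_spec.2.1
        · obtain ⟨hlt, hge, h0⟩ := key j hj h2
          simp only [hg, dif_neg h2]
          refine mem_compl.2 fun hmem => ?_
          have := s.min'_le _ hmem
          rw [Fin.le_def] at this
          simp only at this
          have hj' : (j : ℕ) < m := j.isLt
          have hi0' : (i0 : ℕ) < m := i0.isLt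
          omega
      have hinj : Set.InjOn g ↑(Uᶜ) := by
        intro j1 hj1 j2 hj2 heq
        simp only [Finset.mem_coe] at hj1 hj2
        by_cases h2a : ∃ i', x i' = y j1 ∧ i' ∉ s ∧ x i0 ≤ y j1 <;>
          by_cases h2b : ∃ i', x i' = y j2 ∧ i' ∉ s ∧ x i0 ≤ y j2
        · have s1 := h2a.choose_spec
          have s2 := h2b.choose_spec
          simp only [hg, dif_pos h2a, dif_pos h2b] at heq
          apply hy.injective
          rw [← s1.1, ← s2.1, heq]
        · -- j1 in case2, j2 in case1
          obtain ⟨hlt2, hge2, h02⟩ := key j2 hj2 h2b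
          have s1 := h2a.choose_spec
          simp only [hg, dif_pos h2a, dif_neg h2b] at heq
          have hle1 : i0 ≤ h2a.choose := hx.le_iff_le.1 (le_trans s1.2.2 s1.1.ge)
          rw [heq, Fin.le_def] at hle1
          simp only at hle1
          have := j2.isLt
          omega
        · obtain ⟨hlt1, hge1, h01⟩ := key j1 hj1 h2a
          have s2 := h2b.choose_spec
          simp only [hg, dif_neg h2a, dif_pos h2b] at heq
          have hle1 : i0 ≤ h2b.choose := hx.le_iff_le.1 (le_trans s2.2.2 s2.1.ge)
          rw [← heq, Fin.le_def] at hle1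
          simp only at hle1
          have := j1.isLt
          omega
        · obtain ⟨_, hge1, _⟩ := key j1 hj1 h2a
          obtain ⟨_, hge2, _⟩ := key j2 hj2 h2b
          simp only [hg, dif_neg h2a, dif_neg h2b, Fin.mk.injEq] at heq
          have := j1.isLt; have := j2.isLt
          exact Fin.ext (by omega)
      have hUc : (Uᶜ).card ≤ (sᶜ).card := Finset.card_le_card_of_injOn g hmaps hinj
      have h1 : (Uᶜ).card = m - U.card := by rw [card_compl, Fintype.card_fin]
      have h2 : (sᶜ).card = m - s.card := by rw [card_compl, Fintype.card_fin]
      have h3 : U.card ≤ m := by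
        simpa using card_le_card (subset_univ U)
      have h4 : s.card ≤ m := by
        simpa using card_le_card (subset_univ s)
      omega
    exact hcard.trans (card_le_card hUsub)
  obtain ⟨f, hfinj, hft⟩ := (Finset.all_card_le_biUnion_card_iff_exists_injective t).1 hall
  have hbij : Function.Bijective f := ⟨hfinj, Finite.surjective_of_injective hfinj⟩
  have hspec : ∀ i, x i ≤ y (f i) ∧ ∀ i', x i' = y (f i) → i' = i := by
    intro i
    have := hft i
    simpa only [ht, mem_filter, mem_univ, true_and] using this
  refine ⟨f, hbij, fun i => (hspec i).1, fun i j hij => ?_⟩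
  obtain ⟨i'', hi''⟩ := hbij.2 j
  have h5 := (hspec i'').2
  rw [hi''] at h5
  have : i = i'' := h5 i hij
  rw [this, hi'']

lemma lower_mem_of_ncard {m : ℕ} (S : Set (Fin m)) (i : Fin m)
    (hS : ∀ a b : Fin m, a ≤ b → b ∈ S → a ∈ S) (hcard : S.ncard = (i : ℕ) + 1) : i ∈ S := by
  by_contra hi
  have hsub : S ⊆ Set.Iio i := by
    intro a ha
    by_contra hlt
    exact hi (hS i a (le_of_not_gt hlt) ha)
  have hle := Set.ncard_le_ncard hsub (Set.toFinite _)
  rw [← Finset.coe_Iio, Set.ncard_coe_finset, Fin.card_Iio] at hle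
  omega

/-- a `T`-configuration satisfying `i + j ≤ m + 1 → x_i ≤ y_j` admits a
surjective colouring with `m` colours for which `x_i` is the least point with `i` colours
weakly to its left and `y_i` the greatest point with `i` colours weakly to its right. -/
theorem stmt6 (m : ℕ) (T : TConfig m)
    (h : ∀ i j : Fin m, ((i : ℕ) + 1) + ((j : ℕ) + 1) ≤ m + 1 → T.x i ≤ T.y j) :
    ∃ F : T.carrier → Fin m, Function.Surjective F ∧
      ∀ i : Fin m,
        ({ carrier := T.carrier, colour := F } : CLO (Fin m)).IsXPoint ((i : ℕ) + 1) (T.x i) ∧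
        ({ carrier := T.carrier, colour := F } : CLO (Fin m)).IsYPoint ((i : ℕ) + 1) (T.y i) := by
  classical
  obtain ⟨f, hbij, hle, hforce⟩ := exists_perm_aux T.x T.y T.x_mono T.y_anti h
  set e := Equiv.ofBijective f hbij with he
  set F : T.carrier → Fin m := fun t =>
    if h1 : ∃ i, t = T.x i then h1.choose
    else e.symm ((T.cover t).resolve_left h1).choose with hF
  have hFx : ∀ i, F (T.x i) = i := by
    intro i
    have h1 : ∃ i', T.x i = T.x i' := ⟨i, rfl⟩
    simp only [hF, dif_pos h1]
    exact (T.x_mono.injective h1.choose_spec).symm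
  have hFy : ∀ j, F (T.y j) = e.symm j := by
    intro j
    by_cases h1 : ∃ i, T.y j = T.x i
    · obtain ⟨i, hi⟩ := h1
      rw [hi, hFx]
      have hfij : f i = j := hforce i j hi.symm
      rw [← hfij]
      exact (e.symm_apply_apply i).symm
    · simp only [hF, dif_neg h1]
      congr 1
      exact (T.y_anti.injective ((T.cover (T.y j)).resolve_left h1).choose_spec).symm
  have hef : ∀ c, e c = f c := fun c => rfl
  have himgIic : ∀ t, F '' Set.Iic t = {c : Fin m | T.x c ≤ t} := by
    intro t; ext c; constructor
    · rintro ⟨z, hz, rfl⟩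
      rcases T.cover z with ⟨i, rfl⟩ | ⟨j, rfl⟩
      · rw [hFx]; exact hz
      · rw [hFy]
        have h1 : T.x (e.symm j) ≤ T.y (f (e.symm j)) := hle _
        rw [← hef, e.apply_symm_apply] at h1
        exact le_trans h1 hz
    · intro hc; exact ⟨T.x c, hc, hFx c⟩
  have himgIci : ∀ t, F '' Set.Ici t = e.symm '' {j : Fin m | t ≤ T.y j} := by
    intro t; ext c; constructor
    · rintro ⟨z, hz, rfl⟩
      rcases T.cover z with ⟨i, rfl⟩ | ⟨j, rfl⟩
      · rw [hFx]
        refine ⟨f i, le_trans hz (hle i), ?_⟩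
        rw [← hef, e.symm_apply_apply]
      · rw [hFy]; exact ⟨j, hz, rfl⟩
    · rintro ⟨j, hj, rfl⟩; exact ⟨T.y j, hj, hFy j⟩
  refine ⟨F, fun c => ⟨T.x c, hFx c⟩, fun i => ⟨?_, ?_⟩⟩
  · constructor
    · show (F '' Set.Iic (T.x i)).ncard = (i : ℕ) + 1
      rw [himgIic]
      have : {c : Fin m | T.x c ≤ T.x i} = Set.Iic i := by
        ext c; exact T.x_mono.le_iff_le
      rw [this, ← Finset.coe_Iic, Set.ncard_coe_finset, Fin.card_Iic]
    · intro z hz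
      have hz' : (F '' Set.Iic z).ncard = (i : ℕ) + 1 := hz
      rw [himgIic] at hz'
      exact lower_mem_of_ncard _ i
        (fun a b hab hb => le_trans (T.x_mono.monotone hab) hb) hz'
  · constructor
    · show (F '' Set.Ici (T.y i)).ncard = (i : ℕ) + 1
      rw [himgIci, Set.ncard_image_of_injective _ e.symm.injective]
      have : {j : Fin m | T.y i ≤ T.y j} = Set.Iic i := by
        ext j; exact T.y_anti.le_iff_ge
      rw [this, ← Finset.coe_Iic, Set.ncard_coe_finset, Fin.card_Iic]
    · intro z hz
      have hz' : (F '' Set.Ici z).ncard = (i : ℕ) + 1 := hz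
      rw [himgIci, Set.ncard_image_of_injective _ e.symm.injective] at hz'
      exact lower_mem_of_ncard _ i
        (fun a b hab hb => le_trans hb (T.y_anti.antitone hab)) hz'
end

section
/- Two finite m-coloured linear orders are 2-equivalent if and only if they have the same associated coloured T-configuration T and the same gap-colour function g, i.e., for each pair of consecutive points u < v of T, the set of colours occurring strictly between u and v is the same in both orders. -/
set_option linter.unusedSectionVars false

namespace Stmt7Aux

open Set OrderDual

variable {C : Type} [Fintype C] {m : ℕ}

/-- x-point hypothesis pack. -/
abbrev XP {α : Type} [LinearOrder α] (F : α → C) (x : Fin m → α) : Prop :=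
  ∀ i : Fin m, IsLeast {z | (F '' Set.Iic z).ncard = (i : ℕ) + 1} (x i)

/-- y-point hypothesis pack. -/
abbrev YP {α : Type} [LinearOrder α] (F : α → C) (y : Fin m → α) : Prop :=
  ∀ j : Fin m, IsGreatest {z | (F '' Set.Ici z).ncard = (j : ℕ) + 1} (y j)

section Primal

variable {α : Type} [LinearOrder α] [Finite α]

lemma ncard_le_m (hm : Fintype.card C = m) (s : Set C) : s.ncard ≤ m := by
  simpa [Set.ncard_univ, Nat.card_eq_fintype_card, hm] using
    Set.ncard_le_ncard (Set.subset_univ s) Set.finite_univ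

lemma one_le_nc (F : α → C) (z : α) : 1 ≤ (F '' Set.Iic z).ncard := by
  have h : (F '' Set.Iic z).Nonempty := ⟨F z, z, le_refl z, rfl⟩
  exact (Set.ncard_pos (Set.toFinite _)).mpr h

lemma nc_lt (hm : Fintype.card C = m) (F : α → C) (z : α) :
    (F '' Set.Iic z).ncard - 1 < m :=
  lt_of_lt_of_le (Nat.sub_lt (one_le_nc F z) one_pos) (ncard_le_m hm _)

lemma hx_card (F : α → C) (x : Fin m → α) (hx : XP F x) (i : Fin m) :
    (F '' Set.Iic (x i)).ncard = (i : ℕ) + 1 := (hx i).1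

lemma x_le (hm : Fintype.card C = m) (F : α → C) (x : Fin m → α) (hx : XP F x) (z : α) :
    x ⟨(F '' Set.Iic z).ncard - 1, nc_lt hm F z⟩ ≤ z := by
  apply (hx _).2
  show (F '' Set.Iic z).ncard = ((F '' Set.Iic z).ncard - 1) + 1
  have := one_le_nc F z
  omega

lemma w_eq (hm : Fintype.card C = m) (F : α → C) (x : Fin m → α) (hx : XP F x) (z : α) :
    F '' Set.Iic z = F '' Set.Iic (x ⟨(F '' Set.Iic z).ncard - 1, nc_lt hm F z⟩) := by
  have hsub : F '' Set.Iic (x ⟨(F '' Set.Iic z).ncard - 1, nc_lt hm F z⟩) ⊆ F '' Set.Iic z :=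
    Set.image_mono (Set.Iic_subset_Iic.mpr (x_le hm F x hx z))
  have hcard : (F '' Set.Iic z).ncard ≤
      (F '' Set.Iic (x ⟨(F '' Set.Iic z).ncard - 1, nc_lt hm F z⟩)).ncard := by
    rw [hx_card F x hx]
    show (F '' Set.Iic z).ncard ≤ ((F '' Set.Iic z).ncard - 1) + 1
    have := one_le_nc F z
    omega
  exact (Set.eq_of_subset_of_ncard_le hsub hcard (Set.toFinite _)).symm

lemma x_mono (F : α → C) (x : Fin m → α) (hx : XP F x) : StrictMono x := by
  intro i j hij
  rcases lt_or_ge (x i) (x j) with h | h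
  · exact h
  · exfalso
    have hle := Set.ncard_le_ncard (Set.image_mono (f := F) (Set.Iic_subset_Iic.mpr h)) (Set.toFinite _)
    rw [hx_card F x hx, hx_card F x hx] at hle
    have : (i : ℕ) < (j : ℕ) := hij
    omega

lemma x_bot (hm : Fintype.card C = m) (F : α → C) (x : Fin m → α) (hx : XP F x)
    (h0 : 0 < m) (a : α) : x ⟨0, h0⟩ ≤ a :=
  le_trans ((x_mono F x hx).monotone (by simp : (⟨0, h0⟩ : Fin m) ≤ ⟨_, nc_lt hm F a⟩))
    (x_le hm F x hx a)

lemma S_sub (hm : Fintype.card C = m) (F : α → C) (x : Fin m → α) (hx : XP F x) :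
    ∀ N (j : Fin m), (j : ℕ) ≤ N → F '' Set.Iic (x j) ⊆ F '' (x '' {k | k ≤ j}) := by
  intro N
  induction N with
  | zero =>
    intro j hj c hc
    obtain ⟨z, hz, rfl⟩ := hc
    have hnle : (F '' Set.Iic z).ncard ≤ (j : ℕ) + 1 := by
      have h := Set.ncard_le_ncard (Set.image_mono (f := F) (Set.Iic_subset_Iic.mpr hz))
        (Set.toFinite _)
      rwa [hx_card F x hx] at h
    have h1 := one_le_nc F z
    have hkj : (⟨(F '' Set.Iic z).ncard - 1, nc_lt hm F z⟩ : Fin m) = j := by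
      apply Fin.ext; simp only [Fin.val_mk]; omega
    have hle : x j ≤ z := by rw [← hkj]; exact x_le hm F x hx z
    have hzeq : z = x j := le_antisymm hz hle
    exact ⟨x j, ⟨j, le_refl j, rfl⟩, by rw [hzeq]⟩
  | succ N IH =>
    intro j hj c hc
    obtain ⟨z, hz, rfl⟩ := hc
    have hnle : (F '' Set.Iic z).ncard ≤ (j : ℕ) + 1 := by
      have h := Set.ncard_le_ncard (Set.image_mono (f := F) (Set.Iic_subset_Iic.mpr hz))
        (Set.toFinite _)
      rwa [hx_card F x hx] at h
    have h1 := one_le_nc F z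
    rcases Nat.lt_or_ge ((F '' Set.Iic z).ncard - 1) (j : ℕ) with hcase | hcase
    · set k : Fin m := ⟨(F '' Set.Iic z).ncard - 1, nc_lt hm F z⟩ with hk
      have hmem : F z ∈ F '' Set.Iic (x k) := by
        rw [← w_eq hm F x hx z]; exact ⟨z, le_refl z, rfl⟩
      have hsub2 := IH k (by simp only [hk, Fin.val_mk]; omega) hmem
      obtain ⟨w, ⟨l, hl, rfl⟩, hw⟩ := hsub2
      exact ⟨x l, ⟨l, le_trans hl (le_of_lt hcase), rfl⟩, hw⟩
    · have hkj : (⟨(F '' Set.Iic z).ncard - 1, nc_lt hm F z⟩ : Fin m) = j := by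
        apply Fin.ext; simp only [Fin.val_mk]; omega
      have hle : x j ≤ z := by rw [← hkj]; exact x_le hm F x hx z
      have hzeq : z = x j := le_antisymm hz hle
      exact ⟨x j, ⟨j, le_refl j, rfl⟩, by rw [hzeq]⟩

lemma S_eq (hm : Fintype.card C = m) (F : α → C) (x : Fin m → α) (hx : XP F x) (j : Fin m) :
    F '' Set.Iic (x j) = F '' (x '' {k | k ≤ j}) := by
  apply Set.Subset.antisymm (S_sub hm F x hx (j : ℕ) j (le_refl _))
  rintro c ⟨w, ⟨k, hk, rfl⟩, rfl⟩
  exact ⟨x k, (x_mono F x hx).monotone hk, rfl⟩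

lemma Lchar (hm : Fintype.card C = m) (F : α → C) (x : Fin m → α) (hx : XP F x) (a : α) :
    F '' Set.Iio a = F '' (x '' {k | x k < a}) := by
  apply Set.Subset.antisymm
  · rintro c ⟨z, hz, rfl⟩
    set k : Fin m := ⟨(F '' Set.Iic z).ncard - 1, nc_lt hm F z⟩ with hk
    have hmem : F z ∈ F '' Set.Iic (x k) := by
      rw [← w_eq hm F x hx z]; exact ⟨z, le_refl z, rfl⟩
    rw [S_eq hm F x hx k] at hmem
    obtain ⟨w, ⟨l, hl, rfl⟩, hw⟩ := hmem
    have hxl : x l < a := lt_of_le_of_lt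
      (le_trans ((x_mono F x hx).monotone hl) (x_le hm F x hx z)) hz
    exact ⟨x l, ⟨l, hxl, rfl⟩, hw⟩
  · rintro c ⟨w, ⟨k, hk, rfl⟩, rfl⟩
    exact ⟨x k, hk, rfl⟩

lemma card_Iio_fin (k : Fin m) : ({l : Fin m | l < k} : Set (Fin m)).ncard = (k : ℕ) := by
  have h1 : ({l : Fin m | l < k} : Set (Fin m)) = ↑(Finset.Iio k) := by
    ext l; simp
  rw [h1, Set.ncard_coe_finset, Fin.card_Iio]

lemma dist_x (hm : Fintype.card C = m) (F : α → C) (x : Fin m → α) (hx : XP F x) (k : Fin m) :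
    F (x k) ∉ F '' (x '' {l | l < k}) := by
  intro hmem
  have h1 : F '' (x '' {l | l ≤ k}) = F '' (x '' {l | l < k}) := by
    apply Set.Subset.antisymm
    · rintro c ⟨w, ⟨l, hl, rfl⟩, rfl⟩
      have hl' : l ≤ k := hl
      rcases lt_or_eq_of_le hl' with h | h
      · exact ⟨x l, ⟨l, h, rfl⟩, rfl⟩
      · rw [h]; exact hmem
    · exact Set.image_mono (Set.image_mono fun l hl => show l ≤ k from le_of_lt hl)
  have h2 : (k : ℕ) + 1 = (F '' (x '' {l | l < k})).ncard := by
    rw [← h1, ← S_eq hm F x hx k, hx_card F x hx]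
  have h3 : (F '' (x '' {l | l < k})).ncard ≤ (k : ℕ) := by
    calc (F '' (x '' {l | l < k})).ncard ≤ (x '' {l | l < k}).ncard :=
          Set.ncard_image_le (Set.toFinite _)
      _ ≤ ({l : Fin m | l < k}).ncard := Set.ncard_image_le (Set.toFinite _)
      _ = (k : ℕ) := card_Iio_fin k
  omega

lemma colour_inj (hm : Fintype.card C = m) (F : α → C) (x : Fin m → α) (hx : XP F x)
    {k l : Fin m} (h : F (x k) = F (x l)) : k = l := by
  rcases lt_trichotomy k l with hkl | hkl | hkl
  · exact absurd (⟨x k, ⟨k, hkl, rfl⟩, h⟩ : F (x l) ∈ F '' (x '' {l' | l' < l}))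
      (dist_x hm F x hx l)
  · exact hkl
  · exact absurd (⟨x l, ⟨l, hkl, rfl⟩, h.symm⟩ : F (x k) ∈ F '' (x '' {l' | l' < k}))
      (dist_x hm F x hx k)

lemma not_mem_L (hm : Fintype.card C = m) (F : α → C) (x : Fin m → α) (hx : XP F x)
    (i : Fin m) : F (x i) ∉ F '' Set.Iio (x i) := by
  rw [Lchar hm F x hx]
  have hset : {k | x k < x i} = {l : Fin m | l < i} :=
    Set.ext fun k => (x_mono F x hx).lt_iff_lt
  rw [hset]
  exact dist_x hm F x hx i

lemma cardL (hm : Fintype.card C = m) (F : α → C) (x : Fin m → α) (hx : XP F x) (i : Fin m) :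
    (F '' Set.Iio (x i)).ncard = (i : ℕ) := by
  have h2 : F '' Set.Iic (x i) = insert (F (x i)) (F '' Set.Iio (x i)) := by
    rw [← Set.Iio_insert, Set.image_insert_eq]
  have h4 := hx_card F x hx i
  rw [h2, Set.ncard_insert_of_notMem (not_mem_L hm F x hx i) (Set.toFinite _)] at h4
  omega

lemma match_x {β : Type} [LinearOrder β] [Finite β]
    (hm : Fintype.card C = m) (F : α → C) (x : Fin m → α) (hx : XP F x)
    (G : β → C) (u : Fin m → β) (hu : XP G u) (i : Fin m) (b : β)
    (hL : F '' Set.Iio (x i) = G '' Set.Iio b) (hc : F (x i) = G b) : b = u i := by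
  have h1 : G '' Set.Iic b = F '' Set.Iic (x i) := by
    rw [← Set.Iio_insert, ← Set.Iio_insert, Set.image_insert_eq, Set.image_insert_eq, hL, hc]
  have h2 : (G '' Set.Iic b).ncard = (i : ℕ) + 1 := by
    rw [h1]; exact hx_card F x hx i
  have h3 : u i ≤ b := (hu i).2 h2
  rcases h3.lt_or_eq with h4 | h4
  · exfalso
    have h5 : G '' Set.Iic (u i) ⊆ G '' Set.Iio b :=
      Set.image_mono (fun z hz => lt_of_le_of_lt hz h4)
    have h6 := Set.ncard_le_ncard h5 (Set.toFinite _)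
    rw [hx_card G u hu i, ← hL, cardL hm F x hx i] at h6
    omega
  · exact h4.symm

end Primal

section DualDefs

variable {α : Type} [LinearOrder α]

/-- the colouring viewed on the dual order -/
def dF (F : α → C) : αᵒᵈ → C := fun z => F (OrderDual.ofDual z)

/-- y-points viewed in the dual order -/
def dy (y : Fin m → α) : Fin m → αᵒᵈ := fun j => OrderDual.toDual (y j)

lemma dimage_Iic (F : α → C) (w : αᵒᵈ) :
    dF F '' Set.Iic w = F '' Set.Ici (OrderDual.ofDual w) := by
  ext c
  exact ⟨fun ⟨z, hz, hc⟩ => ⟨OrderDual.ofDual z, hz, hc⟩,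
    fun ⟨z, hz, hc⟩ => ⟨OrderDual.toDual z, hz, hc⟩⟩

lemma dimage_Iio (F : α → C) (w : αᵒᵈ) :
    dF F '' Set.Iio w = F '' Set.Ioi (OrderDual.ofDual w) := by
  ext c
  exact ⟨fun ⟨z, hz, hc⟩ => ⟨OrderDual.ofDual z, hz, hc⟩,
    fun ⟨z, hz, hc⟩ => ⟨OrderDual.toDual z, hz, hc⟩⟩

lemma dimage_set (F : α → C) (y : Fin m → α) (S : Set (Fin m)) :
    dF F '' (dy y '' S) = F '' (y '' S) := by
  ext c
  constructor
  · rintro ⟨w, ⟨k, hk, rfl⟩, rfl⟩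
    exact ⟨y k, ⟨k, hk, rfl⟩, rfl⟩
  · rintro ⟨w, ⟨k, hk, rfl⟩, rfl⟩
    exact ⟨dy y k, ⟨k, hk, rfl⟩, rfl⟩

lemma dual_hx (F : α → C) (y : Fin m → α) (hy : YP F y) : XP (dF F) (dy y) := by
  intro j
  constructor
  · show (dF F '' Set.Iic (dy y j)).ncard = (j : ℕ) + 1
    rw [dimage_Iic]
    exact (hy j).1
  · intro w hw
    have hw' : (F '' Set.Ici (OrderDual.ofDual w)).ncard = (j : ℕ) + 1 := by
      rw [← dimage_Iic]; exact hw
    exact (hy j).2 hw'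

end DualDefs

section Dual

variable {α : Type} [LinearOrder α] [Finite α]

lemma y_anti (F : α → C) (y : Fin m → α) (hy : YP F y) : StrictAnti y :=
  fun _ _ hij => x_mono (dF F) (dy y) (dual_hx F y hy) hij

lemma Rchar (hm : Fintype.card C = m) (F : α → C) (y : Fin m → α) (hy : YP F y) (a : α) :
    F '' Set.Ioi a = F '' (y '' {k | a < y k}) := by
  have h := Lchar hm (dF F) (dy y) (dual_hx F y hy) (OrderDual.toDual a)
  rw [dimage_Iio, dimage_set] at h
  exact h

lemma dist_y (hm : Fintype.card C = m) (F : α → C) (y : Fin m → α) (hy : YP F y) (k : Fin m) :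
    F (y k) ∉ F '' (y '' {l | l < k}) := by
  have h := dist_x hm (dF F) (dy y) (dual_hx F y hy) k
  rwa [dimage_set] at h

lemma y_colour_inj (hm : Fintype.card C = m) (F : α → C) (y : Fin m → α) (hy : YP F y)
    {k l : Fin m} (h : F (y k) = F (y l)) : k = l :=
  colour_inj hm (dF F) (dy y) (dual_hx F y hy) h

lemma cardR (hm : Fintype.card C = m) (F : α → C) (y : Fin m → α) (hy : YP F y) (j : Fin m) :
    (F '' Set.Ioi (y j)).ncard = (j : ℕ) := by
  have h := cardL hm (dF F) (dy y) (dual_hx F y hy) j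
  rwa [dimage_Iio] at h

lemma y_top (hm : Fintype.card C = m) (F : α → C) (y : Fin m → α) (hy : YP F y)
    (h0 : 0 < m) (a : α) : a ≤ y ⟨0, h0⟩ :=
  x_bot hm (dF F) (dy y) (dual_hx F y hy) h0 (OrderDual.toDual a)

lemma match_y {β : Type} [LinearOrder β] [Finite β]
    (hm : Fintype.card C = m) (F : α → C) (y : Fin m → α) (hy : YP F y)
    (G : β → C) (u : Fin m → β) (hu : YP G u) (j : Fin m) (b : β)
    (hR : F '' Set.Ioi (y j) = G '' Set.Ioi b) (hc : F (y j) = G b) : b = u j := by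
  have h := match_x hm (dF F) (dy y) (dual_hx F y hy) (dF G) (dy u) (dual_hx G u hu) j
    (OrderDual.toDual b) (by rw [dimage_Iio, dimage_Iio]; exact hR) hc
  exact h

end Dual

section Transfer

variable {α β : Type}

lemma image_transfer (F : α → C) (G : β → C) (f : Fin m → α) (g : Fin m → β)
    (h : ∀ k, F (f k) = G (g k)) (S : Set (Fin m)) : F '' (f '' S) = G '' (g '' S) := by
  rw [Set.image_image, Set.image_image]
  exact Set.image_congr fun k _ => h k

lemma set_recover_x [LinearOrder β] [Finite β]
    (hm : Fintype.card C = m) (G : β → C) (x : Fin m → β) (hx : XP G x)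
    (S T : Set (Fin m)) (h : G '' (x '' S) = G '' (x '' T)) : S = T := by
  rw [Set.image_image, Set.image_image] at h
  exact Set.image_injective.mpr (fun k l hkl => colour_inj hm G x hx hkl) h

lemma set_recover_y [LinearOrder β] [Finite β]
    (hm : Fintype.card C = m) (G : β → C) (y : Fin m → β) (hy : YP G y)
    (S T : Set (Fin m)) (h : G '' (y '' S) = G '' (y '' T)) : S = T := by
  rw [Set.image_image, Set.image_image] at h
  exact Set.image_injective.mpr (fun k l hkl => y_colour_inj hm G y hy hkl) h

variable [LinearOrder α] [Finite α] [LinearOrder β] [Finite β]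

lemma cmp_le (hm : Fintype.card C = m) (F : α → C) (G : β → C)
    (xa ya : Fin m → α) (xb yb : Fin m → β)
    (hxa : XP F xa) (hya : YP F ya) (hxb : XP G xb) (hyb : YP G yb)
    (H1 : ∀ i j : Fin m, (xa i ≤ ya j ↔ xb i ≤ yb j) ∧ (ya j ≤ xa i ↔ yb j ≤ xb i))
    (s t : Fin m ⊕ Fin m) :
    Sum.elim xa ya s ≤ Sum.elim xa ya t ↔ Sum.elim xb yb s ≤ Sum.elim xb yb t := by
  rcases s with i | i <;> rcases t with j | j <;> simp only [Sum.elim_inl, Sum.elim_inr]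
  · rw [(x_mono F xa hxa).le_iff_le, (x_mono G xb hxb).le_iff_le]
  · exact (H1 i j).1
  · exact (H1 j i).2
  · rw [(y_anti F ya hya).le_iff_ge, (y_anti G yb hyb).le_iff_ge]

lemma cmp_lt (hm : Fintype.card C = m) (F : α → C) (G : β → C)
    (xa ya : Fin m → α) (xb yb : Fin m → β)
    (hxa : XP F xa) (hya : YP F ya) (hxb : XP G xb) (hyb : YP G yb)
    (H1 : ∀ i j : Fin m, (xa i ≤ ya j ↔ xb i ≤ yb j) ∧ (ya j ≤ xa i ↔ yb j ≤ xb i))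
    (s t : Fin m ⊕ Fin m) :
    Sum.elim xa ya s < Sum.elim xa ya t ↔ Sum.elim xb yb s < Sum.elim xb yb t := by
  rw [lt_iff_not_ge, lt_iff_not_ge]
  exact not_congr (cmp_le hm F G xa ya xb yb hxa hya hxb hyb H1 t s)

lemma gap_sub (hm : Fintype.card C = m) (F : α → C) (G : β → C)
    (xa ya : Fin m → α) (xb yb : Fin m → β)
    (hxa : XP F xa) (hya : YP F ya) (hxb : XP G xb) (hyb : YP G yb)
    (H1 : ∀ i j : Fin m, (xa i ≤ ya j ↔ xb i ≤ yb j) ∧ (ya j ≤ xa i ↔ yb j ≤ xb i))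
    (H2 : ∀ i : Fin m, F (xa i) = G (xb i) ∧ F (ya i) = G (yb i))
    (HAB : ∀ a : α, ∃ b : β, F a = G b ∧ F '' Set.Iio a = G '' Set.Iio b ∧
      F '' Set.Ioi a = G '' Set.Ioi b)
    (s t : Fin m ⊕ Fin m)
    (hst : Sum.elim xa ya s < Sum.elim xa ya t)
    (hcons : ∀ w, ¬(Sum.elim xa ya s < Sum.elim xa ya w ∧ Sum.elim xa ya w < Sum.elim xa ya t)) :
    F '' {z | Sum.elim xa ya s < z ∧ z < Sum.elim xa ya t} ⊆
      G '' {z | Sum.elim xb yb s < z ∧ z < Sum.elim xb yb t} := by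
  have cmplt := cmp_lt hm F G xa ya xb yb hxa hya hxb hyb H1
  have cmple := cmp_le hm F G xa ya xb yb hxa hya hxb hyb H1
  have hstB : Sum.elim xb yb s < Sum.elim xb yb t := (cmplt s t).1 hst
  have hconsB : ∀ w, ¬(Sum.elim xb yb s < Sum.elim xb yb w ∧
      Sum.elim xb yb w < Sum.elim xb yb t) :=
    fun w hw => hcons w ⟨(cmplt s w).2 hw.1, (cmplt w t).2 hw.2⟩
  rintro c ⟨a, ⟨has, hat⟩, rfl⟩
  obtain ⟨b, hcb, hLb, hRb⟩ := HAB a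
  -- L side
  have hKxA : {k | xa k < a} = {k | xa k ≤ Sum.elim xa ya s} := by
    ext k
    constructor
    · intro hk
      by_contra hle
      exact hcons (Sum.inl k) ⟨not_le.mp hle, lt_trans hk hat⟩
    · intro hk
      exact lt_of_le_of_lt hk has
  have hKxAB : {k : Fin m | xa k ≤ Sum.elim xa ya s} = {k | xb k ≤ Sum.elim xb yb s} :=
    Set.ext fun k => cmple (Sum.inl k) s
  have hLL : G '' Set.Iio b = G '' (xb '' {k | xb k ≤ Sum.elim xb yb s}) := by
    rw [← hLb, Lchar hm F xa hxa, hKxA,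
      image_transfer F G xa xb (fun k => (H2 k).1), hKxAB]
  have hsetsL : {k | xb k < b} = {k | xb k ≤ Sum.elim xb yb s} := by
    apply set_recover_x hm G xb hxb
    rw [← Lchar hm G xb hxb b]
    exact hLL
  -- R side
  have hKyA : {k | a < ya k} = {k | Sum.elim xa ya t ≤ ya k} := by
    ext k
    constructor
    · intro hk
      by_contra hle
      exact hcons (Sum.inr k) ⟨lt_trans has hk, not_le.mp hle⟩
    · intro hk
      exact lt_of_lt_of_le hat hk
  have hKyAB : {k : Fin m | Sum.elim xa ya t ≤ ya k} = {k | Sum.elim xb yb t ≤ yb k} :=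
    Set.ext fun k => cmple t (Sum.inr k)
  have hRR : G '' Set.Ioi b = G '' (yb '' {k | Sum.elim xb yb t ≤ yb k}) := by
    rw [← hRb, Rchar hm F ya hya, hKyA,
      image_transfer F G ya yb (fun k => (H2 k).2), hKyAB]
  have hsetsR : {k | b < yb k} = {k | Sum.elim xb yb t ≤ yb k} := by
    apply set_recover_y hm G yb hyb
    rw [← Rchar hm G yb hyb b]
    exact hRR
  -- position of b
  have hbs : Sum.elim xb yb s < b := by
    rcases s with i | j
    · have hi : i ∈ {k | xb k ≤ Sum.elim xb yb (Sum.inl i)} := le_refl (xb i)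
      rw [← hsetsL] at hi
      exact hi
    · rcases lt_trichotomy (yb j) b with h | h | h
      · exact h
      · exfalso
        have ha : a = ya j := match_y hm G yb hyb F ya hya j a
          (by rw [h]; exact hRb.symm) (by rw [h]; exact hcb.symm)
        have has' := has
        simp only [Sum.elim_inr] at has'
        rw [← ha] at has'
        exact lt_irrefl a has'
      · exfalso
        have hj : j ∈ {k | b < yb k} := h
        rw [hsetsR] at hj
        have hj' : Sum.elim xb yb t ≤ Sum.elim xb yb (Sum.inr j) := hj
        exact absurd hstB (not_lt.mpr hj')
  have hbt : b < Sum.elim xb yb t := by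
    rcases t with i | j
    · rcases lt_trichotomy b (xb i) with h | h | h
      · exact h
      · exfalso
        have ha : a = xa i := match_x hm G xb hxb F xa hxa i a
          (by rw [← h]; exact hLb.symm) (by rw [← h]; exact hcb.symm)
        have hat' := hat
        simp only [Sum.elim_inl] at hat'
        rw [← ha] at hat'
        exact lt_irrefl a hat'
      · exfalso
        have hi : i ∈ {k | xb k < b} := h
        rw [hsetsL] at hi
        have hi' : Sum.elim xb yb (Sum.inl i) ≤ Sum.elim xb yb s := hi
        exact absurd hstB (not_lt.mpr hi')
    · have hj : j ∈ {k | Sum.elim xb yb (Sum.inr j) ≤ yb k} := le_refl (yb j)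
      rw [← hsetsR] at hj
      exact hj
  exact ⟨b, ⟨hbs, hbt⟩, hcb.symm⟩

lemma ext_lemma (hm : Fintype.card C = m) (h0 : 0 < m) (F : α → C) (G : β → C)
    (xa ya : Fin m → α) (xb yb : Fin m → β)
    (hxa : XP F xa) (hya : YP F ya) (hxb : XP G xb) (hyb : YP G yb)
    (H1 : ∀ i j : Fin m, (xa i ≤ ya j ↔ xb i ≤ yb j) ∧ (ya j ≤ xa i ↔ yb j ≤ xb i))
    (H2 : ∀ i : Fin m, F (xa i) = G (xb i) ∧ F (ya i) = G (yb i))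
    (H3 : ∀ s t : Fin m ⊕ Fin m,
      (Sum.elim xa ya s < Sum.elim xa ya t ∧
        ∀ w, ¬(Sum.elim xa ya s < Sum.elim xa ya w ∧ Sum.elim xa ya w < Sum.elim xa ya t)) →
      F '' {z | Sum.elim xa ya s < z ∧ z < Sum.elim xa ya t} =
        G '' {z | Sum.elim xb yb s < z ∧ z < Sum.elim xb yb t}) :
    ∀ a : α, ∃ b : β, F a = G b ∧ F '' Set.Iio a = G '' Set.Iio b ∧
      F '' Set.Ioi a = G '' Set.Ioi b := by
  have cmplt := cmp_lt hm F G xa ya xb yb hxa hya hxb hyb H1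
  have cmple := cmp_le hm F G xa ya xb yb hxa hya hxb hyb H1
  intro a
  by_cases hcfg : ∃ s : Fin m ⊕ Fin m, Sum.elim xa ya s = a
  · obtain ⟨s, rfl⟩ := hcfg
    refine ⟨Sum.elim xb yb s, ?_, ?_, ?_⟩
    · rcases s with i | j
      · exact (H2 i).1
      · exact (H2 j).2
    · rw [Lchar hm F xa hxa, Lchar hm G xb hxb,
        image_transfer F G xa xb (fun k => (H2 k).1)]
      have e : {k | xa k < Sum.elim xa ya s} = {k | xb k < Sum.elim xb yb s} :=
        Set.ext fun k => cmplt (Sum.inl k) s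
      rw [e]
    · rw [Rchar hm F ya hya, Rchar hm G yb hyb,
        image_transfer F G ya yb (fun k => (H2 k).2)]
      have e : {k | Sum.elim xa ya s < ya k} = {k | Sum.elim xb yb s < yb k} :=
        Set.ext fun k => cmplt s (Sum.inr k)
      rw [e]
  · push_neg at hcfg
    have hx0 : xa ⟨0, h0⟩ < a :=
      lt_of_le_of_ne (x_bot hm F xa hxa h0 a) (hcfg (Sum.inl ⟨0, h0⟩))
    have hy0 : a < ya ⟨0, h0⟩ :=
      lt_of_le_of_ne (y_top hm F ya hya h0 a) (fun h => hcfg (Sum.inr ⟨0, h0⟩) h.symm)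
    obtain ⟨s, hs, hsmax⟩ := Set.exists_max_image
      {w : Fin m ⊕ Fin m | Sum.elim xa ya w < a} (Sum.elim xa ya) (Set.toFinite _)
      ⟨Sum.inl ⟨0, h0⟩, hx0⟩
    obtain ⟨t, ht, htmin⟩ := Set.exists_min_image
      {w : Fin m ⊕ Fin m | a < Sum.elim xa ya w} (Sum.elim xa ya) (Set.toFinite _)
      ⟨Sum.inr ⟨0, h0⟩, hy0⟩
    have hs' : Sum.elim xa ya s < a := hs
    have ht' : a < Sum.elim xa ya t := ht
    have hcons : ∀ w, ¬(Sum.elim xa ya s < Sum.elim xa ya w ∧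
        Sum.elim xa ya w < Sum.elim xa ya t) := by
      rintro w ⟨h1w, h2w⟩
      rcases lt_trichotomy (Sum.elim xa ya w) a with h | h | h
      · exact absurd (hsmax w h) (not_le.mpr h1w)
      · exact hcfg w h
      · exact absurd (htmin w h) (not_le.mpr h2w)
    have hst : Sum.elim xa ya s < Sum.elim xa ya t := lt_trans hs' ht'
    have hstB : Sum.elim xb yb s < Sum.elim xb yb t := (cmplt s t).1 hst
    have hconsB : ∀ w, ¬(Sum.elim xb yb s < Sum.elim xb yb w ∧
        Sum.elim xb yb w < Sum.elim xb yb t) :=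
      fun w hw => hcons w ⟨(cmplt s w).2 hw.1, (cmplt w t).2 hw.2⟩
    have hgap := H3 s t ⟨hst, hcons⟩
    have hmem : F a ∈ G '' {z | Sum.elim xb yb s < z ∧ z < Sum.elim xb yb t} := by
      rw [← hgap]
      exact ⟨a, ⟨hs', ht'⟩, rfl⟩
    obtain ⟨b, ⟨hbs, hbt⟩, hGb⟩ := hmem
    refine ⟨b, hGb.symm, ?_, ?_⟩
    · rw [Lchar hm F xa hxa, Lchar hm G xb hxb,
        image_transfer F G xa xb (fun k => (H2 k).1)]
      have e1 : {k | xa k < a} = {k | xa k ≤ Sum.elim xa ya s} := by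
        ext k
        constructor
        · intro hk
          exact hsmax (Sum.inl k) hk
        · intro hk
          exact lt_of_le_of_lt hk hs'
      have e2 : {k | xb k < b} = {k | xb k ≤ Sum.elim xb yb s} := by
        ext k
        constructor
        · intro hk
          by_contra hle
          exact hconsB (Sum.inl k) ⟨not_le.mp hle, lt_trans hk hbt⟩
        · intro hk
          exact lt_of_le_of_lt hk hbs
      have e3 : {k : Fin m | xa k ≤ Sum.elim xa ya s} = {k | xb k ≤ Sum.elim xb yb s} :=
        Set.ext fun k => cmple (Sum.inl k) s
      rw [e1, e2, e3]
    · rw [Rchar hm F ya hya, Rchar hm G yb hyb,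
        image_transfer F G ya yb (fun k => (H2 k).2)]
      have e1 : {k | a < ya k} = {k | Sum.elim xa ya t ≤ ya k} := by
        ext k
        constructor
        · intro hk
          exact htmin (Sum.inr k) hk
        · intro hk
          exact lt_of_lt_of_le ht' hk
      have e2 : {k | b < yb k} = {k | Sum.elim xb yb t ≤ yb k} := by
        ext k
        constructor
        · intro hk
          by_contra hle
          exact hconsB (Sum.inr k) ⟨lt_trans hbs hk, not_le.mp hle⟩
        · intro hk
          exact lt_of_lt_of_le hbt hk
      have e3 : {k : Fin m | Sum.elim xa ya t ≤ ya k} = {k | Sum.elim xb yb t ≤ yb k} :=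
        Set.ext fun k => cmple t (Sum.inr k)
      rw [e1, e2, e3]

end Transfer

section CLOPart
variable {C : Type}

lemma range_left (X : CLO C) (a : X.carrier) :
    Set.range (X.left a).colour = X.colour '' Set.Iio a := by
  have h1 : (X.left a).colour = X.colour ∘ Subtype.val := rfl
  ext c
  exact ⟨fun ⟨⟨z, hz⟩, hc⟩ => ⟨z, hz, hc⟩, fun ⟨z, hz, hc⟩ => ⟨⟨z, hz⟩, hc⟩⟩

lemma range_right (X : CLO C) (a : X.carrier) :
    Set.range (X.right a).colour = X.colour '' Set.Ioi a := by
  have h1 : (X.right a).colour = X.colour ∘ Subtype.val := rfl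
  ext c
  exact ⟨fun ⟨⟨z, hz⟩, hc⟩ => ⟨z, hz, hc⟩, fun ⟨z, hz, hc⟩ => ⟨⟨z, hz⟩, hc⟩⟩

lemma ef_one_iff (X Y : CLO C) :
    CLO.EFEquiv 1 X Y ↔ Set.range X.colour = Set.range Y.colour := by
  constructor
  · rintro ⟨h1, h2⟩
    ext c
    simp only [Set.mem_range]
    constructor
    · rintro ⟨a, rfl⟩
      obtain ⟨b, hb, -⟩ := h1 a
      exact ⟨b, hb.symm⟩
    · rintro ⟨b, rfl⟩
      obtain ⟨a, ha, -⟩ := h2 b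
      exact ⟨a, ha⟩
  · intro h
    constructor
    · intro a
      have ha : X.colour a ∈ Set.range Y.colour := h ▸ Set.mem_range_self a
      obtain ⟨b, hb⟩ := ha
      exact ⟨b, hb.symm, trivial, trivial⟩
    · intro b
      have hb : Y.colour b ∈ Set.range X.colour := h.symm ▸ Set.mem_range_self b
      obtain ⟨a, ha⟩ := hb
      exact ⟨a, ha, trivial, trivial⟩

lemma ef_two_iff (X Y : CLO C) :
    CLO.EFEquiv 2 X Y ↔
      ((∀ a : X.carrier, ∃ b : Y.carrier, X.colour a = Y.colour b ∧
          X.colour '' Set.Iio a = Y.colour '' Set.Iio b ∧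
          X.colour '' Set.Ioi a = Y.colour '' Set.Ioi b) ∧
       (∀ b : Y.carrier, ∃ a : X.carrier, X.colour a = Y.colour b ∧
          X.colour '' Set.Iio a = Y.colour '' Set.Iio b ∧
          X.colour '' Set.Ioi a = Y.colour '' Set.Ioi b)) := by
  constructor
  · rintro ⟨h1, h2⟩
    constructor
    · intro a
      obtain ⟨b, hc, hl, hr⟩ := h1 a
      refine ⟨b, hc, ?_, ?_⟩
      · have h := (ef_one_iff _ _).1 hl
        rwa [range_left, range_left] at h
      · have h := (ef_one_iff _ _).1 hr
        rwa [range_right, range_right] at h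
    · intro b
      obtain ⟨a, hc, hl, hr⟩ := h2 b
      refine ⟨a, hc, ?_, ?_⟩
      · have h := (ef_one_iff _ _).1 hl
        rwa [range_left, range_left] at h
      · have h := (ef_one_iff _ _).1 hr
        rwa [range_right, range_right] at h
  · rintro ⟨h1, h2⟩
    constructor
    · intro a
      obtain ⟨b, hc, hl, hr⟩ := h1 a
      refine ⟨b, hc, ?_, ?_⟩
      · exact (ef_one_iff _ _).2 (by rw [range_left, range_left]; exact hl)
      · exact (ef_one_iff _ _).2 (by rw [range_right, range_right]; exact hr)
    · intro b
      obtain ⟨a, hc, hl, hr⟩ := h2 b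
      refine ⟨a, hc, ?_, ?_⟩
      · exact (ef_one_iff _ _).2 (by rw [range_left, range_left]; exact hl)
      · exact (ef_one_iff _ _).2 (by rw [range_right, range_right]; exact hr)

end CLOPart
end Stmt7Aux

/-- two finite `m`-coloured linear orders are `≡₂` iff they have the same
associated coloured `T`-configuration and the same gap-colour function `g` on consecutive
pairs of configuration points. -/
theorem stmt7 {C : Type} [Fintype C] (m : ℕ) (hC : Fintype.card C = m)
    (A B : CLO C) [Finite A.carrier] [Finite B.carrier]
    (hA : Function.Surjective A.colour) (hB : Function.Surjective B.colour)
    (xA yA : Fin m → A.carrier) (xB yB : Fin m → B.carrier)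
    (hxA : ∀ i : Fin m, A.IsXPoint ((i : ℕ) + 1) (xA i))
    (hyA : ∀ j : Fin m, A.IsYPoint ((j : ℕ) + 1) (yA j))
    (hxB : ∀ i : Fin m, B.IsXPoint ((i : ℕ) + 1) (xB i))
    (hyB : ∀ j : Fin m, B.IsYPoint ((j : ℕ) + 1) (yB j)) :
    CLO.EFEquiv 2 A B ↔
      ((∀ i j : Fin m, (xA i ≤ yA j ↔ xB i ≤ yB j) ∧ (yA j ≤ xA i ↔ yB j ≤ xB i)) ∧
       (∀ i : Fin m, A.colour (xA i) = B.colour (xB i) ∧ A.colour (yA i) = B.colour (yB i)) ∧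
       (∀ s t : Fin m ⊕ Fin m,
         (Sum.elim xA yA s < Sum.elim xA yA t ∧
           ∀ u : Fin m ⊕ Fin m,
             ¬(Sum.elim xA yA s < Sum.elim xA yA u ∧ Sum.elim xA yA u < Sum.elim xA yA t)) →
         A.colour '' {z | Sum.elim xA yA s < z ∧ z < Sum.elim xA yA t} =
           B.colour '' {z | Sum.elim xB yB s < z ∧ z < Sum.elim xB yB t})) := by
  rcases Nat.eq_zero_or_pos m with hm0 | h0
  · subst hm0
    have hCempty : IsEmpty C := Fintype.card_eq_zero_iff.mp hC
    have hAe : IsEmpty A.carrier := ⟨fun a => hCempty.false (A.colour a)⟩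
    have hBe : IsEmpty B.carrier := ⟨fun b => hCempty.false (B.colour b)⟩
    constructor
    · intro _
      refine ⟨fun i => i.elim0, fun i => i.elim0, fun s t h => ?_⟩
      rcases s with i | i <;> exact i.elim0
    · intro _
      exact ⟨fun a => (hAe.false a).elim, fun b => (hBe.false b).elim⟩
  · have hxa : Stmt7Aux.XP A.colour xA := fun i => hxA i
    have hya : Stmt7Aux.YP A.colour yA := fun j => hyA j
    have hxb : Stmt7Aux.XP B.colour xB := fun i => hxB i
    have hyb : Stmt7Aux.YP B.colour yB := fun j => hyB j
    rw [Stmt7Aux.ef_two_iff]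
    constructor
    · rintro ⟨HAB, HBA⟩
      have MX : ∀ i : Fin m, A.colour (xA i) = B.colour (xB i) ∧
          A.colour '' Set.Iio (xA i) = B.colour '' Set.Iio (xB i) ∧
          A.colour '' Set.Ioi (xA i) = B.colour '' Set.Ioi (xB i) := by
        intro i
        obtain ⟨b, hc, hl, hr⟩ := HAB (xA i)
        have hb : b = xB i := Stmt7Aux.match_x hC A.colour xA hxa B.colour xB hxb i b hl hc
        rw [hb] at hc hl hr
        exact ⟨hc, hl, hr⟩
      have MY : ∀ j : Fin m, A.colour (yA j) = B.colour (yB j) ∧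
          A.colour '' Set.Iio (yA j) = B.colour '' Set.Iio (yB j) ∧
          A.colour '' Set.Ioi (yA j) = B.colour '' Set.Ioi (yB j) := by
        intro j
        obtain ⟨b, hc, hl, hr⟩ := HAB (yA j)
        have hb : b = yB j := Stmt7Aux.match_y hC A.colour yA hya B.colour yB hyb j b hr hc
        rw [hb] at hc hl hr
        exact ⟨hc, hl, hr⟩
      have H2 : ∀ i : Fin m, A.colour (xA i) = B.colour (xB i) ∧
          A.colour (yA i) = B.colour (yB i) := fun i => ⟨(MX i).1, (MY i).1⟩
      have LT : ∀ i j : Fin m, (xA i < yA j ↔ xB i < yB j) := by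
        intro i j
        have hR := (MX i).2.2
        rw [Stmt7Aux.Rchar hC A.colour yA hya, Stmt7Aux.Rchar hC B.colour yB hyb,
          Stmt7Aux.image_transfer A.colour B.colour yA yB (fun k => (H2 k).2)] at hR
        have hsets : {k | xA i < yA k} = {k | xB i < yB k} :=
          Stmt7Aux.set_recover_y hC B.colour yB hyb _ _ hR
        exact ⟨fun h => (Set.ext_iff.mp hsets j).1 h, fun h => (Set.ext_iff.mp hsets j).2 h⟩
      have EQ : ∀ i j : Fin m, (xA i = yA j ↔ xB i = yB j) := by
        intro i j
        constructor
        · intro h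
          exact (Stmt7Aux.match_y hC A.colour yA hya B.colour yB hyb j (xB i)
            (by rw [← h]; exact (MX i).2.2) (by rw [← h]; exact (MX i).1)).symm.symm
        · intro h
          exact Stmt7Aux.match_y hC B.colour yB hyb A.colour yA hya j (xA i)
            (by rw [← h]; exact (MX i).2.2.symm) (by rw [← h]; exact (MX i).1.symm)
      have H1 : ∀ i j : Fin m, (xA i ≤ yA j ↔ xB i ≤ yB j) ∧
          (yA j ≤ xA i ↔ yB j ≤ xB i) := by
        intro i j
        constructor
        · rw [le_iff_lt_or_eq, le_iff_lt_or_eq]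
          exact or_congr (LT i j) (EQ i j)
        · rw [← not_lt, ← not_lt]
          exact not_congr (LT i j)
      refine ⟨H1, H2, ?_⟩
      rintro s t ⟨hst, hcons⟩
      apply Set.Subset.antisymm
      · exact Stmt7Aux.gap_sub hC A.colour B.colour xA yA xB yB hxa hya hxb hyb
          H1 H2 HAB s t hst hcons
      · have H1' : ∀ i j : Fin m, (xB i ≤ yB j ↔ xA i ≤ yA j) ∧
            (yB j ≤ xB i ↔ yA j ≤ xA i) :=
          fun i j => ⟨((H1 i j).1).symm, ((H1 i j).2).symm⟩
        have H2' : ∀ i : Fin m, B.colour (xB i) = A.colour (xA i) ∧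
            B.colour (yB i) = A.colour (yA i) :=
          fun i => ⟨((H2 i).1).symm, ((H2 i).2).symm⟩
        have HBA' : ∀ b : B.carrier, ∃ a : A.carrier, B.colour b = A.colour a ∧
            B.colour '' Set.Iio b = A.colour '' Set.Iio a ∧
            B.colour '' Set.Ioi b = A.colour '' Set.Ioi a := by
          intro b
          obtain ⟨a, h1, h2, h3⟩ := HBA b
          exact ⟨a, h1.symm, h2.symm, h3.symm⟩
        have cmplt := Stmt7Aux.cmp_lt hC A.colour B.colour xA yA xB yB hxa hya hxb hyb H1
        exact Stmt7Aux.gap_sub hC B.colour A.colour xB yB xA yA hxb hyb hxa hya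
          H1' H2' HBA' s t ((cmplt s t).1 hst)
          (fun w hw => hcons w ⟨(cmplt s w).2 hw.1, (cmplt w t).2 hw.2⟩)
    · rintro ⟨H1, H2, H3⟩
      have H1' : ∀ i j : Fin m, (xB i ≤ yB j ↔ xA i ≤ yA j) ∧
          (yB j ≤ xB i ↔ yA j ≤ xA i) :=
        fun i j => ⟨((H1 i j).1).symm, ((H1 i j).2).symm⟩
      have H2' : ∀ i : Fin m, B.colour (xB i) = A.colour (xA i) ∧
          B.colour (yB i) = A.colour (yA i) :=
        fun i => ⟨((H2 i).1).symm, ((H2 i).2).symm⟩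
      have cmplt := Stmt7Aux.cmp_lt hC A.colour B.colour xA yA xB yB hxa hya hxb hyb H1
      constructor
      · exact Stmt7Aux.ext_lemma hC h0 A.colour B.colour xA yA xB yB hxa hya hxb hyb H1 H2 H3
      · have H3' : ∀ s t : Fin m ⊕ Fin m,
            (Sum.elim xB yB s < Sum.elim xB yB t ∧
              ∀ w, ¬(Sum.elim xB yB s < Sum.elim xB yB w ∧
                Sum.elim xB yB w < Sum.elim xB yB t)) →
            B.colour '' {z | Sum.elim xB yB s < z ∧ z < Sum.elim xB yB t} =
              A.colour '' {z | Sum.elim xA yA s < z ∧ z < Sum.elim xA yA t} := by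
          rintro s t ⟨hst, hcons⟩
          have hstA : Sum.elim xA yA s < Sum.elim xA yA t := (cmplt s t).2 hst
          have hconsA : ∀ w, ¬(Sum.elim xA yA s < Sum.elim xA yA w ∧
              Sum.elim xA yA w < Sum.elim xA yA t) :=
            fun w hw => hcons w ⟨(cmplt s w).1 hw.1, (cmplt w t).1 hw.2⟩
          exact (H3 s t ⟨hstA, hconsA⟩).symm
        have hb := Stmt7Aux.ext_lemma hC h0 B.colour A.colour xB yB xA yA hxb hyb hxa hya
          H1' H2' H3'
        intro b
        obtain ⟨a, h1, h2, h3⟩ := hb b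
        exact ⟨a, h1.symm, h2.symm, h3.symm⟩
end

section
/- A ≡_2-class of finite coloured linear orders is finite if and only if it is a singleton, which holds if and only if in its classification by a coloured T-configuration and gap-colour function g, g(u,v) = ∅ for every pair of consecutive points u < v of the T-configuration. -/
theorem split_mid {α : Type} {a b s t : List α} {d : α} (h : a ++ b = s ++ d :: t) :
    (∃ t1, a = s ++ d :: t1 ∧ t = t1 ++ b) ∨ (∃ s1, s = a ++ s1 ∧ b = s1 ++ d :: t) := by
  rcases List.append_eq_append_iff.mp h with ⟨a', h1, h2⟩ | ⟨c', h1, h2⟩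
  · exact Or.inr ⟨a', h1, h2⟩
  · rcases c' with _ | ⟨e, c''⟩
    · exact Or.inr ⟨[], by simpa using h1.symm, by simpa using h2.symm⟩
    · obtain ⟨rfl, rfl⟩ : d = e ∧ t = c'' ++ b := by simpa using h2
      exact Or.inl ⟨c'', by simpa using h1, rfl⟩


namespace CLO

variable {C : Type}

def lset (A : CLO C) (a : A.carrier) : Set C := A.colour '' {x | x < a}
def rset (A : CLO C) (a : A.carrier) : Set C := A.colour '' {x | a < x}
def char (A : CLO C) (a : A.carrier) : C × Set C × Set C := (A.colour a, A.lset a, A.rset a)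

lemma range_left_colour (A : CLO C) (a : A.carrier) :
    Set.range (A.left a).colour = A.lset a := by
  ext c
  constructor
  · rintro ⟨⟨x, hx⟩, rfl⟩; exact ⟨x, hx, rfl⟩
  · rintro ⟨x, hx, rfl⟩; exact ⟨⟨x, hx⟩, rfl⟩

lemma range_right_colour (A : CLO C) (a : A.carrier) :
    Set.range (A.right a).colour = A.rset a := by
  ext c
  constructor
  · rintro ⟨⟨x, hx⟩, rfl⟩; exact ⟨x, hx, rfl⟩
  · rintro ⟨x, hx, rfl⟩; exact ⟨⟨x, hx⟩, rfl⟩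

lemma efequiv_one_iff (A B : CLO C) :
    EFEquiv 1 A B ↔ Set.range A.colour = Set.range B.colour := by
  show ((∀ a : A.carrier, ∃ b : B.carrier, A.colour a = B.colour b ∧ _ ∧ _) ∧ _) ↔ _
  constructor
  · rintro ⟨h1, h2⟩
    apply Set.eq_of_subset_of_subset
    · rintro c ⟨a, rfl⟩; obtain ⟨b, hb, -⟩ := h1 a; exact ⟨b, hb.symm⟩
    · rintro c ⟨b, rfl⟩; obtain ⟨a, ha, -⟩ := h2 b; exact ⟨a, ha⟩
  · intro h
    constructor
    · intro a
      have : A.colour a ∈ Set.range B.colour := h ▸ Set.mem_range_self a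
      obtain ⟨b, hb⟩ := this
      exact ⟨b, hb.symm, trivial, trivial⟩
    · intro b
      have : B.colour b ∈ Set.range A.colour := h ▸ Set.mem_range_self b
      obtain ⟨a, ha⟩ := this
      exact ⟨a, ha, trivial, trivial⟩

lemma efequiv_two_iff (A B : CLO C) :
    EFEquiv 2 A B ↔ Set.range (char A) = Set.range (char B) := by
  show ((∀ a : A.carrier, ∃ b : B.carrier, _ ∧ _ ∧ _) ∧ _) ↔ _
  have key : ∀ (a : A.carrier) (b : B.carrier),
      (A.colour a = B.colour b ∧ EFEquiv 1 (A.left a) (B.left b) ∧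
        EFEquiv 1 (A.right a) (B.right b)) ↔ char A a = char B b := by
    intro a b
    rw [efequiv_one_iff, efequiv_one_iff, range_left_colour, range_left_colour,
      range_right_colour, range_right_colour]
    unfold char
    constructor
    · rintro ⟨h1, h2, h3⟩; simp [h1, h2, h3]
    · intro h; exact ⟨congrArg Prod.fst h, congrArg (fun p => p.2.1) h,
        congrArg (fun p => p.2.2) h⟩
  constructor
  · rintro ⟨h1, h2⟩
    apply Set.eq_of_subset_of_subset
    · rintro c ⟨a, rfl⟩; obtain ⟨b, hb⟩ := h1 a; exact ⟨b, ((key a b).1 hb).symm⟩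
    · rintro c ⟨b, rfl⟩; obtain ⟨a, ha⟩ := h2 b; exact ⟨a, (key a b).1 ha⟩
  · intro h
    constructor
    · intro a
      obtain ⟨b, hb⟩ := h ▸ Set.mem_range_self (f := char A) a
      exact ⟨b, (key a b).2 hb.symm⟩
    · intro b
      obtain ⟨a, ha⟩ := h.symm ▸ Set.mem_range_self (f := char B) b
      exact ⟨a, (key a b).2 ha⟩


lemma lset_ofList (l : List C) (i : Fin l.length) :
    (ofList l).lset i = {c | c ∈ l.take i.val} := by
  ext c
  show (∃ x : Fin l.length, x < i ∧ l.get x = c) ↔ c ∈ l.take i.val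
  simp only [List.mem_iff_getElem, List.length_take, List.getElem_take]
  constructor
  · rintro ⟨x, hx, rfl⟩
    exact ⟨x.val, by omega, rfl⟩
  · rintro ⟨j, hj, rfl⟩
    have hj' : j < l.length := by have := Nat.lt_min.mp hj; omega
    exact ⟨⟨j, hj'⟩, by simp only [Fin.lt_def]; have := Nat.lt_min.mp hj; omega, rfl⟩

lemma rset_ofList (l : List C) (i : Fin l.length) :
    (ofList l).rset i = {c | c ∈ l.drop (i.val + 1)} := by
  ext c
  show (∃ x : Fin l.length, i < x ∧ l.get x = c) ↔ c ∈ l.drop (i.val + 1)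
  simp only [List.mem_iff_getElem, List.length_drop, List.getElem_drop]
  constructor
  · rintro ⟨x, hx, rfl⟩
    refine ⟨x.val - (i.val + 1), by omega, ?_⟩
    congr 1; have : i.val < x.val := hx; omega
  · rintro ⟨j, hj, rfl⟩
    exact ⟨⟨i.val + 1 + j, by omega⟩, by simp only [Fin.lt_def]; omega, rfl⟩

/-- The set of "characters" readable off the splits of a list. -/
def splitChars (l : List C) : Set (C × Set C × Set C) :=
  {p | ∃ s t, l = s ++ p.1 :: t ∧ p.2.1 = {a | a ∈ s} ∧ p.2.2 = {a | a ∈ t}}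

lemma range_char_ofList (l : List C) :
    Set.range (char (ofList l)) = splitChars l := by
  ext p
  constructor
  · rintro ⟨i, rfl⟩
    refine ⟨l.take i.val, l.drop (i.val + 1), ?_, ?_, ?_⟩
    · show l = l.take i.val ++ l.get i :: l.drop (i.val + 1)
      conv_lhs => rw [← List.take_append_drop i.val l]
      rw [List.drop_eq_getElem_cons i.isLt]
      rfl
    · exact lset_ofList l i
    · exact rset_ofList l i
  · rintro ⟨s, t, rfl, h1, h2⟩
    obtain ⟨c, S, T⟩ := p
    have hi : s.length < (s ++ c :: t).length := by simp
    refine ⟨⟨s.length, hi⟩, ?_⟩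
    have hget : (ofList (s ++ c :: t)).colour ⟨s.length, hi⟩ = c := by
      show (s ++ c :: t).get ⟨s.length, hi⟩ = c
      simp [List.getElem_append_right (le_refl s.length)]
    have htake : (s ++ c :: t).take s.length = s := List.take_left
    have hdrop : (s ++ c :: t).drop (s.length + 1) = t := by
      have : s ++ c :: t = (s ++ [c]) ++ t := by simp
      rw [this]
      have : (s ++ [c]).length = s.length + 1 := by simp
      rw [← this, List.drop_left]
    unfold char
    dsimp only at h1 h2 ⊢
    rw [lset_ofList, rset_ofList]
    dsimp only
    rw [hget, htake, hdrop, h1, h2]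

lemma splitChars_pump (u v' : List C) (c : C) (hcu : c ∈ u) (hcv : c ∈ v') (k : ℕ) :
    splitChars (u ++ (List.replicate k c ++ c :: v')) = splitChars (u ++ c :: v') := by
  ext p
  obtain ⟨d, S, T⟩ := p
  constructor
  · rintro ⟨s, t, heq, h1, h2⟩
    dsimp only at heq h1 h2 ⊢
    rcases split_mid heq with ⟨t1, hu, ht⟩ | ⟨s1, hs, hmid⟩
    · refine ⟨s, t1 ++ (c :: v'), by rw [hu]; simp, h1, ?_⟩
      rw [h2, ht]
      ext a
      simp only [Set.mem_setOf_eq, List.mem_append, List.mem_replicate, List.mem_cons]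
      tauto
    · rcases split_mid hmid with ⟨t2, hrep, ht⟩ | ⟨s2, hs1, hv⟩
      · have hd : d = c := List.eq_of_mem_replicate
          (show d ∈ List.replicate k c by rw [hrep]; simp)
        have hs1c : ∀ a ∈ s1, a = c := fun a ha => List.eq_of_mem_replicate
          (show a ∈ List.replicate k c by rw [hrep]; simp [ha])
        have ht2c : ∀ a ∈ t2, a = c := fun a ha => List.eq_of_mem_replicate
          (show a ∈ List.replicate k c by rw [hrep]; simp [ha])
        refine ⟨u, v', by rw [hd], ?_, ?_⟩
        · rw [h1, hs]
          ext a
          simp only [Set.mem_setOf_eq, List.mem_append]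
          constructor
          · rintro (h | h)
            · exact h
            · exact (hs1c a h) ▸ hcu
          · exact Or.inl
        · rw [h2, ht]
          ext a
          simp only [Set.mem_setOf_eq, List.mem_append, List.mem_cons]
          constructor
          · rintro (h | h | h)
            · exact ht2c a h ▸ hcv
            · exact h ▸ hcv
            · exact h
          · intro h; right; right; exact h
      · refine ⟨u ++ s2, t, by rw [hv]; simp, ?_, h2⟩
        rw [h1, hs, hs1]
        ext a
        simp only [Set.mem_setOf_eq, List.mem_append, List.mem_replicate]
        constructor
        · rintro (h | (h | h))
          · exact Or.inl h
          · exact Or.inl (h.2 ▸ hcu)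
          · exact Or.inr h
        · rintro (h | h)
          · exact Or.inl h
          · exact Or.inr (Or.inr h)
  · rintro ⟨s, t, heq, h1, h2⟩
    dsimp only at heq h1 h2 ⊢
    rcases split_mid heq with ⟨t1, hu, ht⟩ | ⟨s1, hs, hmid⟩
    · refine ⟨s, t1 ++ (List.replicate k c ++ c :: v'), by rw [hu]; simp, h1, ?_⟩
      rw [h2, ht]
      ext a
      simp only [Set.mem_setOf_eq, List.mem_append, List.mem_replicate, List.mem_cons]
      tauto
    · refine ⟨u ++ (List.replicate k c ++ s1), t, by rw [hmid]; simp, ?_, h2⟩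
      rw [h1, hs]
      ext a
      simp only [Set.mem_setOf_eq, List.mem_append, List.mem_replicate]
      constructor
      · rintro (h | h)
        · exact Or.inl h
        · exact Or.inr (Or.inr h)
      · rintro (h | (h | h))
        · exact Or.inl h
        · exact Or.inl (h.2 ▸ hcu)
        · exact Or.inr h


def Rigid (A : CLO C) : Prop := ∀ a, ¬(A.colour a ∈ A.lset a ∧ A.colour a ∈ A.rset a)

lemma lset_mono {A : CLO C} {a b : A.carrier} (h : a < b) :
    A.lset a ∪ {A.colour a} ⊆ A.lset b := by
  rintro c (⟨w, hw, rfl⟩ | rfl)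
  · exact ⟨w, lt_trans hw h, rfl⟩
  · exact ⟨a, h, rfl⟩

lemma rset_anti {A : CLO C} {a b : A.carrier} (h : a < b) :
    A.rset b ∪ {A.colour b} ⊆ A.rset a := by
  rintro c (⟨w, hw, rfl⟩ | rfl)
  · exact ⟨w, lt_trans h hw, rfl⟩
  · exact ⟨b, h, rfl⟩

lemma char_colour {A B : CLO C} {a : A.carrier} {b : B.carrier} (h : char A a = char B b) :
    A.colour a = B.colour b := congrArg Prod.fst h
lemma char_lset {A B : CLO C} {a : A.carrier} {b : B.carrier} (h : char A a = char B b) :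
    A.lset a = B.lset b := congrArg (fun p => p.2.1) h
lemma char_rset {A B : CLO C} {a : A.carrier} {b : B.carrier} (h : char A a = char B b) :
    A.rset a = B.rset b := congrArg (fun p => p.2.2) h

lemma char_lt {A B : CLO C} (hA : Rigid A) {a1 a2 : A.carrier} {b1 b2 : B.carrier}
    (e1 : char A a1 = char B b1) (e2 : char A a2 = char B b2) (h : a1 < a2) : b1 < b2 := by
  rcases lt_trichotomy b1 b2 with hb | hb | hb
  · exact hb
  · exfalso
    have e : char A a1 = char A a2 := by rw [e1, hb, ← e2]
    refine hA a1 ⟨?_, ?_⟩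
    · rw [char_lset e]
      exact lset_mono h (Or.inr rfl)
    · have : A.colour a2 ∈ A.rset a1 := rset_anti h (Or.inr rfl)
      rwa [← char_colour e] at this
  · exfalso
    have hl : B.lset b2 ∪ {B.colour b2} ⊆ B.lset b1 := lset_mono hb
    have hr : B.rset b1 ∪ {B.colour b1} ⊆ B.rset b2 := rset_anti hb
    rw [← char_lset e2, ← char_colour e2, ← char_lset e1] at hl
    rw [← char_rset e1, ← char_colour e1, ← char_rset e2] at hr
    refine hA a1 ⟨?_, ?_⟩
    · exact hl (Or.inl (lset_mono h (Or.inr rfl)))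
    · exact rset_anti h (Or.inl (hr (Or.inr rfl)))

lemma char_uniq {A B : CLO C} (hA : Rigid A) {a : A.carrier} {b1 b2 : B.carrier}
    (e1 : char A a = char B b1) (e2 : char A a = char B b2) : b1 = b2 := by
  rcases lt_trichotomy b1 b2 with hb | hb | hb
  · exfalso
    have hl : B.lset b1 ∪ {B.colour b1} ⊆ B.lset b2 := lset_mono hb
    have hr : B.rset b2 ∪ {B.colour b2} ⊆ B.rset b1 := rset_anti hb
    rw [← char_lset e1, ← char_colour e1, ← char_lset e2] at hl
    rw [← char_rset e2, ← char_colour e2, ← char_rset e1] at hr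
    exact hA a ⟨hl (Or.inr rfl), hr (Or.inr rfl)⟩
  · exact hb
  · exfalso
    have hl : B.lset b2 ∪ {B.colour b2} ⊆ B.lset b1 := lset_mono hb
    have hr : B.rset b1 ∪ {B.colour b1} ⊆ B.rset b2 := rset_anti hb
    rw [← char_lset e2, ← char_colour e2, ← char_lset e1] at hl
    rw [← char_rset e1, ← char_colour e1, ← char_rset e2] at hr
    exact hA a ⟨hl (Or.inr rfl), hr (Or.inr rfl)⟩

lemma eq_of_charset_eq {l l' : List C} (hrig : Rigid (ofList l))
    (h : Set.range (char (ofList l)) = Set.range (char (ofList l'))) : l' = l := by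
  have hex : ∀ i : Fin l.length, ∃ j : Fin l'.length,
      char (ofList l) i = char (ofList l') j := by
    intro i
    have : char (ofList l) i ∈ Set.range (char (ofList l')) := h ▸ Set.mem_range_self i
    obtain ⟨j, hj⟩ := this
    exact ⟨j, hj.symm⟩
  choose f hf using hex
  have hmono : StrictMono f := fun i j hij => char_lt hrig (hf i) (hf j) hij
  have hsurj : Function.Surjective f := by
    intro b
    have : char (ofList l') b ∈ Set.range (char (ofList l)) := h ▸ Set.mem_range_self b
    obtain ⟨a, ha⟩ := this
    exact ⟨a, char_uniq hrig (hf a) ha⟩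
  have hbij : Function.Bijective f := ⟨hmono.injective, hsurj⟩
  have hlen : l.length = l'.length := by
    simpa using Fintype.card_of_bijective hbij
  have hwf : WellFoundedLT (Fin l.length) := Finite.to_wellFoundedLT
  have hfe : f = fun i => Fin.cast hlen i := by
    apply (hmono.range_inj (Fin.cast_strictMono hlen)).mp
    rw [Set.range_eq_univ.mpr hsurj, Set.range_eq_univ.mpr
      (fun j => ⟨Fin.cast hlen.symm j, rfl⟩)]
  apply List.ext_get hlen.symm
  intro n h1 h2
  have := char_colour (hf ⟨n, h2⟩)
  rw [hfe] at this
  exact (this.symm : _)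

section Fin
variable [Fintype C]

lemma Iic_eq_Iio_union {l : List C} (z : Fin l.length) :
    Set.Iic z = Set.Iio z ∪ {z} := by
  ext w; simp [le_iff_lt_or_eq]

lemma Ici_eq_Ioi_union {l : List C} (z : Fin l.length) :
    Set.Ici z = Set.Ioi z ∪ {z} := by
  ext w
  simp only [Set.mem_Ici, Set.mem_union, Set.mem_Ioi, Set.mem_singleton_iff]
  rw [le_iff_lt_or_eq]
  tauto

lemma img_Iic {l : List C} (z : Fin l.length)
    (hz : (ofList l).colour z ∈ (ofList l).lset z) :
    (ofList l).colour '' Set.Iic z = (ofList l).lset z := by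
  erw [Iic_eq_Iio_union, Set.image_union, Set.image_singleton]
  exact Set.union_eq_self_of_subset_right (Set.singleton_subset_iff.mpr hz)

lemma img_Ici {l : List C} (z : Fin l.length)
    (hz : (ofList l).colour z ∈ (ofList l).rset z) :
    (ofList l).colour '' Set.Ici z = (ofList l).rset z := by
  erw [Ici_eq_Ioi_union, Set.image_union, Set.image_singleton]
  exact Set.union_eq_self_of_subset_right (Set.singleton_subset_iff.mpr hz)

lemma not_isXPoint {l : List C} (z : Fin l.length)
    (hz : (ofList l).colour z ∈ (ofList l).lset z) (i : ℕ) :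
    ¬ (ofList l).IsXPoint i z := by
  rintro ⟨hz1, hz2⟩
  obtain ⟨w, hw, -⟩ := id hz
  have hzv : 0 < z.val := by
    have : (w : Fin l.length) < z := hw
    have := Fin.lt_def.mp this
    omega
  set p : Fin l.length := ⟨z.val - 1, by omega⟩ with hp
  have hIic : Set.Iic p = Set.Iio z := by
    ext v; simp only [Set.mem_Iic, Set.mem_Iio, Fin.le_def, Fin.lt_def, hp]; omega
  have himg : (ofList l).colour '' Set.Iic p = (ofList l).colour '' Set.Iic z := by
    erw [hIic, img_Iic z hz]; rfl
  have hpmem : p ∈ {v : Fin l.length | ((ofList l).colour '' Set.Iic v).ncard = i} := by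
    show ((ofList l).colour '' Set.Iic p).ncard = i
    rw [himg]; exact hz1
  have := hz2 hpmem
  erw [Fin.le_def] at this
  simp only [hp] at this
  omega

lemma not_isYPoint {l : List C} (z : Fin l.length)
    (hz : (ofList l).colour z ∈ (ofList l).rset z) (j : ℕ) :
    ¬ (ofList l).IsYPoint j z := by
  rintro ⟨hz1, hz2⟩
  obtain ⟨w, hw, -⟩ := id hz
  have hzv : z.val + 1 < l.length := by
    have := Fin.lt_def.mp (show z < w from hw)
    have := w.isLt
    omega
  set p : Fin l.length := ⟨z.val + 1, hzv⟩ with hp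
  have hIci : Set.Ici p = Set.Ioi z := by
    ext v; simp only [Set.mem_Ici, Set.mem_Ioi, Fin.le_def, Fin.lt_def, hp]; omega
  have himg : (ofList l).colour '' Set.Ici p = (ofList l).colour '' Set.Ici z := by
    erw [hIci, img_Ici z hz]; rfl
  have hpmem : p ∈ {v : Fin l.length | ((ofList l).colour '' Set.Ici v).ncard = j} := by
    show ((ofList l).colour '' Set.Ici p).ncard = j
    rw [himg]; exact hz1
  have := Fin.le_def.mp (hz2 hpmem)
  simp only [hp] at this
  omega

lemma isXPoint_self {l : List C} (z : Fin l.length)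
    (hz : (ofList l).colour z ∉ (ofList l).lset z) :
    (ofList l).IsXPoint ((ofList l).colour '' Set.Iic z).ncard z := by
  constructor
  · rfl
  · intro w hw
    by_contra hlt0
    have hlt : w < z := lt_of_not_ge hlt0
    have h1 : (ofList l).colour '' Set.Iic w ⊆ (ofList l).lset z := by
      rintro c ⟨v, hv, rfl⟩
      exact ⟨v, show v < z from lt_of_le_of_lt (Set.mem_Iic.mp hv) hlt, rfl⟩
    have h2 : (ofList l).lset z ⊂ (ofList l).colour '' Set.Iic z := by
      constructor
      · rintro c ⟨v, hv, rfl⟩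
        exact ⟨v, Set.mem_Iic.mpr (le_of_lt hv), rfl⟩
      · intro hsub
        exact hz (hsub ⟨z, Set.mem_Iic.mpr (le_refl z), rfl⟩)
    have hfin : ((ofList l).colour '' Set.Iic z).Finite := Set.toFinite _
    have := lt_of_le_of_lt
      (Set.ncard_le_ncard h1 (Set.toFinite _))
      (Set.ncard_lt_ncard h2 hfin)
    rw [hw] at this
    omega

lemma isYPoint_self {l : List C} (z : Fin l.length)
    (hz : (ofList l).colour z ∉ (ofList l).rset z) :
    (ofList l).IsYPoint ((ofList l).colour '' Set.Ici z).ncard z := by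
  constructor
  · rfl
  · intro w hw
    by_contra hlt0
    have hlt : z < w := lt_of_not_ge hlt0
    have h1 : (ofList l).colour '' Set.Ici w ⊆ (ofList l).rset z := by
      rintro c ⟨v, hv, rfl⟩
      exact ⟨v, show z < v from lt_of_lt_of_le hlt (Set.mem_Ici.mp hv), rfl⟩
    have h2 : (ofList l).rset z ⊂ (ofList l).colour '' Set.Ici z := by
      constructor
      · rintro c ⟨v, hv, rfl⟩
        exact ⟨v, Set.mem_Ici.mpr (le_of_lt hv), rfl⟩
      · intro hsub
        exact hz (hsub ⟨z, Set.mem_Ici.mpr (le_refl z), rfl⟩)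
    have hfin : ((ofList l).colour '' Set.Ici z).Finite := Set.toFinite _
    have := lt_of_le_of_lt
      (Set.ncard_le_ncard h1 (Set.toFinite _))
      (Set.ncard_lt_ncard h2 hfin)
    rw [hw] at this
    omega

lemma ncard_Iic_bounds {l : List C} (z : Fin l.length) :
    1 ≤ ((ofList l).colour '' Set.Iic z).ncard ∧
      ((ofList l).colour '' Set.Iic z).ncard ≤ Fintype.card C := by
  constructor
  · have : ((ofList l).colour '' Set.Iic z).Nonempty := ⟨_, ⟨z, le_refl z, rfl⟩⟩
    have := Set.ncard_pos (Set.toFinite _) |>.mpr this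
    omega
  · have := Set.ncard_le_ncard (Set.subset_univ ((ofList l).colour '' Set.Iic z))
      (Set.toFinite _)
    rwa [Set.ncard_univ, Nat.card_eq_fintype_card] at this

lemma ncard_Ici_bounds {l : List C} (z : Fin l.length) :
    1 ≤ ((ofList l).colour '' Set.Ici z).ncard ∧
      ((ofList l).colour '' Set.Ici z).ncard ≤ Fintype.card C := by
  constructor
  · have : ((ofList l).colour '' Set.Ici z).Nonempty := ⟨_, ⟨z, le_refl z, rfl⟩⟩
    have := Set.ncard_pos (Set.toFinite _) |>.mpr this
    omega
  · have := Set.ncard_le_ncard (Set.subset_univ ((ofList l).colour '' Set.Ici z))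
      (Set.toFinite _)
    rwa [Set.ncard_univ, Nat.card_eq_fintype_card] at this


end Fin

end CLO

/-- an `≡₂`-class of finite coloured linear orders (represented as lists over `C`)
is finite iff it is a singleton, iff all the gap-colour sets `g(u,v)` between consecutive
points of the associated `T`-configuration are empty. -/
theorem stmt8 {C : Type} [Fintype C] (m : ℕ) (hC : Fintype.card C = m)
    (l : List C) (hsurj : Function.Surjective (CLO.ofList l).colour)
    (x y : Fin m → (CLO.ofList l).carrier)
    (hx : ∀ i : Fin m, (CLO.ofList l).IsXPoint ((i : ℕ) + 1) (x i))
    (hy : ∀ j : Fin m, (CLO.ofList l).IsYPoint ((j : ℕ) + 1) (y j)) :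
    ({l' : List C | CLO.EFEquiv 2 (CLO.ofList l) (CLO.ofList l')}.Finite ↔
      {l' : List C | CLO.EFEquiv 2 (CLO.ofList l) (CLO.ofList l')} = {l}) ∧
    ({l' : List C | CLO.EFEquiv 2 (CLO.ofList l) (CLO.ofList l')} = {l} ↔
      ∀ s t : Fin m ⊕ Fin m,
        (Sum.elim x y s < Sum.elim x y t ∧
          ∀ u : Fin m ⊕ Fin m,
            ¬(Sum.elim x y s < Sum.elim x y u ∧ Sum.elim x y u < Sum.elim x y t)) →
        {z : (CLO.ofList l).carrier | Sum.elim x y s < z ∧ z < Sum.elim x y t} = ∅) := by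
  classical
  have hnotT : ∀ z : (CLO.ofList l).carrier,
      (CLO.ofList l).colour z ∈ (CLO.ofList l).lset z →
      (CLO.ofList l).colour z ∈ (CLO.ofList l).rset z →
      ∀ u : Fin m ⊕ Fin m, Sum.elim x y u ≠ z := by
    intro z h1 h2 u hu
    rcases u with i | j
    · exact CLO.not_isXPoint z h1 ((i : ℕ) + 1) (hu ▸ hx i)
    · exact CLO.not_isYPoint z h2 ((j : ℕ) + 1) (hu ▸ hy j)
  have hXpt : ∀ z : (CLO.ofList l).carrier,
      (CLO.ofList l).colour z ∉ (CLO.ofList l).lset z →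
      ∃ u : Fin m ⊕ Fin m, Sum.elim x y u = z := by
    intro z h
    have hself := CLO.isXPoint_self z h
    have hb := CLO.ncard_Iic_bounds z
    rw [hC] at hb
    refine ⟨Sum.inl ⟨((CLO.ofList l).colour '' Set.Iic z).ncard - 1, by omega⟩, ?_⟩
    show x _ = z
    refine IsLeast.unique ?_ hself
    have := hx ⟨((CLO.ofList l).colour '' Set.Iic z).ncard - 1, by omega⟩
    simpa only [CLO.IsXPoint, show ((CLO.ofList l).colour '' Set.Iic z).ncard - 1 + 1 =
      ((CLO.ofList l).colour '' Set.Iic z).ncard by omega] using this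
  have hYpt : ∀ z : (CLO.ofList l).carrier,
      (CLO.ofList l).colour z ∉ (CLO.ofList l).rset z →
      ∃ u : Fin m ⊕ Fin m, Sum.elim x y u = z := by
    intro z h
    have hself := CLO.isYPoint_self z h
    have hb := CLO.ncard_Ici_bounds z
    rw [hC] at hb
    refine ⟨Sum.inr ⟨((CLO.ofList l).colour '' Set.Ici z).ncard - 1, by omega⟩, ?_⟩
    show y _ = z
    refine IsGreatest.unique ?_ hself
    have := hy ⟨((CLO.ofList l).colour '' Set.Ici z).ncard - 1, by omega⟩
    simpa only [CLO.IsYPoint, show ((CLO.ofList l).colour '' Set.Ici z).ncard - 1 + 1 =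
      ((CLO.ofList l).colour '' Set.Ici z).ncard by omega] using this
  have hrigid : (∀ s t : Fin m ⊕ Fin m,
        (Sum.elim x y s < Sum.elim x y t ∧
          ∀ u : Fin m ⊕ Fin m,
            ¬(Sum.elim x y s < Sum.elim x y u ∧ Sum.elim x y u < Sum.elim x y t)) →
        {z : (CLO.ofList l).carrier | Sum.elim x y s < z ∧ z < Sum.elim x y t} = ∅) → (CLO.ofList l).Rigid := by
    intro hgap z hz
    obtain ⟨h1, h2⟩ := hz
    have hn : 0 < l.length := z.pos
    have hm : 0 < m := by
      rw [← hC]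
      exact Fintype.card_pos_iff.mpr ⟨(CLO.ofList l).colour z⟩
    have hbot : ((CLO.ofList l).colour '' Set.Iic (⟨0, hn⟩ : Fin l.length)).ncard = 1 := by
      have h0 : Set.Iic (⟨0, hn⟩ : Fin l.length) = {⟨0, hn⟩} := by
        ext w
        simp only [Set.mem_Iic, Set.mem_singleton_iff, Fin.le_def, Fin.ext_iff]
        omega
      erw [h0, Set.image_singleton, Set.ncard_singleton]
    have htop : ((CLO.ofList l).colour ''
        Set.Ici (⟨l.length - 1, by omega⟩ : Fin l.length)).ncard = 1 := by
      have h0 : Set.Ici (⟨l.length - 1, by omega⟩ : Fin l.length) =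
          {⟨l.length - 1, by omega⟩} := by
        ext w
        have := w.isLt
        simp only [Set.mem_Ici, Set.mem_singleton_iff, Fin.le_def, Fin.ext_iff]
        omega
      erw [h0, Set.image_singleton, Set.ncard_singleton]
    have hx0 : x ⟨0, hm⟩ < z := by
      have hle : (⟨0, hn⟩ : Fin l.length) ≤ z := by
        erw [Fin.le_def]
        exact Nat.zero_le _
      exact lt_of_le_of_ne (le_trans ((hx ⟨0, hm⟩).2 hbot) hle)
        (fun e => hnotT z h1 h2 (Sum.inl ⟨0, hm⟩) e)
    have hy0 : z < y ⟨0, hm⟩ := by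
      have hle : z ≤ (⟨l.length - 1, by omega⟩ : Fin l.length) := by
        erw [Fin.le_def]
        exact Nat.le_pred_of_lt z.isLt
      exact lt_of_le_of_ne (le_trans hle ((hy ⟨0, hm⟩).2 htop))
        (fun e => hnotT z h1 h2 (Sum.inr ⟨0, hm⟩) e.symm)
    obtain ⟨sp, ⟨⟨us, hus⟩, hsz⟩, hsmax⟩ :=
      Set.exists_max_image {p : Fin l.length | (∃ u, Sum.elim x y u = p) ∧ p < z} id
        (Set.toFinite _) ⟨x ⟨0, hm⟩, ⟨Sum.inl ⟨0, hm⟩, rfl⟩, hx0⟩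
    obtain ⟨tp, ⟨⟨ut, hut⟩, htz⟩, htmin⟩ :=
      Set.exists_min_image {p : Fin l.length | (∃ u, Sum.elim x y u = p) ∧ z < p} id
        (Set.toFinite _) ⟨y ⟨0, hm⟩, ⟨Sum.inr ⟨0, hm⟩, rfl⟩, hy0⟩
    have hcons : ∀ u : Fin m ⊕ Fin m,
        ¬(Sum.elim x y us < Sum.elim x y u ∧ Sum.elim x y u < Sum.elim x y ut) := by
      rintro u ⟨hu1, hu2⟩
      rw [hus] at hu1
      rw [hut] at hu2
      rcases lt_trichotomy (Sum.elim x y u) z with h | h | h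
      · exact absurd (hsmax _ ⟨⟨u, rfl⟩, h⟩) (not_le.mpr hu1)
      · exact hnotT z h1 h2 u h
      · exact absurd (htmin _ ⟨⟨u, rfl⟩, h⟩) (not_le.mpr hu2)
    have hg := hgap us ut ⟨by rw [hus, hut]; exact lt_trans hsz htz, hcons⟩
    rw [hus, hut] at hg
    exact absurd hg (Set.nonempty_iff_ne_empty.mp ⟨z, hsz, htz⟩)
  have hinf : ¬(∀ s t : Fin m ⊕ Fin m,
        (Sum.elim x y s < Sum.elim x y t ∧
          ∀ u : Fin m ⊕ Fin m,
            ¬(Sum.elim x y s < Sum.elim x y u ∧ Sum.elim x y u < Sum.elim x y t)) →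
        {z : (CLO.ofList l).carrier | Sum.elim x y s < z ∧ z < Sum.elim x y t} = ∅) → Set.Infinite {l' : List C | CLO.EFEquiv 2 (CLO.ofList l) (CLO.ofList l')} := by
    intro hgap
    push_neg at hgap
    obtain ⟨s, t, ⟨hst, hcons⟩, hne⟩ := hgap
    obtain ⟨z, hz1, hz2⟩ := hne
    have h1 : (CLO.ofList l).colour z ∈ (CLO.ofList l).lset z := by
      by_contra h
      obtain ⟨u, hu⟩ := hXpt z h
      exact absurd (hcons u (by rw [hu]; exact hz1)) (not_le.mpr (by rw [hu]; exact hz2))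
    have h2 : (CLO.ofList l).colour z ∈ (CLO.ofList l).rset z := by
      by_contra h
      obtain ⟨u, hu⟩ := hYpt z h
      exact absurd (hcons u (by rw [hu]; exact hz1)) (not_le.mpr (by rw [hu]; exact hz2))
    have hsplit : l = l.take z.val ++ l.get z :: l.drop (z.val + 1) := by
      conv_lhs => rw [← List.take_append_drop z.val l]
      rw [List.drop_eq_getElem_cons z.isLt]
      rfl
    have hcu : l.get z ∈ l.take z.val := by
      have hh := CLO.lset_ofList l z
      rw [hh] at h1
      exact h1
    have hcv : l.get z ∈ l.drop (z.val + 1) := by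
      have hh := CLO.rset_ofList l z
      rw [hh] at h2
      exact h2
    apply Set.infinite_of_injective_forall_mem
      (f := fun k : ℕ =>
        l.take z.val ++ (List.replicate k (l.get z) ++ l.get z :: l.drop (z.val + 1)))
    · intro k1 k2 hk
      have hlen := congrArg List.length hk
      simp only [List.length_append, List.length_replicate, List.length_cons] at hlen
      omega
    · intro k
      show CLO.EFEquiv 2 (CLO.ofList l) (CLO.ofList _)
      rw [CLO.efequiv_two_iff, CLO.range_char_ofList, CLO.range_char_ofList,
        CLO.splitChars_pump _ _ _ hcu hcv k]
      rw [← hsplit]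
  have hsingleton : (∀ s t : Fin m ⊕ Fin m,
        (Sum.elim x y s < Sum.elim x y t ∧
          ∀ u : Fin m ⊕ Fin m,
            ¬(Sum.elim x y s < Sum.elim x y u ∧ Sum.elim x y u < Sum.elim x y t)) →
        {z : (CLO.ofList l).carrier | Sum.elim x y s < z ∧ z < Sum.elim x y t} = ∅) → {l' : List C | CLO.EFEquiv 2 (CLO.ofList l) (CLO.ofList l')} = {l} := by
    intro h
    ext l'
    simp only [Set.mem_setOf_eq, Set.mem_singleton_iff]
    constructor
    · intro hef
      exact CLO.eq_of_charset_eq (hrigid h) ((CLO.efequiv_two_iff _ _).mp hef)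
    · rintro rfl
      exact (CLO.efequiv_two_iff _ _).mpr rfl
  constructor
  · constructor
    · intro hfin
      by_cases h : (∀ s t : Fin m ⊕ Fin m,
        (Sum.elim x y s < Sum.elim x y t ∧
          ∀ u : Fin m ⊕ Fin m,
            ¬(Sum.elim x y s < Sum.elim x y u ∧ Sum.elim x y u < Sum.elim x y t)) →
        {z : (CLO.ofList l).carrier | Sum.elim x y s < z ∧ z < Sum.elim x y t} = ∅)
      · exact hsingleton h
      · exact absurd hfin (hinf h)
    · intro h
      rw [h]
      exact Set.finite_singleton l
  · constructor
    · intro h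
      by_contra hno
      exact (hinf hno) (h ▸ Set.finite_singleton l)
    · exact hsingleton
end

section
/- Every finite coloured string has a 2-equivalent ≡_2-optimal substring; that is, for every finite coloured linear order A there is a subset B ⊆ A (with induced order and colouring) such that A ≡_2 B and B is not 2-equivalent to any strictly shorter coloured linear order. -/
section Aux

open CLO

variable {C : Type}

/-- The 2-character of an element: its colour, the colours below it, the colours above it. -/
def ch (A : CLO C) (a : A.carrier) : C × Set C × Set C :=
  (A.colour a, A.colour '' {x | x < a}, A.colour '' {x | a < x})

/-- The set of realized 2-characters. -/
def chs (A : CLO C) : Set (C × Set C × Set C) := Set.range (ch A)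

lemma range_left (A : CLO C) (a : A.carrier) :
    Set.range (A.left a).colour = A.colour '' {x | x < a} :=
  (Set.image_eq_range _ _).symm

lemma range_right (A : CLO C) (a : A.carrier) :
    Set.range (A.right a).colour = A.colour '' {x | a < x} :=
  (Set.image_eq_range _ _).symm

lemma ef1_iff (X Y : CLO C) :
    EFEquiv 1 X Y ↔ Set.range X.colour = Set.range Y.colour := by
  show ((∀ a : X.carrier, ∃ b : Y.carrier, X.colour a = Y.colour b ∧ _ ∧ _) ∧
      (∀ b : Y.carrier, ∃ a : X.carrier, X.colour a = Y.colour b ∧ _ ∧ _)) ↔ _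
  constructor
  · rintro ⟨h1, h2⟩
    apply Set.Subset.antisymm
    · rintro _ ⟨x, rfl⟩
      obtain ⟨y, hy, -, -⟩ := h1 x
      exact ⟨y, hy.symm⟩
    · rintro _ ⟨y, rfl⟩
      obtain ⟨x, hx, -, -⟩ := h2 y
      exact ⟨x, hx⟩
  · intro h
    constructor
    · intro x
      obtain ⟨y, hy⟩ : X.colour x ∈ Set.range Y.colour := h ▸ Set.mem_range_self x
      exact ⟨y, hy.symm, trivial, trivial⟩
    · intro y
      obtain ⟨x, hx⟩ : Y.colour y ∈ Set.range X.colour := h.symm ▸ Set.mem_range_self y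
      exact ⟨x, hx, trivial, trivial⟩

lemma ch_eq_iff (A B : CLO C) (a : A.carrier) (b : B.carrier) :
    ch A a = ch B b ↔ (A.colour a = B.colour b ∧
      EFEquiv 1 (A.left a) (B.left b) ∧ EFEquiv 1 (A.right a) (B.right b)) := by
  rw [ch, ch, Prod.mk.injEq, Prod.mk.injEq, ef1_iff, ef1_iff,
    range_left, range_left, range_right, range_right]

lemma ef2_def (A B : CLO C) : EFEquiv 2 A B ↔
    ((∀ a : A.carrier, ∃ b : B.carrier, A.colour a = B.colour b ∧
        EFEquiv 1 (A.left a) (B.left b) ∧ EFEquiv 1 (A.right a) (B.right b)) ∧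
     (∀ b : B.carrier, ∃ a : A.carrier, A.colour a = B.colour b ∧
        EFEquiv 1 (A.left a) (B.left b) ∧ EFEquiv 1 (A.right a) (B.right b))) :=
  Iff.rfl

lemma ef2_iff (A B : CLO C) : EFEquiv 2 A B ↔ chs A = chs B := by
  rw [ef2_def]
  constructor
  · rintro ⟨h1, h2⟩
    apply Set.Subset.antisymm
    · rintro _ ⟨a, rfl⟩
      obtain ⟨b, h⟩ := h1 a
      exact ⟨b, ((ch_eq_iff A B a b).2 h).symm⟩
    · rintro _ ⟨b, rfl⟩
      obtain ⟨a, h⟩ := h2 b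
      exact ⟨a, (ch_eq_iff A B a b).2 h⟩
  · intro h
    constructor
    · intro a
      obtain ⟨b, hb⟩ : ch A a ∈ chs B := h ▸ Set.mem_range_self a
      exact ⟨b, (ch_eq_iff A B a b).1 hb.symm⟩
    · intro b
      obtain ⟨a, ha⟩ : ch B b ∈ chs A := h.symm ▸ Set.mem_range_self b
      exact ⟨a, (ch_eq_iff A B a b).1 ha⟩

lemma ch_sub (A : CLO C) (s : Set A.carrier) (x : ↥s) :
    ch (A.sub s) x = (A.colour x.val, A.colour '' (s ∩ {y | y < x.val}),
      A.colour '' (s ∩ {y | x.val < y})) := by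
  have h2 : (A.sub s).colour '' {z | z < x} = A.colour '' (s ∩ {y | y < x.val}) := by
    apply Set.Subset.antisymm
    · rintro _ ⟨⟨y, hy⟩, hlt, rfl⟩
      exact ⟨y, ⟨hy, hlt⟩, rfl⟩
    · rintro _ ⟨y, ⟨hy, hlt⟩, rfl⟩
      exact ⟨⟨y, hy⟩, hlt, rfl⟩
  have h3 : (A.sub s).colour '' {z | x < z} = A.colour '' (s ∩ {y | x.val < y}) := by
    apply Set.Subset.antisymm
    · rintro _ ⟨⟨y, hy⟩, hlt, rfl⟩
      exact ⟨y, ⟨hy, hlt⟩, rfl⟩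
    · rintro _ ⟨y, ⟨hy, hlt⟩, rfl⟩
      exact ⟨⟨y, hy⟩, hlt, rfl⟩
  delta ch
  exact Prod.ext rfl (Prod.ext h2 h3)

lemma chs_sub_univ (A : CLO C) : chs (A.sub Set.univ) = chs A := by
  apply Set.Subset.antisymm
  · rintro _ ⟨x, rfl⟩
    refine ⟨x.val, ?_⟩
    rw [ch_sub A Set.univ x, ch, Set.univ_inter, Set.univ_inter]
  · rintro _ ⟨x, rfl⟩
    refine ⟨⟨x, Set.mem_univ x⟩, ?_⟩
    rw [ch_sub A Set.univ ⟨x, Set.mem_univ x⟩, ch, Set.univ_inter, Set.univ_inter]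

lemma chs_sub_sub (A : CLO C) (t : Set A.carrier) (s' : Set ↥t) :
    chs ((A.sub t).sub s') = chs (A.sub (Subtype.val '' s')) := by
  have key : ∀ z : ↥s', ch ((A.sub t).sub s') z
      = ch (A.sub (Subtype.val '' s')) ⟨z.val.val, ⟨z.val, z.property, rfl⟩⟩ := by
    intro z
    rw [ch_sub (A.sub t) s' z, ch_sub]
    have h2 : (A.sub t).colour '' (s' ∩ {y | y < z.val})
        = A.colour '' (Subtype.val '' s' ∩ {y | y < z.val.val}) := by
      apply Set.Subset.antisymm
      · rintro _ ⟨⟨y, hy⟩, ⟨hmem, hlt⟩, rfl⟩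
        exact ⟨y, ⟨⟨⟨y, hy⟩, hmem, rfl⟩, hlt⟩, rfl⟩
      · rintro _ ⟨y, ⟨⟨⟨y', hy'⟩, hmem, rfl⟩, hlt⟩, rfl⟩
        exact ⟨⟨y', hy'⟩, ⟨hmem, hlt⟩, rfl⟩
    have h3 : (A.sub t).colour '' (s' ∩ {y | z.val < y})
        = A.colour '' (Subtype.val '' s' ∩ {y | z.val.val < y}) := by
      apply Set.Subset.antisymm
      · rintro _ ⟨⟨y, hy⟩, ⟨hmem, hlt⟩, rfl⟩
        exact ⟨y, ⟨⟨⟨y, hy⟩, hmem, rfl⟩, hlt⟩, rfl⟩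
      · rintro _ ⟨y, ⟨⟨⟨y', hy'⟩, hmem, rfl⟩, hlt⟩, rfl⟩
        exact ⟨⟨y', hy'⟩, ⟨hmem, hlt⟩, rfl⟩
    exact Prod.ext rfl (Prod.ext h2 h3)
  apply Set.Subset.antisymm
  · rintro _ ⟨z, rfl⟩
    exact ⟨_, (key z).symm⟩
  · rintro _ ⟨⟨x, hx⟩, rfl⟩
    obtain ⟨y, hy, rfl⟩ := hx
    exact ⟨⟨y, hy⟩, key ⟨y, hy⟩⟩

lemma chs_erase (A : CLO C) {a a' : A.carrier} (hlt : a < a') (hch : ch A a = ch A a') :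
    chs (A.sub {a'}ᶜ) = chs A := by
  rw [ch, ch, Prod.mk.injEq, Prod.mk.injEq] at hch
  obtain ⟨hc, hl, hr⟩ := hch
  have hane : a ≠ a' := ne_of_lt hlt
  have key1 : ∀ x, x ≠ a' → A.colour '' ({a'}ᶜ ∩ {y | y < x}) = A.colour '' {y | y < x} := by
    intro x hx
    apply Set.Subset.antisymm
    · rintro _ ⟨y, ⟨-, hy⟩, rfl⟩
      exact ⟨y, hy, rfl⟩
    · rintro _ ⟨y, hy, rfl⟩
      by_cases hya : y = a'
      · subst hya
        exact ⟨a, ⟨hane, lt_trans hlt hy⟩, hc⟩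
      · exact ⟨y, ⟨hya, hy⟩, rfl⟩
  have key2 : ∀ x, x ≠ a' → A.colour '' ({a'}ᶜ ∩ {y | x < y}) = A.colour '' {y | x < y} := by
    intro x hx
    apply Set.Subset.antisymm
    · rintro _ ⟨y, ⟨-, hy⟩, rfl⟩
      exact ⟨y, hy, rfl⟩
    · rintro _ ⟨y, hy, rfl⟩
      by_cases hya : y = a'
      · subst hya
        have hmem : A.colour y ∈ A.colour '' {x | y < x} := by
          rw [← hr]; exact ⟨y, hlt, rfl⟩
        obtain ⟨z, hz, hz'⟩ := hmem
        exact ⟨z, ⟨ne_of_gt hz, lt_trans hy hz⟩, hz'⟩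
      · exact ⟨y, ⟨hya, hy⟩, rfl⟩
  have hchx : ∀ (x : A.carrier) (hx : x ∈ ({a'}ᶜ : Set A.carrier)),
      ch (A.sub {a'}ᶜ) ⟨x, hx⟩ = ch A x := by
    intro x hx
    rw [ch_sub, ch, key1 x hx, key2 x hx]
  apply Set.Subset.antisymm
  · rintro _ ⟨⟨x, hx⟩, rfl⟩
    exact ⟨x, (hchx x hx).symm⟩
  · rintro _ ⟨x, rfl⟩
    by_cases hx : x = a'
    · subst hx
      refine ⟨⟨a, hane⟩, ?_⟩
      rw [hchx a hane]
      rw [ch, ch, Prod.mk.injEq, Prod.mk.injEq]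
      exact ⟨hc, hl, hr⟩
    · exact ⟨⟨x, hx⟩, hchx x hx⟩

lemma optimal_transfer {A B : CLO C} (h : chs A = chs B)
    (hcard : Nat.card A.carrier = Nat.card B.carrier) (hB : Optimal 2 B) :
    Optimal 2 A := by
  intro D hD hAD
  rw [ef2_iff] at hAD
  have hBD : EFEquiv 2 B D := (ef2_iff B D).2 (h.symm.trans hAD)
  rw [hcard]
  exact hB D hD hBD

lemma exists_same_ch {A B : CLO C} [Finite A.carrier] (hBfin : Finite B.carrier)
    (h : chs A = chs B) (hlt : Nat.card B.carrier < Nat.card A.carrier) :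
    ∃ a a' : A.carrier, a < a' ∧ ch A a = ch A a' := by
  by_contra hcon
  push_neg at hcon
  have hinj : Function.Injective (ch A) := by
    intro x y hxy
    rcases lt_trichotomy x y with hxy' | hxy' | hxy'
    · exact absurd hxy (hcon x y hxy')
    · exact hxy'
    · exact absurd hxy.symm (hcon y x hxy')
  have hmem : ∀ a : A.carrier, ∃ b : B.carrier, ch B b = ch A a := by
    intro a
    have : ch A a ∈ chs B := h ▸ Set.mem_range_self a
    exact this
  choose f hf using hmem
  have hfinj : Function.Injective f := by
    intro x y hxy
    apply hinj
    rw [← hf x, ← hf y, hxy]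
  have := Nat.card_le_card_of_injective f hfinj
  omega

lemma main_aux : ∀ n : ℕ, ∀ A : CLO C, Finite A.carrier → Nat.card A.carrier ≤ n →
    ∃ s : Set A.carrier, chs (A.sub s) = chs A ∧ Optimal 2 (A.sub s) := by
  intro n
  induction n with
  | zero =>
    intro A hfin hcard
    have hopt : Optimal 2 A := by
      intro B _ _
      omega
    refine ⟨Set.univ, chs_sub_univ A, ?_⟩
    exact optimal_transfer (chs_sub_univ A)
      (Nat.card_congr (Equiv.Set.univ A.carrier)) hopt
  | succ n ih =>
    intro A hfin hcard
    haveI := hfin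
    by_cases hopt : Optimal 2 A
    · refine ⟨Set.univ, chs_sub_univ A, ?_⟩
      exact optimal_transfer (chs_sub_univ A)
        (Nat.card_congr (Equiv.Set.univ A.carrier)) hopt
    · unfold Optimal at hopt
      push_neg at hopt
      obtain ⟨B, hBfin, hAB, hBlt⟩ := hopt
      obtain ⟨a, a', hlt', hch⟩ := exists_same_ch hBfin ((ef2_iff A B).1 hAB) hBlt
      have hA' : chs (A.sub {a'}ᶜ) = chs A := chs_erase A hlt' hch
      have hfin' : Finite ↥({a'}ᶜ : Set A.carrier) := Subtype.finite
      have hcard' : Nat.card ↥({a'}ᶜ : Set A.carrier) ≤ n := by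
        have h1 : Nat.card ↥({a'}ᶜ : Set A.carrier) < Nat.card A.carrier := by
          rw [Nat.card_coe_set_eq, ← Set.ncard_univ]
          exact Set.ncard_lt_ncard
            (Set.ssubset_univ_iff.2 (by simp)) (Set.finite_univ)
        omega
      obtain ⟨s', hs', hopt'⟩ := ih (A.sub {a'}ᶜ) hfin' hcard'
      refine ⟨Subtype.val '' s', ?_, ?_⟩
      · rw [← chs_sub_sub A {a'}ᶜ s', hs', hA']
      · exact optimal_transfer (chs_sub_sub A {a'}ᶜ s').symm
          (Nat.card_congr (Equiv.Set.image _ _ Subtype.val_injective).symm) hopt'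

end Aux

/-- every finite coloured string has a `2`-equivalent `≡₂`-optimal substring. -/
theorem stmt9 {C : Type} [Finite C] (A : CLO C) [Finite A.carrier] :
    ∃ s : Set A.carrier, CLO.EFEquiv 2 A (A.sub s) ∧ CLO.Optimal 2 (A.sub s) := by
  obtain ⟨s, hs, hopt⟩ := main_aux (Nat.card A.carrier) A ‹_› le_rfl
  exact ⟨s, (ef2_iff A (A.sub s)).2 hs.symm, hopt⟩
end
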